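/- arXiv:2602.17920 — 7 statements merged into one kernel-verified Lean document; each statement's English description precedes it below -/
import Mathlib

section
/- Let σ be a signature on G and let ψ be a non-degenerate eigenvector of the signed Laplacian L^σ whose eigenvalue is the n-th smallest eigenvalue of L^σ (counted with multiplicity). Then the number of nodal domains of ψ satisfies ν(ψ) ≤ n. -/
open Matrix Finset

noncomputable section

variable {V : Type*}

/-- The signed Laplacian of the weighted graph `(G,w)` with signature `σ`. -/
def signedLaplacian [Fintype V] [DecidableEq V] (G : SimpleGraph V) [DecidableRel G.Adj]
    (w σ : V → V → ℝ) : Matrix V V ℝ :=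
  Matrix.of fun i j =>
    if i = j then ∑ k, if G.Adj i k then w i k else 0
    else if G.Adj i j then -(σ i j * w i j) else 0

/-- The `n`-th smallest eigenvalue (1-based, counted with multiplicity) of a real
symmetric matrix; junk value `0` if the matrix is not Hermitian or `n` is out of range. -/
def nthEigenvalue [Fintype V] [DecidableEq V] (A : Matrix V V ℝ) (n : ℕ) : ℝ :=
  if h : A.IsHermitian ∧ n - 1 < Fintype.card V then
    let f : Fin (Fintype.card V) → ℝ := fun i => h.1.eigenvalues ((Fintype.equivFin V).symm i)
    f (Tuple.sort f ⟨n - 1, h.2⟩)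
  else 0

/-- `μ` is a simple eigenvalue of `A`: its eigenspace is one-dimensional. -/
def IsSimpleEigenvalue [Fintype V] [DecidableEq V] (A : Matrix V V ℝ) (μ : ℝ) : Prop :=
  Module.finrank ℝ (Module.End.eigenspace (Matrix.toLin' A) μ) = 1

/-- The nodal set of `u` with respect to the signature `σ`, as a set of (unordered) edges. -/
def nodalEdges (G : SimpleGraph V) (σ : V → V → ℝ) (u : V → ℝ) : Set (Sym2 V) :=
  {e | ∃ i j, e = s(i, j) ∧ G.Adj i j ∧ u i * σ i j * u j < 0}

/-- The number of nodal domains of `u` on `(G,σ)`: the number of connected components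
of the spanning subgraph obtained by deleting the nodal set. -/
def nodalCount (G : SimpleGraph V) (σ : V → V → ℝ) (u : V → ℝ) : ℕ :=
  Nat.card (G.deleteEdges (nodalEdges G σ u)).ConnectedComponent

/-- `(G,σ)` is balanced: every cycle has positive sign. -/
def IsBalanced (G : SimpleGraph V) (σ : V → V → ℝ) : Prop :=
  ∀ ⦃v : V⦄ (p : G.Walk v v), p.IsCycle →
    0 < (p.darts.map fun d => σ d.toProd.1 d.toProd.2).prod

/-- The matrix `B_{ij}(a)`. -/
def Bmat [DecidableEq V] (i j : V) (a : ℝ) : Matrix V V ℝ :=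
  Matrix.of fun x y =>
    if x = i ∧ y = i then a
    else if x = j ∧ y = j then a⁻¹
    else if (x = i ∧ y = j) ∨ (x = j ∧ y = i) then -1
    else 0

/-- The signature `σ^{∂P}` determined by the partition `P`. -/
def partSgn {ν : ℕ} (P : V → Fin ν) (i j : V) : ℝ :=
  if P i = P j then 1 else -1

/-- `L^{∂P}(P,α)`: the partition Laplacian perturbed by the rank-one parameter matrices
on the oriented boundary edges `O`. -/
def paramMatrix [Fintype V] [DecidableEq V] (G : SimpleGraph V) [DecidableRel G.Adj]
    (w : V → V → ℝ) {ν : ℕ} (P : V → Fin ν) (O : Finset (V × V)) (α : V × V → ℝ) :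
    Matrix V V ℝ :=
  signedLaplacian G w (partSgn P) + ∑ p ∈ O, w p.1 p.2 • Bmat p.1 p.2 (α p)

/-- The principal submatrix of `M` on the `k`-th part of the partition `P`. -/
def blockMatrix {ν : ℕ} (M : Matrix V V ℝ) (P : V → Fin ν) (k : Fin ν) :
    Matrix {v : V // P v = k} {v : V // P v = k} ℝ :=
  M.submatrix Subtype.val Subtype.val

/-- `λ₁(G_k, α)`: the smallest eigenvalue of the block of `L^{∂P}(P,α)` on part `k`. -/
def lam1Block [Fintype V] [DecidableEq V] {ν : ℕ} (M : Matrix V V ℝ) (P : V → Fin ν)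
    (k : Fin ν) : ℝ :=
  nthEigenvalue (blockMatrix M P k) 1

/-- The partition energy `Λ(P, α) = max_k λ₁(G_k, α)`. -/
def PartitionEnergy [Fintype V] [DecidableEq V] (G : SimpleGraph V) [DecidableRel G.Adj]
    (w : V → V → ℝ) {ν : ℕ} (P : V → Fin ν) (O : Finset (V × V)) (α : V × V → ℝ) : ℝ :=
  ⨆ k : Fin ν, lam1Block (paramMatrix G w P O α) P k

/-- `(P, α)` is an equipartition: all the first block eigenvalues agree. -/
def IsEquipartition [Fintype V] [DecidableEq V] (G : SimpleGraph V) [DecidableRel G.Adj]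
    (w : V → V → ℝ) {ν : ℕ} (P : V → Fin ν) (O : Finset (V × V)) (α : V × V → ℝ) : Prop :=
  ∀ k l : Fin ν, lam1Block (paramMatrix G w P O α) P k = lam1Block (paramMatrix G w P O α) P l



/-! ### Auxiliary lemmas -/

section AuxLemmas

set_option linter.unusedSectionVars false

variable [Fintype V] [DecidableEq V]

private lemma UtU' (A : Matrix V V ℝ) (hA : A.IsHermitian) :
    (hA.eigenvectorUnitary : Matrix V V ℝ)ᵀ * (hA.eigenvectorUnitary : Matrix V V ℝ) = 1 := by
  rw [show (hA.eigenvectorUnitary : Matrix V V ℝ)ᵀ = star (hA.eigenvectorUnitary : Matrix V V ℝ) by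
    ext i j; simp [Matrix.star_eq_conjTranspose, Matrix.conjTranspose_apply]]
  exact hA.eigenvectorUnitary.2.1

private lemma UUt' (A : Matrix V V ℝ) (hA : A.IsHermitian) :
    (hA.eigenvectorUnitary : Matrix V V ℝ) * (hA.eigenvectorUnitary : Matrix V V ℝ)ᵀ = 1 := by
  rw [show (hA.eigenvectorUnitary : Matrix V V ℝ)ᵀ = star (hA.eigenvectorUnitary : Matrix V V ℝ) by
    ext i j; simp [Matrix.star_eq_conjTranspose, Matrix.conjTranspose_apply]]
  exact hA.eigenvectorUnitary.2.2

private lemma specA' (A : Matrix V V ℝ) (hA : A.IsHermitian) :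
    A = (hA.eigenvectorUnitary : Matrix V V ℝ) * diagonal hA.eigenvalues *
      (hA.eigenvectorUnitary : Matrix V V ℝ)ᵀ := by
  have h4 : (RCLike.ofReal ∘ hA.eigenvalues : V → ℝ) = hA.eigenvalues := by funext i; simp
  have := hA.spectral_theorem
  rw [Unitary.conjStarAlgAut_apply] at this
  rwa [show star (hA.eigenvectorUnitary : Matrix V V ℝ) = (hA.eigenvectorUnitary : Matrix V V ℝ)ᵀ by
    ext i j; simp [Matrix.star_eq_conjTranspose, Matrix.conjTranspose_apply], h4] at this

private lemma dot_self_eq (A : Matrix V V ℝ) (hA : A.IsHermitian) (x : V → ℝ) :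
    x ⬝ᵥ x = ∑ i, ((hA.eigenvectorUnitary : Matrix V V ℝ)ᵀ *ᵥ x) i ^ 2 := by
  set U := (hA.eigenvectorUnitary : Matrix V V ℝ)
  have : x ⬝ᵥ x = x ⬝ᵥ ((U * Uᵀ) *ᵥ x) := by rw [UUt' A hA, Matrix.one_mulVec]
  rw [this, ← Matrix.mulVec_mulVec, Matrix.dotProduct_mulVec, ← Matrix.mulVec_transpose]
  simp [dotProduct, sq]

private lemma quad_eq (A : Matrix V V ℝ) (hA : A.IsHermitian) (x : V → ℝ) :
    x ⬝ᵥ (A *ᵥ x) = ∑ i, hA.eigenvalues i *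
      ((hA.eigenvectorUnitary : Matrix V V ℝ)ᵀ *ᵥ x) i ^ 2 := by
  set U := (hA.eigenvectorUnitary : Matrix V V ℝ)
  set r := Uᵀ *ᵥ x with hr
  have : A *ᵥ x = U *ᵥ (diagonal hA.eigenvalues *ᵥ r) := by
    rw [hr, Matrix.mulVec_mulVec, Matrix.mulVec_mulVec, ← specA' A hA]
  rw [this, Matrix.dotProduct_mulVec, ← Matrix.mulVec_transpose, ← hr]
  simp [dotProduct, Matrix.mulVec_diagonal, sq]
  exact Finset.sum_congr rfl fun i _ => by ring

private lemma UtAU_gen (U D A : Matrix V V ℝ) (h1 : Uᵀ * U = 1) (hspec : A = U * D * Uᵀ)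
    (x : V → ℝ) : Uᵀ *ᵥ (A *ᵥ x) = D *ᵥ (Uᵀ *ᵥ x) := by
  rw [hspec]
  simp only [Matrix.mulVec_mulVec]
  rw [show Uᵀ * (U * D * Uᵀ) = (Uᵀ * U) * D * Uᵀ by noncomm_ring, h1, Matrix.one_mul]

private lemma UtAU (A : Matrix V V ℝ) (hA : A.IsHermitian) (x : V → ℝ) :
    (hA.eigenvectorUnitary : Matrix V V ℝ)ᵀ *ᵥ (A *ᵥ x) =
      diagonal hA.eigenvalues *ᵥ ((hA.eigenvectorUnitary : Matrix V V ℝ)ᵀ *ᵥ x) :=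
  UtAU_gen _ _ _ (UtU' A hA) (specA' A hA) x

private lemma col_eig (A : Matrix V V ℝ) (hA : A.IsHermitian) (i : V) :
    A *ᵥ (fun v => (hA.eigenvectorUnitary : Matrix V V ℝ) v i) =
      hA.eigenvalues i • (fun v => (hA.eigenvectorUnitary : Matrix V V ℝ) v i) := by
  have : (fun v => (hA.eigenvectorUnitary : Matrix V V ℝ) v i) = ⇑(hA.eigenvectorBasis i) := by
    funext v; exact hA.eigenvectorUnitary_apply v i
  rw [this]; exact hA.mulVec_eigenvectorBasis i

private lemma col_dot (A : Matrix V V ℝ) (hA : A.IsHermitian) (i j : V) :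
    (fun v => (hA.eigenvectorUnitary : Matrix V V ℝ) v i) ⬝ᵥ
      (fun v => (hA.eigenvectorUnitary : Matrix V V ℝ) v j) = if i = j then 1 else 0 := by
  have := congrFun (congrFun (UtU' A hA) i) j
  simpa [Matrix.mul_apply, Matrix.one_apply, dotProduct, Matrix.transpose_apply] using this

private lemma eig_unique (A : Matrix V V ℝ) (hA : A.IsHermitian) (lam : ℝ)
    (hsimple : Module.finrank ℝ (Module.End.eigenspace (Matrix.toLin' A) lam) = 1)
    (i j : V) (hi : hA.eigenvalues i = lam) (hj : hA.eigenvalues j = lam) : i = j := by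
  by_contra hne
  set U := (hA.eigenvectorUnitary : Matrix V V ℝ)
  set x : V → ℝ := fun v => U v i with hxdef
  set y : V → ℝ := fun v => U v j with hydef
  have hxE : x ∈ Module.End.eigenspace (Matrix.toLin' A) lam := by
    rw [Module.End.mem_eigenspace_iff, Matrix.toLin'_apply]
    rw [show (lam • x) = hA.eigenvalues i • x by rw [hi]]
    exact col_eig A hA i
  have hyE : y ∈ Module.End.eigenspace (Matrix.toLin' A) lam := by
    rw [Module.End.mem_eigenspace_iff, Matrix.toLin'_apply]
    rw [show (lam • y) = hA.eigenvalues j • y by rw [hj]]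
    exact col_eig A hA j
  obtain ⟨v, -, hv⟩ := (finrank_eq_one_iff').mp hsimple
  obtain ⟨s, hs⟩ := hv ⟨x, hxE⟩
  obtain ⟨t, ht⟩ := hv ⟨y, hyE⟩
  have hsx : x = s • (v : V → ℝ) := (congrArg Subtype.val hs).symm
  have hty : y = t • (v : V → ℝ) := (congrArg Subtype.val ht).symm
  have hxx : x ⬝ᵥ x = 1 := by have := col_dot A hA i i; rw [if_pos rfl] at this; exact this
  have hyy : y ⬝ᵥ y = 1 := by have := col_dot A hA j j; rw [if_pos rfl] at this; exact this
  have hxy : x ⬝ᵥ y = 0 := by have := col_dot A hA i j; rw [if_neg hne] at this; exact this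
  rw [hsx] at hxx hxy
  rw [hty] at hyy hxy
  simp only [smul_dotProduct, dotProduct_smul, smul_eq_mul] at hxx hyy hxy
  nlinarith [hxx, hyy, hxy]

private lemma eig_exists (A : Matrix V V ℝ) (hA : A.IsHermitian) (ψ : V → ℝ) (lam : ℝ)
    (heig : A *ᵥ ψ = lam • ψ) (hne : ψ ≠ 0) : ∃ i, hA.eigenvalues i = lam := by
  by_contra hc
  push_neg at hc
  set U := (hA.eigenvectorUnitary : Matrix V V ℝ)
  set r := Uᵀ *ᵥ ψ with hrdef
  have h1 : diagonal hA.eigenvalues *ᵥ r = lam • r := by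
    rw [← UtAU A hA ψ, heig, Matrix.mulVec_smul]
  have hr0 : r = 0 := by
    funext i
    have := congrFun h1 i
    rw [Matrix.mulVec_diagonal] at this
    simp only [Pi.smul_apply, smul_eq_mul] at this
    have h2 : (hA.eigenvalues i - lam) * r i = 0 := by linarith
    rcases mul_eq_zero.mp h2 with h | h
    · exact absurd (by linarith : hA.eigenvalues i = lam) (hc i)
    · simpa using h
  have h3 : ψ ⬝ᵥ ψ = 0 := by rw [dot_self_eq A hA ψ, ← hrdef, hr0]; simp
  apply hne
  funext v
  have h4 : ∀ w ∈ Finset.univ, (0:ℝ) ≤ ψ w * ψ w := fun w _ => mul_self_nonneg _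
  have := (Finset.sum_eq_zero_iff_of_nonneg h4).mp h3 v (Finset.mem_univ v)
  exact mul_self_eq_zero.mp this

private lemma lapl_symm (G : SimpleGraph V) [DecidableRel G.Adj] (w σ : V → V → ℝ)
    (hwsymm : ∀ i j, w i j = w j i) (hσsymm : ∀ i j, σ i j = σ j i) (i j : V) :
    signedLaplacian G w σ j i = signedLaplacian G w σ i j := by
  simp only [signedLaplacian, Matrix.of_apply]
  by_cases h : i = j
  · subst h; simp
  · rw [if_neg (Ne.symm h), if_neg h]
    by_cases ha : G.Adj i j
    · rw [if_pos ha, if_pos ha.symm, hwsymm j i, hσsymm j i]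
    · rw [if_neg ha, if_neg (fun hc => ha hc.symm)]

private lemma lapl_herm (G : SimpleGraph V) [DecidableRel G.Adj] (w σ : V → V → ℝ)
    (hwsymm : ∀ i j, w i j = w j i) (hσsymm : ∀ i j, σ i j = σ j i) :
    (signedLaplacian G w σ).IsHermitian := by
  unfold Matrix.IsHermitian
  ext i j
  rw [Matrix.conjTranspose_apply]
  simpa using lapl_symm G w σ hwsymm hσsymm i j

private lemma nodal_sign (G : SimpleGraph V) (σ : V → V → ℝ) (hσsymm : ∀ i j, σ i j = σ j i)
    (ψ : V → ℝ) (i j : V) (h : s(i,j) ∈ nodalEdges G σ ψ) : ψ i * σ i j * ψ j < 0 := by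
  obtain ⟨a, b, heq, -, hlt⟩ := h
  rw [Sym2.eq_iff] at heq
  rcases heq with ⟨ha, hb⟩ | ⟨ha, hb⟩
  · rwa [← ha, ← hb] at hlt
  · rw [← hb, ← ha] at hlt
    have : ψ j * σ j i * ψ i = ψ i * σ i j * ψ j := by rw [hσsymm j i]; ring
    linarith [this ▸ hlt]

private lemma hedge_lemma (G : SimpleGraph V) [DecidableRel G.Adj] (σ : V → V → ℝ)
    (hσsymm : ∀ i j, σ i j = σ j i) (ψ : V → ℝ) (i j : V) (hadj : G.Adj i j)
    (hne : (G.deleteEdges (nodalEdges G σ ψ)).connectedComponentMk i ≠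
           (G.deleteEdges (nodalEdges G σ ψ)).connectedComponentMk j) :
    ψ i * σ i j * ψ j < 0 := by
  by_cases hmem : s(i,j) ∈ nodalEdges G σ ψ
  · exact nodal_sign G σ hσsymm ψ i j hmem
  · exfalso
    apply hne
    apply SimpleGraph.ConnectedComponent.sound
    exact SimpleGraph.Adj.reachable ((SimpleGraph.deleteEdges_adj).mpr ⟨hadj, hmem⟩)

private lemma double_sum_le {α : Type*} [Fintype α] (t : α → α → ℝ)
    (h : ∀ i j, t i j + t j i ≤ 0) : ∑ i, ∑ j, t i j ≤ 0 := by
  have h1 : ∑ i, ∑ j, t i j + ∑ i, ∑ j, t i j = ∑ i, ∑ j, (t i j + t j i) := by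
    nth_rewrite 2 [Finset.sum_comm]
    rw [← Finset.sum_add_distrib]
    exact Finset.sum_congr rfl fun i _ => (Finset.sum_add_distrib).symm
  have h2 : ∑ i, ∑ j, (t i j + t j i) ≤ 0 :=
    Finset.sum_nonpos fun i _ => Finset.sum_nonpos fun j _ => h i j
  linarith

private lemma qbound (G : SimpleGraph V) [DecidableRel G.Adj] (w σ : V → V → ℝ)
    (hwsymm : ∀ i j, w i j = w j i) (hwpos : ∀ i j, G.Adj i j → 0 < w i j)
    (hσsymm : ∀ i j, σ i j = σ j i)
    (ψ : V → ℝ) (lam : ℝ) (heig : (signedLaplacian G w σ).mulVec ψ = lam • ψ)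
    (c : (G.deleteEdges (nodalEdges G σ ψ)).ConnectedComponent → ℝ) :
    (∑ i, ∑ j, (c ((G.deleteEdges (nodalEdges G σ ψ)).connectedComponentMk i) * ψ i) *
        (signedLaplacian G w σ i j *
          (c ((G.deleteEdges (nodalEdges G σ ψ)).connectedComponentMk j) * ψ j)))
      ≤ lam * ∑ i, (c ((G.deleteEdges (nodalEdges G σ ψ)).connectedComponentMk i) * ψ i) *
        (c ((G.deleteEdges (nodalEdges G σ ψ)).connectedComponentMk i) * ψ i) := by
  set A := signedLaplacian G w σ with hAdef
  set κ := (G.deleteEdges (nodalEdges G σ ψ)).connectedComponentMk with hκdef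
  have hAsymm : ∀ i j, A j i = A i j := lapl_symm G w σ hwsymm hσsymm
  have hterm : ∀ i j, 0 ≤ A i j * (ψ i * ψ j) * (c (κ i) - c (κ j))^2 := by
    intro i j
    by_cases hij : κ i = κ j
    · rw [hij]; simp
    · have hij' : i ≠ j := fun h => hij (by rw [h])
      by_cases hadj : G.Adj i j
      · have h1 : A i j = -(σ i j * w i j) := by
          simp [hAdef, signedLaplacian, hij', hadj]
        have h2 := hedge_lemma G σ hσsymm ψ i j hadj hij
        have h3 := hwpos i j hadj
        have h4 : 0 ≤ A i j * (ψ i * ψ j) := by rw [h1]; nlinarith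
        exact mul_nonneg h4 (sq_nonneg _)
      · have h1 : A i j = 0 := by simp [hAdef, signedLaplacian, hij', hadj]
        rw [h1]; simp
  have hrow : ∀ i, ∑ j, A i j * ψ j = lam * ψ i := by
    intro i
    have := congrFun heig i
    simpa [Matrix.mulVec, dotProduct] using this
  have hRHS : lam * ∑ i, (c (κ i) * ψ i) * (c (κ i) * ψ i)
      = ∑ i, ∑ j, (c (κ i) * ψ i) * (A i j * (c (κ i) * ψ j)) := by
    rw [Finset.mul_sum]
    refine Finset.sum_congr rfl fun i _ => ?_
    calc lam * ((c (κ i) * ψ i) * (c (κ i) * ψ i))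
        = (c (κ i) * ψ i) * (c (κ i) * (lam * ψ i)) := by ring
      _ = (c (κ i) * ψ i) * (c (κ i) * (∑ j, A i j * ψ j)) := by rw [hrow i]
      _ = ∑ j, (c (κ i) * ψ i) * (A i j * (c (κ i) * ψ j)) := by
          rw [Finset.mul_sum, Finset.mul_sum]
          exact Finset.sum_congr rfl fun j _ => by ring
  rw [hRHS, ← sub_nonpos]
  have hdiff : (∑ i, ∑ j, (c (κ i) * ψ i) * (A i j * (c (κ j) * ψ j)))
      - (∑ i, ∑ j, (c (κ i) * ψ i) * (A i j * (c (κ i) * ψ j)))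
      = ∑ i, ∑ j, (A i j * (ψ i * ψ j) * (c (κ i) * c (κ j) - c (κ i) * c (κ i))) := by
    rw [← Finset.sum_sub_distrib]
    refine Finset.sum_congr rfl fun i _ => ?_
    rw [← Finset.sum_sub_distrib]
    exact Finset.sum_congr rfl fun j _ => by ring
  rw [hdiff]
  apply double_sum_le
  intro i j
  have h5 : A i j * (ψ i * ψ j) * (c (κ i) * c (κ j) - c (κ i) * c (κ i))
      + A j i * (ψ j * ψ i) * (c (κ j) * c (κ i) - c (κ j) * c (κ j))
      = -(A i j * (ψ i * ψ j) * (c (κ i) - c (κ j))^2) := by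
    rw [hAsymm i j]; ring
  rw [h5]
  linarith [hterm i j]

private lemma card_filter_eq (A : Matrix V V ℝ) (hA : A.IsHermitian) (lam : ℝ) (n : ℕ)
    (hn1 : 1 ≤ n) (hn2 : n ≤ Fintype.card V)
    (hlam : lam = nthEigenvalue A n)
    (huniq : ∀ i j : V, hA.eigenvalues i = lam → hA.eigenvalues j = lam → i = j) :
    (Finset.univ.filter fun i => hA.eigenvalues i ≤ lam).card = n := by
  classical
  set m := Fintype.card V with hm
  have h2 : n - 1 < m := lt_of_lt_of_le (Nat.sub_lt hn1 one_pos) hn2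
  set e := Fintype.equivFin V with he
  set f : Fin m → ℝ := fun i => hA.eigenvalues (e.symm i) with hf
  set π := Tuple.sort f with hπ
  have hmono : Monotone (f ∘ π) := Tuple.monotone_sort f
  set q : Fin m := ⟨n - 1, h2⟩ with hqdef
  have hq : f (π q) = lam := by
    rw [hlam, nthEigenvalue, dif_pos ⟨hA, h2⟩]
  have hset : (Finset.univ.filter fun j : Fin m => f (π j) ≤ lam)
      = Finset.univ.filter fun j : Fin m => (j : ℕ) < n := by
    ext j
    simp only [Finset.mem_filter, Finset.mem_univ, true_and]
    constructor
    · intro hj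
      by_contra hjn
      push_neg at hjn
      have hqj : q ≤ j := by
        rw [Fin.le_def]
        simp only [hqdef]
        omega
      have : lam ≤ f (π j) := hq ▸ hmono hqj
      have heq : f (π j) = lam := le_antisymm hj this
      have : e.symm (π j) = e.symm (π q) := huniq _ _ heq hq
      have hjq : j = q := π.injective (e.symm.injective this)
      have hv : (j : ℕ) = n - 1 := by rw [hjq]
      omega
    · intro hj
      have hjq : j ≤ q := by
        rw [Fin.le_def]
        simp only [hqdef]
        omega
      calc f (π j) ≤ f (π q) := hmono hjq
        _ = lam := hq
  have hcard2 : (Finset.univ.filter fun j : Fin m => (j : ℕ) < n).card = n := by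
    have : (Finset.univ.filter fun j : Fin m => (j : ℕ) < n).card = (Finset.range n).card := by
      apply Finset.card_bij (fun (j : Fin m) _ => (j : ℕ))
      · intro a ha
        simp only [Finset.mem_filter, Finset.mem_univ, true_and] at ha
        exact Finset.mem_range.mpr ha
      · intro a ha b hb hab
        exact Fin.ext hab
      · intro b hb
        exact ⟨⟨b, lt_of_lt_of_le (Finset.mem_range.mp hb) hn2⟩, by
          simp [Finset.mem_range.mp hb], rfl⟩
    rw [this, Finset.card_range]
  rw [← hcard2, ← hset]
  apply Finset.card_bij (fun (i : V) _ => π.symm (e i))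
  · intro a ha
    simp only [Finset.mem_filter, Finset.mem_univ, true_and] at ha ⊢
    simpa [hf] using ha
  · intro a ha b hb hab
    exact e.injective (π.symm.injective hab)
  · intro j hj
    simp only [Finset.mem_filter, Finset.mem_univ, true_and] at hj
    refine ⟨e.symm (π j), ?_, by simp⟩
    simpa [hf] using hj

end AuxLemmas

/-- discrete nodal domain theorem for signed Laplacians. If `ψ` is a
non-degenerate eigenvector of `L^σ` whose eigenvalue is the `n`-th smallest eigenvalue of
`L^σ` (with multiplicity), then the number of nodal domains of `ψ` is at most `n`. -/
theorem stmt4 [Fintype V] [DecidableEq V] (G : SimpleGraph V) [DecidableRel G.Adj]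
    (hGconn : G.Connected) (w : V → V → ℝ)
    (hwsymm : ∀ i j, w i j = w j i) (hwpos : ∀ i j, G.Adj i j → 0 < w i j)
    (hw0 : ∀ i j, ¬ G.Adj i j → w i j = 0)
    (σ : V → V → ℝ) (hσsymm : ∀ i j, σ i j = σ j i)
    (hσval : ∀ i j, G.Adj i j → σ i j = 1 ∨ σ i j = -1)
    (ψ : V → ℝ) (lam : ℝ) (n : ℕ) (hn1 : 1 ≤ n) (hn2 : n ≤ Fintype.card V)
    (heig : (signedLaplacian G w σ).mulVec ψ = lam • ψ)
    (hψnz : ∀ v, ψ v ≠ 0)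
    (hsimple : IsSimpleEigenvalue (signedLaplacian G w σ) lam)
    (hlam : lam = nthEigenvalue (signedLaplacian G w σ) n) :
    nodalCount G σ ψ ≤ n := by
  classical
  have hA : (signedLaplacian G w σ).IsHermitian := lapl_herm G w σ hwsymm hσsymm
  have hVpos : 0 < Fintype.card V := lt_of_lt_of_le hn1 hn2
  haveI hVne : Nonempty V := Fintype.card_pos_iff.mp hVpos
  have hψne : ψ ≠ 0 := by
    intro h
    exact hψnz (Classical.arbitrary V) (by rw [h]; rfl)
  have huniq : ∀ i j : V, hA.eigenvalues i = lam → hA.eigenvalues j = lam → i = j :=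
    eig_unique _ hA lam hsimple
  have hScard := card_filter_eq _ hA lam n hn1 hn2 hlam huniq
  set S := Finset.univ.filter (fun i => hA.eigenvalues i ≤ lam) with hS
  haveI : Fintype (G.deleteEdges (nodalEdges G σ ψ)).ConnectedComponent := Fintype.ofFinite _
  set κ := (G.deleteEdges (nodalEdges G σ ψ)).connectedComponentMk with hκ
  set U := (hA.eigenvectorUnitary : Matrix V V ℝ) with hU
  set Φ : ((G.deleteEdges (nodalEdges G σ ψ)).ConnectedComponent → ℝ) →ₗ[ℝ] ({i // i ∈ S} → ℝ) :=
    { toFun := fun c i => ∑ v, U v i.1 * (c (κ v) * ψ v)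
      map_add' := by
        intro c d
        funext i
        simp only [Pi.add_apply]
        rw [← Finset.sum_add_distrib]
        exact Finset.sum_congr rfl fun v _ => by ring
      map_smul' := by
        intro a c
        funext i
        simp only [RingHom.id_apply, Pi.smul_apply, smul_eq_mul, Finset.mul_sum]
        exact Finset.sum_congr rfl fun v _ => by ring } with hΦ
  have hinj : Function.Injective Φ := by
    rw [injective_iff_map_eq_zero]
    intro c hc
    set x : V → ℝ := fun v => c (κ v) * ψ v with hx
    set r : V → ℝ := Uᵀ *ᵥ x with hr
    have hrS : ∀ i, i ∈ S → r i = 0 := by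
      intro i hi
      have h0 := congrFun hc ⟨i, hi⟩
      simp only [hΦ, LinearMap.coe_mk, AddHom.coe_mk, Pi.zero_apply] at h0
      rw [hr]
      simp only [Matrix.mulVec, dotProduct, Matrix.transpose_apply, hx]
      exact h0
    have hql : x ⬝ᵥ (signedLaplacian G w σ *ᵥ x) ≤ lam * (x ⬝ᵥ x) := by
      have h1 : x ⬝ᵥ (signedLaplacian G w σ *ᵥ x)
          = ∑ i, ∑ j, x i * (signedLaplacian G w σ i j * x j) := by
        simp only [dotProduct, Matrix.mulVec, Finset.mul_sum]
      have h2 : x ⬝ᵥ x = ∑ i, x i * x i := rfl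
      rw [h1, h2]
      simp only [hx]
      exact qbound G w σ hwsymm hwpos hσsymm ψ lam heig c
    rw [quad_eq _ hA x, dot_self_eq _ hA x] at hql
    rw [← hU, ← hr] at hql
    have hsum : ∑ i, (hA.eigenvalues i - lam) * (r i)^2 ≤ 0 := by
      have h3 : ∑ i, (hA.eigenvalues i - lam) * (r i)^2
          = (∑ i, hA.eigenvalues i * (r i)^2) - lam * ∑ i, (r i)^2 := by
        rw [Finset.mul_sum, ← Finset.sum_sub_distrib]
        exact Finset.sum_congr rfl fun i _ => by ring
      rw [h3]
      linarith
    have hterm : ∀ i ∈ Finset.univ, (0:ℝ) ≤ (hA.eigenvalues i - lam) * (r i)^2 := by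
      intro i _
      by_cases hi : i ∈ S
      · rw [hrS i hi]; simp
      · have hlt : lam < hA.eigenvalues i := by
          simp only [hS, Finset.mem_filter, Finset.mem_univ, true_and, not_le] at hi
          exact hi
        nlinarith [sq_nonneg (r i)]
    have hzero := (Finset.sum_eq_zero_iff_of_nonneg hterm).mp
      (le_antisymm hsum (Finset.sum_nonneg hterm))
    have hr0 : r = 0 := by
      funext i
      by_cases hi : i ∈ S
      · exact hrS i hi
      · have hlt : lam < hA.eigenvalues i := by
          simp only [hS, Finset.mem_filter, Finset.mem_univ, true_and, not_le] at hi
          exact hi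
        have h4 := hzero i (Finset.mem_univ i)
        have h6 : (r i)^2 = 0 := by
          rcases mul_eq_zero.mp h4 with h | h
          · linarith
          · exact h
        exact pow_eq_zero_iff (two_ne_zero) |>.mp h6
    have hx0 : x = 0 := by
      have h3 : x ⬝ᵥ x = 0 := by
        rw [dot_self_eq _ hA x, ← hU, ← hr, hr0]
        simp
      funext v
      have h4 : ∀ u ∈ Finset.univ, (0:ℝ) ≤ x u * x u := fun u _ => mul_self_nonneg _
      exact mul_self_eq_zero.mp ((Finset.sum_eq_zero_iff_of_nonneg h4).mp h3 v (Finset.mem_univ v))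
    funext k
    obtain ⟨v, rfl⟩ := k.exists_rep
    have h5 := congrFun hx0 v
    simp only [hx, Pi.zero_apply] at h5
    rcases mul_eq_zero.mp h5 with h | h
    · exact h
    · exact absurd h (hψnz v)
  have hle := LinearMap.finrank_le_finrank_of_injective hinj
  rw [Module.finrank_fintype_fun_eq_card, Module.finrank_fintype_fun_eq_card] at hle
  have hfin : Fintype.card {i // i ∈ S} = n := by
    rw [← hScard]
    exact Fintype.card_of_subtype S (fun _ => Iff.rfl)
  calc nodalCount G σ ψ
      = Fintype.card (G.deleteEdges (nodalEdges G σ ψ)).ConnectedComponent :=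
        Nat.card_eq_fintype_card
    _ ≤ Fintype.card {i // i ∈ S} := hle
    _ = n := hfin


end
end

section
/- Let P be a partition of G with boundary ∂P, fix an oriented edge (i,j) ∈ ∂P, and let ψ be a non-degenerate eigenvector of L^{∂P} whose eigenvalue λ is the n-th smallest eigenvalue of L^{∂P} (counted with multiplicity). Set α₀ = ψ_j/ψ_i. Then ψ is an eigenvector of the matrix L^{∂P} + w_ij B_ij(α₀) with the same eigenvalue λ, and there is an index m with |n − m| ≤ 1 such that λ is the m-th smallest eigenvalue of L^{∂P} + w_ij B_ij(α₀) (counted with multiplicity). -/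
open Matrix Finset

noncomputable section

variable {V : Type*}

section Helpers
variable [Fintype V] [DecidableEq V]

private lemma sorted_le_iff {N : ℕ} (f : Fin N → ℝ) (t : ℝ) (k : Fin N) :
    f (Tuple.sort f k) ≤ t ↔ (k : ℕ) < (Finset.univ.filter fun x => f x ≤ t).card := by
  have hcard : (Finset.univ.filter fun x => f (Tuple.sort f x) ≤ t).card
      = (Finset.univ.filter fun x => f x ≤ t).card := by
    apply Finset.card_equiv (Tuple.sort f)
    intro x; simp
  rw [← hcard]
  have hmono : Monotone (fun x => f (Tuple.sort f x)) := Tuple.monotone_sort f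
  constructor
  · intro h
    have hsub : Finset.Iic k ⊆ Finset.univ.filter fun x => f (Tuple.sort f x) ≤ t := by
      intro k' hk'
      simp only [Finset.mem_Iic] at hk'
      simp only [Finset.mem_filter, Finset.mem_univ, true_and]
      exact le_trans (hmono hk') h
    have := Finset.card_le_card hsub
    rw [Fin.card_Iic] at this
    omega
  · intro h
    by_contra hc
    have hsub : (Finset.univ.filter fun x => f (Tuple.sort f x) ≤ t) ⊆ Finset.Iio k := by
      intro k' hk'
      simp only [Finset.mem_filter, Finset.mem_univ, true_and] at hk'
      simp only [Finset.mem_Iio]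
      by_contra hge
      exact hc (le_trans (hmono (le_of_not_gt hge)) hk')
    have := Finset.card_le_card hsub
    rw [Fin.card_Iio] at this
    omega


private lemma singles_li (S : Finset V) :
    LinearIndependent ℝ (fun k : {i // i ∈ S} => (Pi.single (k : V) 1 : V → ℝ)) := by
  have h : LinearIndependent ℝ (⇑(Pi.basisFun ℝ V) ∘ (Subtype.val : {i // i ∈ S} → V)) :=
    (Pi.basisFun ℝ V).linearIndependent.comp _ Subtype.val_injective
  simpa only [Function.comp_def, Pi.basisFun_apply] using h

private lemma spanS_zero (S : Finset V) {x : V → ℝ}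
    (hx : x ∈ Submodule.span ℝ
      (Set.range (fun k : {i // i ∈ S} => (Pi.single (k : V) 1 : V → ℝ)))) :
    ∀ i ∉ S, x i = 0 := by
  induction hx using Submodule.span_induction with
  | mem x hxm =>
    obtain ⟨k, rfl⟩ := hxm
    intro i hi
    exact Pi.single_eq_of_ne (fun h => hi (by rw [h]; exact k.2)) 1
  | zero => intro i _; rfl
  | add x y _ _ hx hy => intro i hi; simp [Pi.add_apply, hx i hi, hy i hi]
  | smul c x _ hx => intro i hi; simp [Pi.smul_apply, hx i hi]

private lemma spanS_finrank (S : Finset V) :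
    Module.finrank ℝ ↥(Submodule.span ℝ
      (Set.range (fun k : {i // i ∈ S} => (Pi.single (k : V) 1 : V → ℝ)))) = S.card := by
  rw [finrank_span_eq_card (singles_li S), Fintype.card_coe]

private lemma quad_diag (d : V → ℝ) (x : V → ℝ) :
    x ⬝ᵥ ((Matrix.diagonal d) *ᵥ x) = ∑ i, d i * (x i * x i) := by
  simp only [dotProduct, Matrix.mulVec_diagonal]
  exact Finset.sum_congr rfl fun i _ => by ring

private lemma dot_self (x : V → ℝ) : x ⬝ᵥ x = ∑ i, x i * x i := rfl

private lemma diag_upper (d : V → ℝ) (t : ℝ) (W : Submodule ℝ (V → ℝ))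
    (hW : ∀ x ∈ W, x ⬝ᵥ ((Matrix.diagonal d) *ᵥ x) ≤ t * (x ⬝ᵥ x)) :
    Module.finrank ℝ W ≤ (Finset.univ.filter fun i => d i ≤ t).card := by
  classical
  set S := Finset.univ.filter fun i : V => d i ≤ t with hS
  by_contra hlt
  push_neg at hlt
  set W' := Submodule.span ℝ
      (Set.range (fun k : {i // i ∈ Sᶜ} => (Pi.single (k : V) 1 : V → ℝ))) with hW'
  have hrank' : Module.finrank ℝ ↥W' = Sᶜ.card := spanS_finrank Sᶜ
  have hsum := Submodule.finrank_sup_add_finrank_inf_eq W W'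
  have hle : Module.finrank ℝ ↥(W ⊔ W') ≤ Fintype.card V := by
    have := Submodule.finrank_le (W ⊔ W')
    rwa [Module.finrank_pi] at this
  have hcardc : Sᶜ.card = Fintype.card V - S.card := Finset.card_compl S
  have hSle : S.card ≤ Fintype.card V := Finset.card_le_univ S
  have hpos : 0 < Module.finrank ℝ ↥(W ⊓ W') := by omega
  have hne : W ⊓ W' ≠ ⊥ := by
    intro h
    rw [h, finrank_bot] at hpos
    omega
  obtain ⟨x, hxmem, hx0⟩ := (W ⊓ W').ne_bot_iff.mp hne
  have hxW : x ∈ W := hxmem.1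
  have hzero : ∀ i ∈ S, x i = 0 := by
    intro i hi
    exact spanS_zero Sᶜ hxmem.2 i (by simpa using hi)
  have h1 := hW x hxW
  rw [quad_diag, dot_self, Finset.mul_sum] at h1
  have h2 : ∑ i, t * (x i * x i) < ∑ i, d i * (x i * x i) := by
    obtain ⟨i0, hi0⟩ := Function.ne_iff.mp hx0
    have hi0S : i0 ∉ S := fun h => hi0 (hzero i0 h)
    have hdi0 : t < d i0 := by
      by_contra hcon
      exact hi0S (by simp [hS, le_of_not_gt hcon])
    refine Finset.sum_lt_sum ?_ ⟨i0, Finset.mem_univ i0, ?_⟩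
    · intro i _
      by_cases hi : i ∈ S
      · rw [hzero i hi]; ring_nf; rfl
      · have : t < d i := by
          by_contra hcon
          exact hi (by simp [hS, le_of_not_gt hcon])
        nlinarith [mul_self_nonneg (x i)]
    · have : (0:ℝ) < x i0 * x i0 := mul_self_pos.mpr (by simpa using hi0)
      nlinarith
  linarith

private lemma diag_lower (d : V → ℝ) (t : ℝ) :
    ∃ W : Submodule ℝ (V → ℝ),
      Module.finrank ℝ ↥W = (Finset.univ.filter fun i => d i ≤ t).card ∧
      ∀ x ∈ W, x ⬝ᵥ ((Matrix.diagonal d) *ᵥ x) ≤ t * (x ⬝ᵥ x) := by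
  classical
  set S := Finset.univ.filter fun i : V => d i ≤ t with hS
  refine ⟨Submodule.span ℝ
      (Set.range (fun k : {i // i ∈ S} => (Pi.single (k : V) 1 : V → ℝ))), spanS_finrank S, ?_⟩
  intro x hx
  have hzero : ∀ i ∉ S, x i = 0 := spanS_zero S hx
  rw [quad_diag, dot_self, Finset.mul_sum]
  apply Finset.sum_le_sum
  intro i _
  by_cases hi : i ∈ S
  · have hdi : d i ≤ t := by simpa [hS] using hi
    nlinarith [mul_self_nonneg (x i)]
  · rw [hzero i hi]; ring_nf; rfl

private lemma spectral_real (A : Matrix V V ℝ) (hA : A.IsHermitian) :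
    A = (hA.eigenvectorUnitary : Matrix V V ℝ) * Matrix.diagonal hA.eigenvalues
      * star (hA.eigenvectorUnitary : Matrix V V ℝ) := by
  have h := hA.spectral_theorem
  rwa [RCLike.ofReal_real_eq_id, Function.id_comp] at h

private lemma dot_mulVec_unitary (U : Matrix V V ℝ) (x : V → ℝ) (z : V → ℝ) :
    x ⬝ᵥ (U *ᵥ z) = (star U *ᵥ x) ⬝ᵥ z := by
  rw [Matrix.dotProduct_mulVec]
  congr 1
  rw [Matrix.star_eq_conjTranspose, Matrix.conjTranspose_eq_transpose_of_trivial,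
    Matrix.mulVec_transpose]

private lemma quad_transfer (A : Matrix V V ℝ) (hA : A.IsHermitian) (x : V → ℝ) :
    x ⬝ᵥ (A *ᵥ x) = (star (hA.eigenvectorUnitary : Matrix V V ℝ) *ᵥ x) ⬝ᵥ
      (Matrix.diagonal hA.eigenvalues *ᵥ (star (hA.eigenvectorUnitary : Matrix V V ℝ) *ᵥ x)) := by
  conv_lhs => rw [spectral_real A hA]
  rw [← Matrix.mulVec_mulVec, ← Matrix.mulVec_mulVec, dot_mulVec_unitary]

private lemma norm_transfer (A : Matrix V V ℝ) (hA : A.IsHermitian) (x : V → ℝ) :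
    x ⬝ᵥ x = (star (hA.eigenvectorUnitary : Matrix V V ℝ) *ᵥ x) ⬝ᵥ
      (star (hA.eigenvectorUnitary : Matrix V V ℝ) *ᵥ x) := by
  set U := (hA.eigenvectorUnitary : Matrix V V ℝ) with hU
  have hU1 : U * star U = 1 := Matrix.mem_unitaryGroup_iff.mp hA.eigenvectorUnitary.2
  calc x ⬝ᵥ x = x ⬝ᵥ ((U * star U) *ᵥ x) := by rw [hU1, Matrix.one_mulVec]
    _ = (star U *ᵥ x) ⬝ᵥ (star U *ᵥ x) := by
        rw [← Matrix.mulVec_mulVec, dot_mulVec_unitary]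

/-- The linear equivalence `x ↦ (star U) *ᵥ x`. -/
private def specEquiv (A : Matrix V V ℝ) (hA : A.IsHermitian) : (V → ℝ) ≃ₗ[ℝ] (V → ℝ) :=
  LinearEquiv.ofLinear (Matrix.toLin' (star (hA.eigenvectorUnitary : Matrix V V ℝ)))
    (Matrix.toLin' (hA.eigenvectorUnitary : Matrix V V ℝ))
    (by rw [← Matrix.toLin'_mul, Matrix.mem_unitaryGroup_iff'.mp hA.eigenvectorUnitary.2,
          Matrix.toLin'_one])
    (by rw [← Matrix.toLin'_mul, Matrix.mem_unitaryGroup_iff.mp hA.eigenvectorUnitary.2,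
          Matrix.toLin'_one])

private lemma specEquiv_apply (A : Matrix V V ℝ) (hA : A.IsHermitian) (x : V → ℝ) :
    specEquiv A hA x = star (hA.eigenvectorUnitary : Matrix V V ℝ) *ᵥ x := by
  simp [specEquiv, Matrix.toLin'_apply]

private lemma herm_upper (A : Matrix V V ℝ) (hA : A.IsHermitian) (t : ℝ)
    (W : Submodule ℝ (V → ℝ)) (hW : ∀ x ∈ W, x ⬝ᵥ (A *ᵥ x) ≤ t * (x ⬝ᵥ x)) :
    Module.finrank ℝ ↥W ≤ (Finset.univ.filter fun i => hA.eigenvalues i ≤ t).card := by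
  rw [← LinearEquiv.finrank_map_eq (specEquiv A hA) W]
  apply diag_upper hA.eigenvalues t
  rintro y ⟨x, hx, rfl⟩
  simp only [LinearEquiv.coe_coe]
  rw [specEquiv_apply, ← quad_transfer A hA, ← norm_transfer A hA]
  exact hW x hx

private lemma herm_lower (A : Matrix V V ℝ) (hA : A.IsHermitian) (t : ℝ) :
    ∃ W : Submodule ℝ (V → ℝ),
      Module.finrank ℝ ↥W = (Finset.univ.filter fun i => hA.eigenvalues i ≤ t).card ∧
      ∀ x ∈ W, x ⬝ᵥ (A *ᵥ x) ≤ t * (x ⬝ᵥ x) := by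
  obtain ⟨W0, hW0rank, hW0⟩ := diag_lower hA.eigenvalues t
  refine ⟨W0.map ((specEquiv A hA).symm : (V → ℝ) →ₗ[ℝ] V → ℝ), ?_, ?_⟩
  · rw [LinearEquiv.finrank_map_eq]; exact hW0rank
  · rintro x ⟨y, hy, rfl⟩
    simp only [LinearEquiv.coe_coe]
    have h : specEquiv A hA ((specEquiv A hA).symm y) = y := (specEquiv A hA).apply_symm_apply y
    rw [quad_transfer A hA, norm_transfer A hA, ← specEquiv_apply, h]
    exact hW0 y hy

private lemma count_compare (A B : Matrix V V ℝ) (hA : A.IsHermitian) (hB : B.IsHermitian)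
    (φ : (V → ℝ) →ₗ[ℝ] ℝ) (hφ : ∀ x, φ x = 0 → x ⬝ᵥ (B *ᵥ x) = x ⬝ᵥ (A *ᵥ x)) (t : ℝ) :
    (Finset.univ.filter fun i => hA.eigenvalues i ≤ t).card ≤
      (Finset.univ.filter fun i => hB.eigenvalues i ≤ t).card + 1 := by
  obtain ⟨W, hWrank, hWq⟩ := herm_lower A hA t
  have hup := herm_upper B hB t (W ⊓ LinearMap.ker φ) ?_
  · have h1 := Submodule.finrank_sup_add_finrank_inf_eq W (LinearMap.ker φ)
    have h2 : Module.finrank ℝ ↥(W ⊔ LinearMap.ker φ) ≤ Fintype.card V := by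
      have := Submodule.finrank_le (W ⊔ LinearMap.ker φ)
      rwa [Module.finrank_pi] at this
    have h3 := LinearMap.finrank_range_add_finrank_ker φ
    rw [Module.finrank_pi] at h3
    have h4 : Module.finrank ℝ ↥(LinearMap.range φ) ≤ 1 := by
      have := Submodule.finrank_le (LinearMap.range φ)
      rwa [Module.finrank_self] at this
    omega
  · intro x hx
    rw [hφ x (LinearMap.mem_ker.mp hx.2)]
    exact hWq x hx.1

private lemma isHermitian_of_symm {A : Matrix V V ℝ} (h : ∀ i j, A i j = A j i) :
    A.IsHermitian := by
  show Aᴴ = A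
  ext i j
  simp [Matrix.conjTranspose_apply, h i j]

private lemma sLap_isHermitian (G : SimpleGraph V) [DecidableRel G.Adj] (w : V → V → ℝ)
    (hw : ∀ i j, w i j = w j i) {ν : ℕ} (P : V → Fin ν) :
    (signedLaplacian G w (partSgn P)).IsHermitian := by
  apply isHermitian_of_symm
  intro i j
  by_cases h : i = j
  · subst h; rfl
  · simp only [signedLaplacian, Matrix.of_apply, if_neg h, if_neg (Ne.symm h)]
    have hσ : partSgn P i j = partSgn P j i := by
      simp only [partSgn]
      by_cases hp : P i = P j
      · rw [if_pos hp, if_pos hp.symm]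
      · rw [if_neg hp, if_neg (fun hc => hp hc.symm)]
    by_cases hadj : G.Adj i j
    · rw [if_pos hadj, if_pos (G.adj_symm hadj), hw i j, hσ]
    · rw [if_neg hadj, if_neg (fun hc => hadj (G.adj_symm hc))]

private lemma Bmat_symm_entries {i j : V} (hij : i ≠ j) (a : ℝ) :
    ∀ x y, Bmat i j a x y = Bmat i j a y x := by
  intro x y
  simp only [Bmat, Matrix.of_apply]
  split_ifs <;> simp_all <;> tauto

private lemma Bmat_mulVec_zero {i j : V} (hij : i ≠ j) {a : ℝ} (ha : a ≠ 0)
    (x : V → ℝ) (h : a * x i = x j) : Bmat i j a *ᵥ x = 0 := by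
  funext v
  simp only [Matrix.mulVec, dotProduct, Bmat, Matrix.of_apply, Pi.zero_apply]
  by_cases hvi : v = i
  · subst hvi
    have hrw : ∀ y, (if v = v ∧ y = v then a
        else if v = j ∧ y = j then a⁻¹
        else if (v = v ∧ y = j) ∨ (v = j ∧ y = v) then -1 else 0) * x y
        = (if y = v then a * x v else 0) + (if y = j then -x j else 0) := by
      intro y
      by_cases h1 : y = v <;> by_cases h2 : y = j <;> simp_all <;> ring
    rw [Finset.sum_congr rfl fun y _ => hrw y, Finset.sum_add_distrib,
      Finset.sum_ite_eq' Finset.univ, Finset.sum_ite_eq' Finset.univ]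
    simp only [Finset.mem_univ, if_pos]
    rw [h]; ring
  · by_cases hvj : v = j
    · subst hvj
      have hrw : ∀ y, (if v = i ∧ y = i then a
          else if v = v ∧ y = v then a⁻¹
          else if (v = i ∧ y = v) ∨ (v = v ∧ y = i) then -1 else 0) * x y
          = (if y = v then a⁻¹ * x v else 0) + (if y = i then -x i else 0) := by
        intro y
        by_cases h1 : y = v <;> by_cases h2 : y = i <;> simp_all <;> ring
      rw [Finset.sum_congr rfl fun y _ => hrw y, Finset.sum_add_distrib,
        Finset.sum_ite_eq' Finset.univ, Finset.sum_ite_eq' Finset.univ]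
      simp only [Finset.mem_univ, if_pos]
      rw [← h]
      field_simp
      ring
    · have hrw : ∀ y, (if v = i ∧ y = i then a
          else if v = j ∧ y = j then a⁻¹
          else if (v = i ∧ y = j) ∨ (v = j ∧ y = i) then -1 else 0) * x y = 0 := by
        intro y; simp [hvi, hvj]
      rw [Finset.sum_congr rfl fun y _ => hrw y]
      simp

private lemma exists_eig_eq (B : Matrix V V ℝ) (hB : B.IsHermitian) (ψ : V → ℝ)
    (hψ : ψ ≠ 0) (lam : ℝ) (h : B *ᵥ ψ = lam • ψ) : ∃ v, hB.eigenvalues v = lam := by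
  by_contra hc
  push_neg at hc
  have hdet : (B - lam • 1).det = 0 := by
    rw [← Matrix.exists_mulVec_eq_zero_iff]
    refine ⟨ψ, hψ, ?_⟩
    rw [Matrix.sub_mulVec, h, Matrix.smul_mulVec, Matrix.one_mulVec, sub_self]
  set U := (hB.eigenvectorUnitary : Matrix V V ℝ) with hUdef
  have hU1 : U * star U = 1 := Matrix.mem_unitaryGroup_iff.mp hB.eigenvectorUnitary.2
  have hdiag : Matrix.diagonal (fun v => hB.eigenvalues v - lam)
      = Matrix.diagonal hB.eigenvalues - lam • 1 := by
    ext v w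
    by_cases hvw : v = w <;>
      simp [Matrix.diagonal_apply, hvw, Matrix.one_apply, Matrix.sub_apply, Matrix.smul_apply]
  have hBeq : B - lam • 1 = U * Matrix.diagonal (fun v => hB.eigenvalues v - lam) * star U := by
    rw [hdiag, Matrix.mul_sub, Matrix.sub_mul, Matrix.mul_smul, Matrix.mul_one,
      Matrix.smul_mul, hU1]
    have := spectral_real B hB
    rw [← hUdef] at this
    rw [← this]
  rw [hBeq, Matrix.det_mul, Matrix.det_mul, Matrix.det_diagonal] at hdet
  have hUdet : U.det * (star U).det = 1 := by
    rw [← Matrix.det_mul, hU1, Matrix.det_one]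
  have hprod : ∏ v, (hB.eigenvalues v - lam) = 0 := by
    by_contra hp
    apply hp
    have : U.det * (∏ v, (hB.eigenvalues v - lam)) * (star U).det
        = U.det * (star U).det * (∏ v, (hB.eigenvalues v - lam)) := by ring
    rw [this, hUdet, one_mul] at hdet
    exact hdet
  obtain ⟨v, _, hv⟩ := Finset.prod_eq_zero_iff.mp hprod
  exact hc v (by linarith [sub_eq_zero.mp hv])

private lemma nthEigenvalue_eq (A : Matrix V V ℝ) (hA : A.IsHermitian) (m : ℕ)
    (hm : m - 1 < Fintype.card V) :
    nthEigenvalue A m = (fun k : Fin (Fintype.card V) =>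
      hA.eigenvalues ((Fintype.equivFin V).symm k))
      (Tuple.sort (fun k : Fin (Fintype.card V) =>
        hA.eigenvalues ((Fintype.equivFin V).symm k)) ⟨m - 1, hm⟩) := by
  unfold nthEigenvalue
  rw [dif_pos ⟨hA, hm⟩]

private lemma count_fin_eq (g : V → ℝ) (t : ℝ) :
    (Finset.univ.filter fun k : Fin (Fintype.card V) =>
      g ((Fintype.equivFin V).symm k) ≤ t).card
    = (Finset.univ.filter fun v => g v ≤ t).card := by
  apply Finset.card_equiv (Fintype.equivFin V).symm
  intro x; simp

private lemma mult_le_eigenspace (A : Matrix V V ℝ) (hA : A.IsHermitian) (μ : ℝ) :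
    (Finset.univ.filter fun v => hA.eigenvalues v = μ).card ≤
      Module.finrank ℝ (Module.End.eigenspace (Matrix.toLin' A) μ) := by
  classical
  have hinv : Invertible (hA.eigenvectorUnitary : Matrix V V ℝ) :=
    ⟨star ((hA.eigenvectorUnitary : Matrix V V ℝ)),
      Matrix.mem_unitaryGroup_iff'.mp hA.eigenvectorUnitary.2,
      Matrix.mem_unitaryGroup_iff.mp hA.eigenvectorUnitary.2⟩
  have hcols := Matrix.linearIndependent_cols_of_invertible
    (hA.eigenvectorUnitary : Matrix V V ℝ) (K := ℝ)
  have hfe : (fun j : V => (⇑(hA.eigenvectorBasis j) : V → ℝ))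
      = fun j => (hA.eigenvectorUnitary : Matrix V V ℝ)ᵀ j := by
    funext j i
    exact (hA.eigenvectorUnitary_apply i j).symm
  have h1 : LinearIndependent ℝ (fun j : V => (⇑(hA.eigenvectorBasis j) : V → ℝ)) := by
    rw [hfe]; exact hcols
  have h2 := h1.comp
    (Subtype.val : {v // v ∈ Finset.univ.filter fun v => hA.eigenvalues v = μ} → V)
    Subtype.val_injective
  have hspan_le : Submodule.span ℝ
      (Set.range ((fun j : V => (⇑(hA.eigenvectorBasis j) : V → ℝ)) ∘
        (Subtype.val : {v // v ∈ Finset.univ.filter fun v => hA.eigenvalues v = μ} → V))) ≤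
      Module.End.eigenspace (Matrix.toLin' A) μ := by
    rw [Submodule.span_le]
    rintro x ⟨k, rfl⟩
    rw [SetLike.mem_coe, Module.End.mem_eigenspace_iff]
    have h := hA.mulVec_eigenvectorBasis (k : V)
    have hk : hA.eigenvalues (k : V) = μ := (Finset.mem_filter.mp k.2).2
    rw [Function.comp_apply, Matrix.toLin'_apply, h, hk]
  have hfin := Submodule.finrank_mono hspan_le
  rwa [finrank_span_eq_card h2, Fintype.card_coe] at hfin


private lemma sorted_le_iff' (g : V → ℝ) (t : ℝ) (k : Fin (Fintype.card V)) :
    (fun k : Fin (Fintype.card V) => g ((Fintype.equivFin V).symm k))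
      (Tuple.sort (fun k : Fin (Fintype.card V) => g ((Fintype.equivFin V).symm k)) k) ≤ t
    ↔ (k : ℕ) < (Finset.univ.filter fun v => g v ≤ t).card := by
  have h1 := sorted_le_iff (fun k : Fin (Fintype.card V) => g ((Fintype.equivFin V).symm k)) t k
  rw [count_fin_eq] at h1
  exact h1

end Helpers

/-- If `ψ` is a non-degenerate eigenvector of the partition Laplacian
`L^{∂P}` whose eigenvalue `λ` is the `n`-th smallest, and `(i,j)` is an oriented boundary
edge, then with `α₀ = ψ_j / ψ_i` the vector `ψ` is still an eigenvector of
`L^{∂P} + w_ij B_ij(α₀)` with eigenvalue `λ`, and `λ` is the `m`-th smallest eigenvalue of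
the perturbed matrix for some `m` with `|n - m| ≤ 1`. -/
theorem stmt5 [Fintype V] [DecidableEq V] (G : SimpleGraph V) [DecidableRel G.Adj]
    (hGconn : G.Connected) (w : V → V → ℝ)
    (hwsymm : ∀ i j, w i j = w j i) (hwpos : ∀ i j, G.Adj i j → 0 < w i j)
    (hw0 : ∀ i j, ¬ G.Adj i j → w i j = 0)
    {ν : ℕ} (P : V → Fin ν) (hPsurj : Function.Surjective P)
    (hPconn : ∀ k : Fin ν, (G.induce {v | P v = k}).Connected)
    (O : Finset (V × V))
    (hO : ∀ p ∈ O, G.Adj p.1 p.2 ∧ P p.1 ≠ P p.2)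
    (hOorient : ∀ i j, G.Adj i j → P i ≠ P j → ((i, j) ∈ O ↔ (j, i) ∉ O))
    (i j : V) (hij : (i, j) ∈ O)
    (ψ : V → ℝ) (lam : ℝ) (n : ℕ) (hn1 : 1 ≤ n) (hn2 : n ≤ Fintype.card V)
    (heig : (signedLaplacian G w (partSgn P)).mulVec ψ = lam • ψ)
    (hψnz : ∀ v, ψ v ≠ 0)
    (hsimple : IsSimpleEigenvalue (signedLaplacian G w (partSgn P)) lam)
    (hlam : lam = nthEigenvalue (signedLaplacian G w (partSgn P)) n) :
    (signedLaplacian G w (partSgn P) + w i j • Bmat i j (ψ j / ψ i)).mulVec ψ = lam • ψ ∧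
    ∃ m : ℕ, 1 ≤ m ∧ m ≤ Fintype.card V ∧ |(n : ℤ) - (m : ℤ)| ≤ 1 ∧
      lam = nthEigenvalue
        (signedLaplacian G w (partSgn P) + w i j • Bmat i j (ψ j / ψ i)) m := by
  classical
  obtain ⟨hadj, hPne⟩ := hO (i, j) hij
  have hne : i ≠ j := G.ne_of_adj hadj
  have ha : ψ j / ψ i ≠ 0 := div_ne_zero (hψnz j) (hψnz i)
  have hax : (ψ j / ψ i) * ψ i = ψ j := div_mul_cancel₀ (ψ j) (hψnz i)
  have hB0 : Bmat i j (ψ j / ψ i) *ᵥ ψ = 0 := Bmat_mulVec_zero hne ha ψ hax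
  have part1 : (signedLaplacian G w (partSgn P) + w i j • Bmat i j (ψ j / ψ i)) *ᵥ ψ
      = lam • ψ := by
    rw [Matrix.add_mulVec, Matrix.smul_mulVec, hB0, smul_zero, add_zero]
    exact heig
  refine ⟨part1, ?_⟩
  have hA : (signedLaplacian G w (partSgn P)).IsHermitian := sLap_isHermitian G w hwsymm P
  have hAs : ∀ x y, signedLaplacian G w (partSgn P) x y = signedLaplacian G w (partSgn P) y x := by
    intro x y
    conv_lhs => rw [← hA]
    simp [Matrix.conjTranspose_apply]
  have hBH : (signedLaplacian G w (partSgn P) + w i j • Bmat i j (ψ j / ψ i)).IsHermitian := by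
    apply isHermitian_of_symm
    intro x y
    simp only [Matrix.add_apply, Matrix.smul_apply, smul_eq_mul]
    rw [hAs x y, Bmat_symm_entries hne (ψ j / ψ i) x y]
  have hNpos : 0 < Fintype.card V := by omega
  have hlt : n - 1 < Fintype.card V := by omega
  rw [nthEigenvalue_eq (signedLaplacian G w (partSgn P)) hA n hlt] at hlam
  -- count for A equals n
  have hn_le_cA : n ≤ (Finset.univ.filter fun v => hA.eigenvalues v ≤ lam).card := by
    have h0 := (sorted_le_iff' hA.eigenvalues lam ⟨n - 1, hlt⟩).mp (le_of_eq hlam.symm)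
    have h' : n - 1 < (Finset.univ.filter fun v => hA.eigenvalues v ≤ lam).card := h0
    omega
  have hcA_le : (Finset.univ.filter fun v => hA.eigenvalues v ≤ lam).card ≤ n := by
    by_contra hgt
    push_neg at hgt
    have hcA_leN : (Finset.univ.filter fun v => hA.eigenvalues v ≤ lam).card ≤ Fintype.card V :=
      (Finset.card_filter_le _ _).trans (le_of_eq (Finset.card_univ))
    have hnN : n < Fintype.card V := by omega
    have h1 : (fun k : Fin (Fintype.card V) => hA.eigenvalues ((Fintype.equivFin V).symm k))
        (Tuple.sort (fun k : Fin (Fintype.card V) =>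
          hA.eigenvalues ((Fintype.equivFin V).symm k)) ⟨n, hnN⟩) ≤ lam :=
      (sorted_le_iff' hA.eigenvalues lam ⟨n, hnN⟩).mpr hgt
    have h0 : lam ≤ (fun k : Fin (Fintype.card V) =>
        hA.eigenvalues ((Fintype.equivFin V).symm k))
        (Tuple.sort (fun k : Fin (Fintype.card V) =>
          hA.eigenvalues ((Fintype.equivFin V).symm k)) ⟨n, hnN⟩) := by
      rw [hlam]
      have hle0 : (⟨n - 1, hlt⟩ : Fin (Fintype.card V)) ≤ ⟨n, hnN⟩ := by
        rw [Fin.mk_le_mk]; omega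
      exact Tuple.monotone_sort (fun k : Fin (Fintype.card V) =>
        hA.eigenvalues ((Fintype.equivFin V).symm k)) hle0
    have heq1 : (fun k : Fin (Fintype.card V) =>
        hA.eigenvalues ((Fintype.equivFin V).symm k))
        (Tuple.sort (fun k : Fin (Fintype.card V) =>
          hA.eigenvalues ((Fintype.equivFin V).symm k)) ⟨n, hnN⟩) = lam := le_antisymm h1 h0
    have hne2 : Tuple.sort (fun k : Fin (Fintype.card V) =>
          hA.eigenvalues ((Fintype.equivFin V).symm k)) ⟨n - 1, hlt⟩
        ≠ Tuple.sort (fun k : Fin (Fintype.card V) =>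
          hA.eigenvalues ((Fintype.equivFin V).symm k)) ⟨n, hnN⟩ := by
      intro hcc
      have := (Tuple.sort (fun k : Fin (Fintype.card V) =>
          hA.eigenvalues ((Fintype.equivFin V).symm k))).injective hcc
      rw [Fin.mk.injEq] at this
      omega
    have hv01 : (Fintype.equivFin V).symm (Tuple.sort (fun k : Fin (Fintype.card V) =>
          hA.eigenvalues ((Fintype.equivFin V).symm k)) ⟨n - 1, hlt⟩)
        ≠ (Fintype.equivFin V).symm (Tuple.sort (fun k : Fin (Fintype.card V) =>
          hA.eigenvalues ((Fintype.equivFin V).symm k)) ⟨n, hnN⟩) :=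
      fun h => hne2 ((Fintype.equivFin V).symm.injective h)
    have hpair : ({(Fintype.equivFin V).symm (Tuple.sort (fun k : Fin (Fintype.card V) =>
          hA.eigenvalues ((Fintype.equivFin V).symm k)) ⟨n - 1, hlt⟩),
        (Fintype.equivFin V).symm (Tuple.sort (fun k : Fin (Fintype.card V) =>
          hA.eigenvalues ((Fintype.equivFin V).symm k)) ⟨n, hnN⟩)} : Finset V)
        ⊆ Finset.univ.filter fun v => hA.eigenvalues v = lam := by
      intro v hv
      simp only [Finset.mem_insert, Finset.mem_singleton] at hv
      rcases hv with rfl | rfl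
      · simp only [Finset.mem_filter, Finset.mem_univ, true_and]
        exact hlam.symm
      · simp only [Finset.mem_filter, Finset.mem_univ, true_and]
        exact heq1
    have hcard2 : 2 ≤ (Finset.univ.filter fun v => hA.eigenvalues v = lam).card := by
      rw [← Finset.card_pair hv01]
      exact Finset.card_le_card hpair
    have hmle := mult_le_eigenspace (signedLaplacian G w (partSgn P)) hA lam
    have hs : Module.finrank ℝ
        (Module.End.eigenspace (Matrix.toLin' (signedLaplacian G w (partSgn P))) lam) = 1 :=
      hsimple
    omega
  -- lam is an eigenvalue of B
  have hψ0 : ψ ≠ 0 := by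
    intro hcc
    obtain ⟨v⟩ := Fintype.card_pos_iff.mp hNpos
    exact hψnz v (by rw [hcc]; rfl)
  obtain ⟨vex, hvex⟩ := exists_eig_eq _ hBH ψ hψ0 lam part1
  -- position of lam among eigenvalues of B
  have hk0eq : Tuple.sort (fun k : Fin (Fintype.card V) =>
        hBH.eigenvalues ((Fintype.equivFin V).symm k))
      ((Tuple.sort (fun k : Fin (Fintype.card V) =>
        hBH.eigenvalues ((Fintype.equivFin V).symm k))).symm ((Fintype.equivFin V) vex))
      = (Fintype.equivFin V) vex := Equiv.apply_symm_apply _ _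
  have hfk0 : (fun k : Fin (Fintype.card V) => hBH.eigenvalues ((Fintype.equivFin V).symm k))
      (Tuple.sort (fun k : Fin (Fintype.card V) =>
        hBH.eigenvalues ((Fintype.equivFin V).symm k))
      ((Tuple.sort (fun k : Fin (Fintype.card V) =>
        hBH.eigenvalues ((Fintype.equivFin V).symm k))).symm ((Fintype.equivFin V) vex)))
      = lam := by
    simp only [hk0eq, Equiv.symm_apply_apply]
    exact hvex
  have hk0lt : (((Tuple.sort (fun k : Fin (Fintype.card V) =>
        hBH.eigenvalues ((Fintype.equivFin V).symm k))).symm ((Fintype.equivFin V) vex)) : ℕ)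
      < (Finset.univ.filter fun v => hBH.eigenvalues v ≤ lam).card :=
    (sorted_le_iff' hBH.eigenvalues lam _).mp (le_of_eq hfk0)
  have hcB1 : 1 ≤ (Finset.univ.filter fun v => hBH.eigenvalues v ≤ lam).card := by omega
  have hcB_leN : (Finset.univ.filter fun v => hBH.eigenvalues v ≤ lam).card ≤ Fintype.card V :=
    (Finset.card_filter_le _ _).trans (le_of_eq (Finset.card_univ))
  -- rank one comparison
  have hforms : ∀ x : V → ℝ, ((ψ j / ψ i) • LinearMap.proj i - LinearMap.proj j :
        (V → ℝ) →ₗ[ℝ] ℝ) x = 0 →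
      x ⬝ᵥ ((signedLaplacian G w (partSgn P) + w i j • Bmat i j (ψ j / ψ i)) *ᵥ x)
        = x ⬝ᵥ (signedLaplacian G w (partSgn P) *ᵥ x) := by
    intro x hx
    have h0 : (ψ j / ψ i) * x i = x j := by
      have : (ψ j / ψ i) * x i - x j = 0 := hx
      linarith
    have hBm : Bmat i j (ψ j / ψ i) *ᵥ x = 0 := Bmat_mulVec_zero hne ha x h0
    rw [Matrix.add_mulVec, Matrix.smul_mulVec, hBm, smul_zero, add_zero]
  have hc1 := count_compare (signedLaplacian G w (partSgn P))
    (signedLaplacian G w (partSgn P) + w i j • Bmat i j (ψ j / ψ i)) hA hBH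
    ((ψ j / ψ i) • LinearMap.proj i - LinearMap.proj j) hforms lam
  have hc2 := count_compare
    (signedLaplacian G w (partSgn P) + w i j • Bmat i j (ψ j / ψ i))
    (signedLaplacian G w (partSgn P)) hBH hA
    ((ψ j / ψ i) • LinearMap.proj i - LinearMap.proj j)
    (fun x hx => (hforms x hx).symm) lam
  refine ⟨(Finset.univ.filter fun v => hBH.eigenvalues v ≤ lam).card, hcB1, hcB_leN, ?_, ?_⟩
  · rw [abs_le]
    constructor <;> push_cast <;> omega
  · have hmlt : (Finset.univ.filter fun v => hBH.eigenvalues v ≤ lam).card - 1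
        < Fintype.card V := by omega
    rw [nthEigenvalue_eq _ hBH _ hmlt]
    apply le_antisymm
    · have hle : ((Tuple.sort (fun k : Fin (Fintype.card V) =>
          hBH.eigenvalues ((Fintype.equivFin V).symm k))).symm ((Fintype.equivFin V) vex))
          ≤ (⟨(Finset.univ.filter fun v => hBH.eigenvalues v ≤ lam).card - 1, hmlt⟩
            : Fin (Fintype.card V)) := by
        rw [Fin.le_def]
        exact Nat.le_pred_of_lt hk0lt
      have := Tuple.monotone_sort (fun k : Fin (Fintype.card V) =>
          hBH.eigenvalues ((Fintype.equivFin V).symm k)) hle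
      rw [show ((fun k : Fin (Fintype.card V) =>
          hBH.eigenvalues ((Fintype.equivFin V).symm k)) ∘ _) _ = lam from hfk0] at this
      exact this
    · exact (sorted_le_iff' hBH.eigenvalues lam _).mpr
        (show (Finset.univ.filter fun v => hBH.eigenvalues v ≤ lam).card - 1
          < (Finset.univ.filter fun v => hBH.eigenvalues v ≤ lam).card by omega)

end
end

section
/- Let P be a ν-partition of G and let ψ be a non-degenerate eigenvector of L^{∂P} whose eigenvalue λ_n is the n-th smallest eigenvalue of L^{∂P} and whose nodal set with respect to σ^{∂P} equals ∂P (equivalently, ψ_i ψ_j > 0 for every edge (i,j) ∈ E). Define α̃ ∈ ℝ^{∂P} by α̃_ij = ψ_j/ψ_i for each oriented boundary edge (i,j); then every α̃_ij > 0, and for each k = 1,…,ν the restriction of ψ to V_k is an eigenvector of the block L^{∂P}(G_k, α̃) with eigenvalue λ_n, this eigenvalue is the smallest eigenvalue λ_1(G_k, α̃) of the block, and hence (P, α̃) is an equipartition with Λ(P, α̃) = λ_n. -/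
open Matrix Finset

noncomputable section

variable {V : Type*}

lemma quad_nonneg {W : Type*} [Fintype W] (C : Matrix W W ℝ) (hsym : ∀ i j, C i j = C j i)
    (ψ : W → ℝ) (hψ : ∀ i, ψ i ≠ 0) (hker : C.mulVec ψ = 0)
    (hoff : ∀ i j, i ≠ j → C i j * (ψ i * ψ j) ≤ 0) (x : W → ℝ) :
    0 ≤ x ⬝ᵥ C.mulVec x := by
  classical
  have hrow : ∀ i, ∑ j, C i j * ψ j = 0 := by
    intro i
    have := congrFun hker i
    simpa [Matrix.mulVec, dotProduct] using this
  have hcol : ∀ j, ∑ i, C i j * ψ i = 0 := by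
    intro j
    have : ∑ i, C i j * ψ i = ∑ i, C j i * ψ i := by
      refine Finset.sum_congr rfl fun i _ => by rw [hsym]
    rw [this]; exact hrow j
  have hQ : x ⬝ᵥ C.mulVec x = ∑ i, ∑ j, x i * (C i j * x j) := by
    simp [dotProduct, Matrix.mulVec, Finset.mul_sum]
  set g : W → W → ℝ := fun i j => (-(C i j * (ψ i * ψ j))) * (x i / ψ i - x j / ψ j) ^ 2 with hg
  have hexp : ∀ i j, g i j =
      (-(C i j * ψ j)) * ((x i) ^ 2 / ψ i) + (-(C i j * ψ i)) * ((x j) ^ 2 / ψ j)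
        + 2 * (x i * (C i j * x j)) := by
    intro i j
    have h1 := hψ i; have h2 := hψ j
    simp only [hg]
    field_simp
    ring
  have hsumg : ∑ i, ∑ j, g i j = 2 * (x ⬝ᵥ C.mulVec x) := by
    have : ∑ i, ∑ j, g i j =
        (∑ i, ∑ j, (-(C i j * ψ j)) * ((x i) ^ 2 / ψ i)) +
        (∑ i, ∑ j, (-(C i j * ψ i)) * ((x j) ^ 2 / ψ j)) +
        (∑ i, ∑ j, 2 * (x i * (C i j * x j))) := by
      rw [← Finset.sum_add_distrib, ← Finset.sum_add_distrib]
      refine Finset.sum_congr rfl fun i _ => ?_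
      rw [← Finset.sum_add_distrib, ← Finset.sum_add_distrib]
      exact Finset.sum_congr rfl fun j _ => hexp i j
    rw [this]
    have hA : ∑ i, ∑ j, (-(C i j * ψ j)) * ((x i) ^ 2 / ψ i) = 0 := by
      refine Finset.sum_eq_zero fun i _ => ?_
      rw [← Finset.sum_mul]
      simp [hrow i]
    have hB : ∑ i, ∑ j, (-(C i j * ψ i)) * ((x j) ^ 2 / ψ j) = 0 := by
      rw [Finset.sum_comm]
      refine Finset.sum_eq_zero fun j _ => ?_
      rw [← Finset.sum_mul]
      simp [hcol j]
    rw [hA, hB, hQ]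
    simp [Finset.mul_sum]
  have hnn : 0 ≤ ∑ i, ∑ j, g i j := by
    refine Finset.sum_nonneg fun i _ => Finset.sum_nonneg fun j _ => ?_
    rcases eq_or_ne i j with rfl | hij
    · simp [hg]
    · exact mul_nonneg (by nlinarith [hoff i j hij]) (sq_nonneg _)
  linarith [hsumg ▸ hnn]

lemma nthEig_one_eq {W : Type*} [Fintype W] [DecidableEq W] [Nonempty W]
    (A : Matrix W W ℝ) (hA : A.IsHermitian) (lam : ℝ)
    (ψ : W → ℝ) (hψ : ψ ≠ 0) (heig : A.mulVec ψ = lam • ψ)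
    (hquad : ∀ x : W → ℝ, lam * (x ⬝ᵥ x) ≤ x ⬝ᵥ A.mulVec x) :
    nthEigenvalue A 1 = lam := by
  have hAt : Aᵀ = A := by
    have h := hA
    rwa [Matrix.IsHermitian, Matrix.conjTranspose_eq_transpose_of_trivial] at h
  have hcard : (1 : ℕ) - 1 < Fintype.card W := by simpa using Fintype.card_pos
  have hle : ∀ j : W, lam ≤ hA.eigenvalues j := by
    intro j
    set v : W → ℝ := ⇑(hA.eigenvectorBasis j) with hv
    have hvne : v ≠ 0 := by
      intro h
      exact hA.eigenvectorBasis.orthonormal.ne_zero j (by ext i; exact congrFun h i)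
    have hvv : 0 < v ⬝ᵥ v := by
      have h0 : 0 ≤ v ⬝ᵥ v := Finset.sum_nonneg fun i _ => mul_self_nonneg _
      rcases lt_or_eq_of_le h0 with h | h
      · exact h
      · exact absurd (dotProduct_self_eq_zero.mp h.symm) hvne
    have hmv : A *ᵥ v = hA.eigenvalues j • v := hA.mulVec_eigenvectorBasis j
    have h2 := hquad v
    rw [hmv] at h2
    have h3 : v ⬝ᵥ (hA.eigenvalues j • v) = hA.eigenvalues j * (v ⬝ᵥ v) := by
      rw [dotProduct_smul]; rfl
    rw [h3] at h2
    exact le_of_mul_le_mul_right h2 hvv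
  have hex : ∃ j : W, hA.eigenvalues j = lam := by
    by_contra hcon
    push_neg at hcon
    apply hψ
    have hc : ∀ j : W, (⇑(hA.eigenvectorBasis j) : W → ℝ) ⬝ᵥ ψ = 0 := by
      intro j
      set v : W → ℝ := ⇑(hA.eigenvectorBasis j) with hv
      have h1 : (A *ᵥ v) ⬝ᵥ ψ = v ⬝ᵥ (A *ᵥ ψ) := by
        rw [dotProduct_mulVec, ← Matrix.mulVec_transpose, hAt]
      rw [hA.mulVec_eigenvectorBasis j, heig] at h1
      have h2 : (hA.eigenvalues j • v) ⬝ᵥ ψ = hA.eigenvalues j * (v ⬝ᵥ ψ) :=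
        smul_dotProduct _ _ _
      have h3 : v ⬝ᵥ (lam • ψ) = lam * (v ⬝ᵥ ψ) := dotProduct_smul _ _ _
      have h4 : hA.eigenvalues j * (v ⬝ᵥ ψ) = lam * (v ⬝ᵥ ψ) := by
        rw [← h2, ← h3]; exact h1
      by_contra hne
      exact hcon j (mul_right_cancel₀ hne h4)
    have hrepr : (hA.eigenvectorBasis.repr (WithLp.toLp 2 ψ : EuclideanSpace ℝ W)) = 0 := by
      ext j
      rw [OrthonormalBasis.repr_apply_apply]
      have : (inner ℝ (hA.eigenvectorBasis j) (WithLp.toLp 2 ψ : EuclideanSpace ℝ W) : ℝ)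
          = (⇑(hA.eigenvectorBasis j) : W → ℝ) ⬝ᵥ ψ := by
        rw [EuclideanSpace.inner_eq_star_dotProduct, star_trivial]
        exact dotProduct_comm _ _
      rw [this, hc j]
      rfl
    exact congrArg WithLp.ofLp (hA.eigenvectorBasis.repr.injective
      (show hA.eigenvectorBasis.repr (WithLp.toLp 2 ψ) = hA.eigenvectorBasis.repr 0 by rw [hrepr, map_zero]))
  rw [nthEigenvalue, dif_pos ⟨hA, hcard⟩]
  set f : Fin (Fintype.card W) → ℝ :=
    fun i => hA.eigenvalues ((Fintype.equivFin W).symm i) with hf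
  show f (Tuple.sort f ⟨1 - 1, hcard⟩) = lam
  obtain ⟨j, hj⟩ := hex
  refine le_antisymm ?_ (hle _)
  have hmono := Tuple.monotone_sort f
  set i1 : Fin (Fintype.card W) := (Tuple.sort f).symm ((Fintype.equivFin W) j) with hi1
  have h5 : f (Tuple.sort f ⟨1 - 1, hcard⟩) ≤ f (Tuple.sort f i1) :=
    hmono (by exact Fin.mk_le_of_le_val (Nat.zero_le _))
  rw [hi1, Equiv.apply_symm_apply] at h5
  simpa [hf, hj] using h5

lemma Bmat_apply_zero [DecidableEq V] {a b x y : V} (c : ℝ) (hxy : x ≠ y)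
    (h1 : ¬(x = a ∧ y = b)) (h2 : ¬(x = b ∧ y = a)) : Bmat a b c x y = 0 := by
  have h3 : ¬(x = a ∧ y = a) := fun h => hxy (h.1.trans h.2.symm)
  have h4 : ¬(x = b ∧ y = b) := fun h => hxy (h.1.trans h.2.symm)
  simp only [Bmat, Matrix.of_apply, if_neg h3, if_neg h4, if_neg (not_or.mpr ⟨h1, h2⟩)]

lemma Bmat_symm [DecidableEq V] (a b : V) (c : ℝ) (x y : V) :
    Bmat a b c x y = Bmat a b c y x := by
  simp only [Bmat, Matrix.of_apply]
  by_cases h1 : x = a <;> by_cases h2 : y = a <;> by_cases h3 : x = b <;> by_cases h4 : y = b <;>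
    simp [h1, h2, h3, h4]

/-- A non-degenerate eigenvector `ψ` of `L^{∂P}` whose nodal set is `∂P`
(equivalently `ψ_i ψ_j > 0` on every edge) induces, via `α̃_ij = ψ_j/ψ_i > 0`, an
equipartition `(P, α̃)` whose blocks all have `ψ` restricted as ground state with first
eigenvalue `λ_n`, so that `Λ(P, α̃) = λ_n`. -/
theorem stmt8 [Fintype V] [DecidableEq V] (G : SimpleGraph V) [DecidableRel G.Adj]
    (hGconn : G.Connected) (w : V → V → ℝ)
    (hwsymm : ∀ i j, w i j = w j i) (hwpos : ∀ i j, G.Adj i j → 0 < w i j)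
    (hw0 : ∀ i j, ¬ G.Adj i j → w i j = 0)
    {ν : ℕ} (P : V → Fin ν) (hPsurj : Function.Surjective P)
    (hPconn : ∀ k : Fin ν, (G.induce {v | P v = k}).Connected)
    (O : Finset (V × V))
    (hO : ∀ p ∈ O, G.Adj p.1 p.2 ∧ P p.1 ≠ P p.2)
    (hOorient : ∀ i j, G.Adj i j → P i ≠ P j → ((i, j) ∈ O ↔ (j, i) ∉ O))
    (ψ : V → ℝ) (lam : ℝ) (n : ℕ) (hn1 : 1 ≤ n) (hn2 : n ≤ Fintype.card V)
    (heig : (signedLaplacian G w (partSgn P)).mulVec ψ = lam • ψ)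
    (hψnz : ∀ v, ψ v ≠ 0)
    (hsimple : IsSimpleEigenvalue (signedLaplacian G w (partSgn P)) lam)
    (hlam : lam = nthEigenvalue (signedLaplacian G w (partSgn P)) n)
    (hnodal : ∀ i j, G.Adj i j → 0 < ψ i * ψ j) :
    (∀ p ∈ O, 0 < ψ p.2 / ψ p.1) ∧
    (∀ k : Fin ν,
      (blockMatrix (paramMatrix G w P O fun p => ψ p.2 / ψ p.1) P k).mulVec
          (fun v => ψ v.1) = lam • (fun v : {v : V // P v = k} => ψ v.1) ∧
      lam1Block (paramMatrix G w P O fun p => ψ p.2 / ψ p.1) P k = lam) ∧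
    IsEquipartition G w P O (fun p => ψ p.2 / ψ p.1) ∧
    PartitionEnergy G w P O (fun p => ψ p.2 / ψ p.1) = lam := by
  classical
  set α : V × V → ℝ := fun p => ψ p.2 / ψ p.1 with hα
  have hαpos : ∀ p ∈ O, 0 < ψ p.2 / ψ p.1 := by
    intro p hp
    have h := hnodal p.1 p.2 (hO p hp).1
    rcases mul_pos_iff.mp h with ⟨h1, h2⟩ | ⟨h1, h2⟩
    · exact div_pos h2 h1
    · exact div_pos_of_neg_of_neg h2 h1
  set M : Matrix V V ℝ := paramMatrix G w P O α with hM
  have hMapply : ∀ i j, M i j = signedLaplacian G w (partSgn P) i j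
      + ∑ p ∈ O, w p.1 p.2 * Bmat p.1 p.2 (α p) i j := by
    intro i j
    simp [hM, paramMatrix, Matrix.add_apply, Matrix.sum_apply, Matrix.smul_apply, smul_eq_mul]
  have hBrow : ∀ p ∈ O, ∀ x, ∑ y, Bmat p.1 p.2 (α p) x y * ψ y = 0 := by
    rintro ⟨i, j⟩ hp x
    have hadj := (hO _ hp).1
    have hne : i ≠ j := hadj.ne
    have hp1 := hψnz i; have hp2 := hψnz j
    have hav : α (i, j) = ψ j / ψ i := rfl
    have hsub : ∑ y, Bmat i j (α (i, j)) x y * ψ y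
        = ∑ y ∈ ({i, j} : Finset V), Bmat i j (α (i, j)) x y * ψ y := by
      refine (Finset.sum_subset (Finset.subset_univ _) ?_).symm
      intro y _ hy
      simp only [Finset.mem_insert, Finset.mem_singleton, not_or] at hy
      simp [Bmat, hy.1, hy.2]
    show ∑ y, Bmat i j (α (i, j)) x y * ψ y = 0
    rw [hsub, Finset.sum_pair hne]
    by_cases hxi : x = i
    · subst hxi
      have e1 : Bmat x j (α (x, j)) x x = α (x, j) := by simp [Bmat]
      have e2 : Bmat x j (α (x, j)) x j = -1 := by simp [Bmat, hne, Ne.symm hne]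
      rw [e1, e2, hav]
      field_simp
      ring
    · by_cases hxj : x = j
      · subst hxj
        have e1 : Bmat i x (α (i, x)) x i = -1 := by simp [Bmat, hne, Ne.symm hne]
        have e2 : Bmat i x (α (i, x)) x x = (α (i, x))⁻¹ := by simp [Bmat, Ne.symm hne]
        rw [e1, e2, hav, inv_div]
        field_simp
        ring
      · simp [Bmat, hxi, hxj]
  have heigM : M.mulVec ψ = lam • ψ := by
    funext x
    have h1 : (M.mulVec ψ) x = (∑ y, signedLaplacian G w (partSgn P) x y * ψ y)
        + ∑ p ∈ O, ∑ y, (w p.1 p.2 * Bmat p.1 p.2 (α p) x y) * ψ y := by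
      have : ∀ y, M x y * ψ y = signedLaplacian G w (partSgn P) x y * ψ y
          + ∑ p ∈ O, (w p.1 p.2 * Bmat p.1 p.2 (α p) x y) * ψ y := by
        intro y
        rw [hMapply, add_mul, Finset.sum_mul]
      show ∑ y, M x y * ψ y = _
      rw [Finset.sum_congr rfl fun y _ => this y, Finset.sum_add_distrib, Finset.sum_comm]
    have h2 : ∀ p ∈ O, ∑ y, (w p.1 p.2 * Bmat p.1 p.2 (α p) x y) * ψ y = 0 := by
      intro p hp
      have : ∑ y, (w p.1 p.2 * Bmat p.1 p.2 (α p) x y) * ψ y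
          = w p.1 p.2 * ∑ y, Bmat p.1 p.2 (α p) x y * ψ y := by
        rw [Finset.mul_sum]
        exact Finset.sum_congr rfl fun y _ => by ring
      rw [this, hBrow p hp x, mul_zero]
    have h3 := congrFun heig x
    simp only [Matrix.mulVec, dotProduct] at h3
    show (M.mulVec ψ) x = lam * ψ x
    rw [h1, Finset.sum_eq_zero h2, add_zero, h3]
    simp
  have hMoff : ∀ i j, P i ≠ P j → M i j = 0 := by
    intro i j hPij
    have hij : i ≠ j := fun h => hPij (by rw [h])
    rw [hMapply]
    by_cases hadj : G.Adj i j
    · have hsL : signedLaplacian G w (partSgn P) i j = w i j := by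
        simp [signedLaplacian, Matrix.of_apply, hij, hadj, partSgn, hPij]
      by_cases hij' : (i, j) ∈ O
      · have hji : (j, i) ∉ O := (hOorient i j hadj hPij).mp hij'
        have hsum : ∑ p ∈ O, w p.1 p.2 * Bmat p.1 p.2 (α p) i j = w i j * (-1) := by
          rw [Finset.sum_eq_single_of_mem (i, j) hij']
          · have : Bmat i j (α (i, j)) i j = -1 := by simp [Bmat, hij, Ne.symm hij]
            rw [this]
          · rintro ⟨b1, b2⟩ hb hbne
            have h1 : ¬(i = b1 ∧ j = b2) := by rintro ⟨rfl, rfl⟩; exact hbne rfl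
            have h2 : ¬(i = b2 ∧ j = b1) := by rintro ⟨rfl, rfl⟩; exact hji hb
            rw [Bmat_apply_zero _ hij h1 h2, mul_zero]
        rw [hsL, hsum]; ring
      · have hji : (j, i) ∈ O := by
          by_contra h
          exact hij' ((hOorient i j hadj hPij).mpr h)
        have hsum : ∑ p ∈ O, w p.1 p.2 * Bmat p.1 p.2 (α p) i j = w j i * (-1) := by
          rw [Finset.sum_eq_single_of_mem (j, i) hji]
          · have : Bmat j i (α (j, i)) i j = -1 := by simp [Bmat, hij, Ne.symm hij]
            rw [this]
          · rintro ⟨b1, b2⟩ hb hbne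
            have h1 : ¬(i = b1 ∧ j = b2) := by rintro ⟨rfl, rfl⟩; exact hij' hb
            have h2 : ¬(i = b2 ∧ j = b1) := by rintro ⟨rfl, rfl⟩; exact hbne rfl
            rw [Bmat_apply_zero _ hij h1 h2, mul_zero]
        rw [hsL, hsum, hwsymm j i]; ring
    · have hsL : signedLaplacian G w (partSgn P) i j = 0 := by
        simp [signedLaplacian, Matrix.of_apply, hij, hadj]
      have hsum : ∑ p ∈ O, w p.1 p.2 * Bmat p.1 p.2 (α p) i j = 0 := by
        refine Finset.sum_eq_zero ?_
        rintro ⟨b1, b2⟩ hb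
        have hbadj := (hO _ hb).1
        have h1 : ¬(i = b1 ∧ j = b2) := by rintro ⟨rfl, rfl⟩; exact hadj hbadj
        have h2 : ¬(i = b2 ∧ j = b1) := by rintro ⟨rfl, rfl⟩; exact hadj hbadj.symm
        rw [Bmat_apply_zero _ hij h1 h2, mul_zero]
      rw [hsL, hsum, add_zero]
  have hMsame : ∀ i j, i ≠ j → P i = P j → M i j = if G.Adj i j then -(w i j) else 0 := by
    intro i j hij hPij
    rw [hMapply]
    have hsum : ∑ p ∈ O, w p.1 p.2 * Bmat p.1 p.2 (α p) i j = 0 := by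
      refine Finset.sum_eq_zero ?_
      rintro ⟨b1, b2⟩ hb
      have hPb := (hO _ hb).2
      have h1 : ¬(i = b1 ∧ j = b2) := by rintro ⟨rfl, rfl⟩; exact hPb hPij
      have h2 : ¬(i = b2 ∧ j = b1) := by rintro ⟨rfl, rfl⟩; exact hPb hPij.symm
      rw [Bmat_apply_zero _ hij h1 h2, mul_zero]
    rw [hsum, add_zero]
    by_cases hadj : G.Adj i j
    · simp [signedLaplacian, Matrix.of_apply, hij, hadj, partSgn, hPij]
    · simp [signedLaplacian, Matrix.of_apply, hij, hadj]
  have hMsymm : ∀ i j, M i j = M j i := by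
    intro i j
    rcases eq_or_ne i j with rfl | hij
    · rfl
    · rw [hMapply, hMapply]
      have hadj' : ¬G.Adj j i ↔ ¬G.Adj i j := by rw [G.adj_comm]
      congr 1
      · by_cases hadj : G.Adj i j
        · have hps : partSgn P i j = partSgn P j i := by simp [partSgn, eq_comm]
          simp only [signedLaplacian, Matrix.of_apply, if_neg hij, if_neg (Ne.symm hij),
            if_pos hadj, if_pos hadj.symm]
          rw [hps, hwsymm]
        · simp only [signedLaplacian, Matrix.of_apply, if_neg hij, if_neg (Ne.symm hij),
            if_neg hadj, if_neg (hadj'.mpr hadj)]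
      · exact Finset.sum_congr rfl fun p _ => by rw [Bmat_symm]
  have hblock : ∀ k : Fin ν,
      (blockMatrix M P k).mulVec (fun v => ψ v.1)
        = lam • (fun v : {v : V // P v = k} => ψ v.1) := by
    intro k
    funext v
    have hv := v.2
    have h1 : ∑ u : {v : V // P v = k}, M v.1 u.1 * ψ u.1
        = ∑ u ∈ Finset.univ.filter (fun u => P u = k), M v.1 u * ψ u :=
      (Finset.sum_subtype (Finset.univ.filter (fun u => P u = k))
        (fun x => by simp [Finset.mem_filter]) (fun u => M v.1 u * ψ u)).symm
    have h2 : ∑ u ∈ Finset.univ.filter (fun u => P u = k), M v.1 u * ψ u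
        = ∑ u, M v.1 u * ψ u := by
      refine Finset.sum_filter_of_ne fun u _ hne => ?_
      by_contra hPx
      exact hne (by rw [hMoff v.1 u (fun h => hPx (h.symm.trans hv)), zero_mul])
    have h3 := congrFun heigM v.1
    calc (blockMatrix M P k).mulVec (fun v => ψ v.1) v
        = ∑ u : {v : V // P v = k}, M v.1 u.1 * ψ u.1 := by
          simp [Matrix.mulVec, dotProduct, blockMatrix, Matrix.submatrix_apply]
      _ = ∑ u, M v.1 u * ψ u := by rw [h1, h2]
      _ = lam * ψ v.1 := by
          simpa [Matrix.mulVec, dotProduct] using h3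
      _ = (lam • fun v : {v : V // P v = k} => ψ v.1) v := by simp
  have hherm : ∀ k, (blockMatrix M P k).IsHermitian := by
    intro k
    exact Matrix.ext fun i j => by
      simp [Matrix.conjTranspose_apply, blockMatrix, Matrix.submatrix_apply, hMsymm j.1 i.1]
  have hquadk : ∀ (k : Fin ν) (x : {v : V // P v = k} → ℝ),
      lam * (x ⬝ᵥ x) ≤ x ⬝ᵥ (blockMatrix M P k).mulVec x := by
    intro k x
    set C : Matrix {v : V // P v = k} {v : V // P v = k} ℝ :=
      blockMatrix M P k - lam • (1 : Matrix {v : V // P v = k} {v : V // P v = k} ℝ) with hC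
    have hCsym : ∀ i j, C i j = C j i := by
      intro i j
      rcases eq_or_ne i j with rfl | hij
      · rfl
      · simp [hC, Matrix.sub_apply, Matrix.smul_apply, blockMatrix, Matrix.submatrix_apply,
          hMsymm i.1 j.1, Matrix.one_apply_ne hij, Matrix.one_apply_ne (Ne.symm hij)]
    have hCker : C.mulVec (fun v => ψ v.1) = 0 := by
      rw [hC, Matrix.sub_mulVec, hblock k, Matrix.smul_mulVec, Matrix.one_mulVec, sub_self]
    have hCoff : ∀ i j, i ≠ j → C i j * (ψ i.1 * ψ j.1) ≤ 0 := by
      intro i j hij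
      have hij' : i.1 ≠ j.1 := fun h => hij (Subtype.ext h)
      have hPij : P i.1 = P j.1 := i.2.trans j.2.symm
      have hentry : C i j = if G.Adj i.1 j.1 then -(w i.1 j.1) else 0 := by
        simp [hC, Matrix.sub_apply, Matrix.smul_apply, Matrix.one_apply_ne hij, blockMatrix,
          Matrix.submatrix_apply, hMsame i.1 j.1 hij' hPij]
      rw [hentry]
      by_cases hadj : G.Adj i.1 j.1
      · rw [if_pos hadj]
        have h1 := hwpos _ _ hadj
        have h2 := hnodal _ _ hadj
        nlinarith
      · rw [if_neg hadj, zero_mul]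
    have hq := quad_nonneg C hCsym (fun v => ψ v.1) (fun v => hψnz v.1) hCker hCoff x
    have hexp : x ⬝ᵥ C.mulVec x = x ⬝ᵥ (blockMatrix M P k).mulVec x - lam * (x ⬝ᵥ x) := by
      rw [hC, Matrix.sub_mulVec, dotProduct_sub, Matrix.smul_mulVec,
        Matrix.one_mulVec, dotProduct_smul]
      rfl
    linarith [hexp ▸ hq]
  have hψk0 : ∀ k, (fun v : {v : V // P v = k} => ψ v.1) ≠ 0 := by
    intro k h
    obtain ⟨v, hv⟩ := hPsurj k
    exact hψnz v (congrFun h ⟨v, hv⟩)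
  have hNE : ∀ k, Nonempty {v : V // P v = k} := fun k =>
    (hPsurj k).elim fun v hv => ⟨⟨v, hv⟩⟩
  have hlamk : ∀ k, lam1Block M P k = lam := by
    intro k
    have := hNE k
    exact nthEig_one_eq _ (hherm k) lam _ (hψk0 k) (hblock k) (hquadk k)
  have hNEν : Nonempty (Fin ν) := ⟨P hGconn.nonempty.some⟩
  refine ⟨hαpos, fun k => ⟨hblock k, hlamk k⟩, fun k l => by rw [hlamk k, hlamk l], ?_⟩
  show ⨆ k : Fin ν, lam1Block M P k = lam
  simp only [hlamk]
  exact ciSup_const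

end
end

section
/- Let P be a ν-partition of G with ν ≥ 2. If α* ∈ ℝ^{∂P} has all entries positive and is a local minimum of the map α ↦ Λ(P,α) on the set of parameter vectors with all entries positive, then (P,α*) is an equipartition, i.e. λ_1(G_1,α*) = λ_1(G_2,α*) = … = λ_1(G_ν,α*). -/
open Matrix Finset

noncomputable section

variable {V : Type*}

namespace Stmt9Aux

variable {W : Type*} [Fintype W] [DecidableEq W]

/-- coordinates wrt eigenbasis -/
lemma dot_dot (A : Matrix W W ℝ) (hA : A.IsHermitian) (x : W → ℝ) :
    x ⬝ᵥ (A *ᵥ x) = ∑ i, hA.eigenvalues i * ((star (hA.eigenvectorUnitary : Matrix W W ℝ)) *ᵥ x) i ^ 2 := by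
  set U := (hA.eigenvectorUnitary : Matrix W W ℝ) with hU
  have h1 : A = U * Matrix.diagonal hA.eigenvalues * star U := by
    have := hA.spectral_theorem
    simpa using this
  set y := star U *ᵥ x with hy
  have h2 : x ⬝ᵥ (A *ᵥ x) = y ⬝ᵥ (Matrix.diagonal hA.eigenvalues *ᵥ y) := by
    conv_lhs => rw [h1]
    rw [← mulVec_mulVec, ← mulVec_mulVec, dotProduct_mulVec]
    congr 1
    rw [hy]
    ext i
    simp [Matrix.vecMul, Matrix.mulVec, dotProduct, star, mul_comm]
  rw [h2]
  simp only [dotProduct, Matrix.mulVec_diagonal, pow_two]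
  exact Finset.sum_congr rfl fun i _ => by ring


lemma dot_self_eq (A : Matrix W W ℝ) (hA : A.IsHermitian) (x : W → ℝ) :
    x ⬝ᵥ x = ∑ i, ((star (hA.eigenvectorUnitary : Matrix W W ℝ)) *ᵥ x) i ^ 2 := by
  set U := (hA.eigenvectorUnitary : Matrix W W ℝ) with hU
  have hUU : U * star U = 1 := (Matrix.mem_unitaryGroup_iff).mp hA.eigenvectorUnitary.2
  set y := star U *ᵥ x with hy
  have : x ⬝ᵥ x = x ⬝ᵥ ((U * star U) *ᵥ x) := by rw [hUU, Matrix.one_mulVec]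
  rw [this, ← Matrix.mulVec_mulVec, Matrix.dotProduct_mulVec]
  have hvm : Matrix.vecMul x U = y := by
    ext i
    simp [Matrix.vecMul, Matrix.mulVec, dotProduct, star, mul_comm, hy]
  rw [hvm]
  simp [dotProduct, pow_two, ← hy]

/-- Rayleigh lower bound. -/
lemma rayleigh_lb (A : Matrix W W ℝ) (hA : A.IsHermitian) (c : ℝ)
    (hc : ∀ i, c ≤ hA.eigenvalues i) (x : W → ℝ) :
    c * (x ⬝ᵥ x) ≤ x ⬝ᵥ (A *ᵥ x) := by
  rw [dot_dot A hA x, dot_self_eq A hA x, Finset.mul_sum]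
  refine Finset.sum_le_sum fun i _ => ?_
  exact mul_le_mul_of_nonneg_right (hc i) (sq_nonneg _)

/-- A minimizer of the Rayleigh quotient is an eigenvector. -/
lemma rayleigh_min_eigenvector (A : Matrix W W ℝ) (hA : A.IsHermitian) (c : ℝ)
    (hc : ∀ i, c ≤ hA.eigenvalues i) (x : W → ℝ)
    (hx : x ⬝ᵥ (A *ᵥ x) = c * (x ⬝ᵥ x)) : A *ᵥ x = c • x := by
  set U := (hA.eigenvectorUnitary : Matrix W W ℝ) with hU
  have hUU : U * star U = 1 := (Matrix.mem_unitaryGroup_iff).mp hA.eigenvectorUnitary.2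
  set y := star U *ᵥ x with hy
  have key : ∑ i, (hA.eigenvalues i - c) * y i ^ 2 = 0 := by
    have h1 := dot_dot A hA x
    have h2 := dot_self_eq A hA x
    rw [h1, h2, Finset.mul_sum] at hx
    have := sub_eq_zero.mpr hx
    rw [← Finset.sum_sub_distrib] at this
    rw [← this]
    exact Finset.sum_congr rfl fun i _ => by ring
  have hterm : ∀ i ∈ Finset.univ, (hA.eigenvalues i - c) * y i ^ 2 = 0 := by
    refine (Finset.sum_eq_zero_iff_of_nonneg fun i _ => ?_).mp key
    exact mul_nonneg (by linarith [hc i]) (sq_nonneg _)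
  have hDy : Matrix.diagonal hA.eigenvalues *ᵥ y = c • y := by
    ext i
    have := hterm i (Finset.mem_univ i)
    rcases mul_eq_zero.mp this with h | h
    · simp [Matrix.mulVec_diagonal, sub_eq_zero.mp h]
    · have : y i = 0 := by
        have := sq_eq_zero_iff.mp h; exact this
      simp [Matrix.mulVec_diagonal, this]
  have h1 : A = U * Matrix.diagonal hA.eigenvalues * star U := by
    simpa using hA.spectral_theorem
  have hxy : U *ᵥ y = x := by
    rw [hy, Matrix.mulVec_mulVec, hUU, Matrix.one_mulVec]
  have step1 : A *ᵥ x = U *ᵥ (Matrix.diagonal hA.eigenvalues *ᵥ (star U *ᵥ x)) := by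
    conv_lhs => rw [h1]
    rw [← Matrix.mulVec_mulVec, ← Matrix.mulVec_mulVec]
  rw [step1, ← hy, hDy, Matrix.mulVec_smul, hxy]

/-- The first eigenvalue via `nthEigenvalue` is the minimum of the eigenvalues. -/
lemma nthEigenvalue_one_le [Nonempty W] (A : Matrix W W ℝ) (hA : A.IsHermitian) :
    (∀ i, nthEigenvalue A 1 ≤ hA.eigenvalues i) ∧
      (∃ i, nthEigenvalue A 1 = hA.eigenvalues i) := by
  have hcard : (1 : ℕ) - 1 < Fintype.card W := by simp [Fintype.card_pos]
  have h : A.IsHermitian ∧ (1:ℕ) - 1 < Fintype.card W := ⟨hA, hcard⟩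
  rw [nthEigenvalue, dif_pos h]
  set f : Fin (Fintype.card W) → ℝ := fun i => hA.eigenvalues ((Fintype.equivFin W).symm i) with hf
  constructor
  · intro i
    have hmono := Tuple.monotone_sort f
    have h0 : (⟨0, hcard⟩ : Fin (Fintype.card W)) ≤ (Tuple.sort f).symm ((Fintype.equivFin W) i) :=
      Fin.zero_le _
    have := hmono h0
    simp only [Function.comp_apply, Equiv.apply_symm_apply] at this
    simpa [hf] using this
  · exact ⟨(Fintype.equivFin W).symm (Tuple.sort f ⟨0, hcard⟩), by simp [hf]⟩

/-- Variational characterization of the smallest eigenvalue. -/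
lemma lam1_le_rayleigh [Nonempty W] (A : Matrix W W ℝ) (hA : A.IsHermitian) (x : W → ℝ)
    (hx : x ⬝ᵥ x = 1) : nthEigenvalue A 1 ≤ x ⬝ᵥ (A *ᵥ x) := by
  have := rayleigh_lb A hA _ (nthEigenvalue_one_le A hA).1 x
  rwa [hx, mul_one] at this

/-- There is a unit eigenvector for the smallest eigenvalue. -/
lemma exists_unit_eigenvector [Nonempty W] (A : Matrix W W ℝ) (hA : A.IsHermitian) :
    ∃ u : W → ℝ, u ⬝ᵥ u = 1 ∧ A *ᵥ u = nthEigenvalue A 1 • u := by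
  obtain ⟨i, hi⟩ := (nthEigenvalue_one_le A hA).2
  refine ⟨hA.eigenvectorBasis i, ?_, ?_⟩
  · have hn := hA.eigenvectorBasis.orthonormal.1 i
    have h3 : Real.sqrt (∑ j, ‖hA.eigenvectorBasis i j‖ ^ 2) = 1 := by
      rw [← EuclideanSpace.norm_eq]; exact hn
    have h4 : ∑ j, ‖hA.eigenvectorBasis i j‖ ^ 2 = 1 := by
      have := congrArg (fun r => r ^ 2) h3
      simpa [Real.sq_sqrt (Finset.sum_nonneg fun j _ => sq_nonneg _)] using this
    simpa [dotProduct, Real.norm_eq_abs, sq_abs, pow_two] using h4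
  · rw [hi]; exact hA.mulVec_eigenvectorBasis i

section SecC

variable [Fintype V] [DecidableEq V]

lemma reachable_closed {W : Type*} {H : SimpleGraph W} (S : Set W)
    (hcl : ∀ a b, H.Adj a b → a ∈ S → b ∈ S) {a b : W} (h : H.Reachable a b) (ha : a ∈ S) :
    b ∈ S := by
  obtain ⟨p⟩ := h
  induction p with
  | nil => exact ha
  | cons hadj _ ih => exact ih (hcl _ _ hadj ha)

lemma paramMatrix_isHermitian (G : SimpleGraph V) [DecidableRel G.Adj] (w : V → V → ℝ)
    (hwsymm : ∀ i j, w i j = w j i) {ν : ℕ} (P : V → Fin ν) (O : Finset (V × V))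
    (α : V × V → ℝ) : (paramMatrix G w P O α).IsHermitian := by
  rw [Matrix.IsHermitian, Matrix.conjTranspose_eq_transpose_of_trivial]
  ext i j
  simp only [Matrix.transpose_apply, paramMatrix, Matrix.add_apply, signedLaplacian,
    Matrix.of_apply]
  congr 1
  · by_cases h : i = j
    · subst h; rfl
    · rw [if_neg h, if_neg (Ne.symm h)]
      by_cases ha : G.Adj i j
      · rw [if_pos (G.adj_symm ha), if_pos ha, partSgn, partSgn, hwsymm j i]
        by_cases hp : P i = P j
        · rw [if_pos hp, if_pos hp.symm]
        · rw [if_neg hp, if_neg (fun hh => hp hh.symm)]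
      · rw [if_neg (fun hh => ha (G.adj_symm hh)), if_neg ha]
  · rw [Matrix.sum_apply, Matrix.sum_apply]
    refine Finset.sum_congr rfl fun p _ => ?_
    simp only [Matrix.smul_apply, Bmat, Matrix.of_apply, smul_eq_mul]
    congr 1
    by_cases h1 : j = p.1 <;> by_cases h2 : i = p.1 <;> by_cases h3 : j = p.2 <;>
      by_cases h4 : i = p.2 <;> simp [h1, h2, h3, h4]

lemma blockMatrix_isHermitian {M : Matrix V V ℝ} (hM : M.IsHermitian) {ν : ℕ}
    (P : V → Fin ν) (k : Fin ν) : (blockMatrix M P k).IsHermitian := by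
  rw [Matrix.IsHermitian, Matrix.conjTranspose_eq_transpose_of_trivial]
  ext a b
  simp only [Matrix.transpose_apply, blockMatrix, Matrix.submatrix_apply]
  have h := congrFun (congrFun hM.eq (b : V)) (a : V)
  rw [Matrix.conjTranspose_apply] at h
  simpa using h.symm

/-- Off-diagonal entries of a block of the parameter matrix. -/
lemma block_offdiag (G : SimpleGraph V) [DecidableRel G.Adj] (w : V → V → ℝ)
    {ν : ℕ} (P : V → Fin ν) (O : Finset (V × V))
    (hO : ∀ p ∈ O, G.Adj p.1 p.2 ∧ P p.1 ≠ P p.2)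
    (α : V × V → ℝ) (k : Fin ν) (a b : {v : V // P v = k}) (hab : a ≠ b) :
    blockMatrix (paramMatrix G w P O α) P k a b = if G.Adj ↑a ↑b then -(w ↑a ↑b) else 0 := by
  have hab' : (a : V) ≠ (b : V) := fun h => hab (Subtype.ext h)
  have hPab : P (a : V) = P (b : V) := a.2.trans b.2.symm
  simp only [blockMatrix, Matrix.submatrix_apply, paramMatrix, Matrix.add_apply,
    signedLaplacian, Matrix.of_apply, if_neg hab']
  have hz : ∀ p ∈ (Finset.univ : Finset (V × V)), p ∈ O →
      (w p.1 p.2 • Bmat p.1 p.2 (α p)) (a : V) (b : V) = 0 := by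
    intro p _ hp
    have hPp := (hO p hp).2
    simp only [Matrix.smul_apply, Bmat, Matrix.of_apply, smul_eq_mul]
    rw [if_neg (fun hh => hab' (hh.1.trans hh.2.symm)),
      if_neg (fun hh => hab' (hh.1.trans hh.2.symm)),
      if_neg (fun hh => hPp (by rcases hh with ⟨h1, h2⟩ | ⟨h1, h2⟩
                                · rw [← h1, ← h2, hPab]
                                · rw [← h1, ← h2, hPab])), mul_zero]
  have hsum : (∑ p ∈ O, w p.1 p.2 • Bmat p.1 p.2 (α p)) (a : V) (b : V) = 0 := by
    rw [Matrix.sum_apply]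
    exact Finset.sum_eq_zero fun p hp => hz p (Finset.mem_univ p) hp
  rw [hsum, add_zero]
  by_cases hadj : G.Adj ↑a ↑b
  · rw [if_pos hadj, if_pos hadj, partSgn, if_pos hPab, one_mul]
  · rw [if_neg hadj, if_neg hadj]

/-- The perturbation of a block is diagonal. -/
lemma block_diff (G : SimpleGraph V) [DecidableRel G.Adj] (w : V → V → ℝ)
    {ν : ℕ} (P : V → Fin ν) (O : Finset (V × V))
    (hO : ∀ p ∈ O, G.Adj p.1 p.2 ∧ P p.1 ≠ P p.2)
    (α β : V × V → ℝ) (k : Fin ν) :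
    blockMatrix (paramMatrix G w P O α) P k = blockMatrix (paramMatrix G w P O β) P k +
      Matrix.diagonal (fun v : {v : V // P v = k} => ∑ p ∈ O, w p.1 p.2 *
        ((if (v : V) = p.1 then α p - β p else 0) +
          (if (v : V) = p.2 then (α p)⁻¹ - (β p)⁻¹ else 0))) := by
  ext a b
  by_cases hab : a = b
  · subst hab
    simp only [blockMatrix, Matrix.submatrix_apply, paramMatrix, Matrix.add_apply,
      Matrix.diagonal_apply_eq, Matrix.sum_apply]
    rw [add_assoc, ← Finset.sum_add_distrib]
    congr 1
    refine Finset.sum_congr rfl fun p hp => ?_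
    have hp12 : p.1 ≠ p.2 := fun h => (hO p hp).2 (by rw [h])
    simp only [Matrix.smul_apply, Bmat, Matrix.of_apply, smul_eq_mul]
    by_cases h1 : (a : V) = p.1 <;> by_cases h2 : (a : V) = p.2
    · exact absurd (h1.symm.trans h2) hp12
    · simp [h1, h2, hp12]; try ring
    · simp [h1, h2, Ne.symm hp12]; try ring
    · simp [h1, h2]
  · have hab' : (a : V) ≠ (b : V) := fun h => hab (Subtype.ext h)
    simp only [Matrix.add_apply, Matrix.diagonal_apply_ne _ hab, add_zero]
    rw [block_offdiag G w P O hO α k a b hab, block_offdiag G w P O hO β k a b hab]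

lemma dot_diagonal_mulVec {W : Type*} [Fintype W] [DecidableEq W] (d u : W → ℝ) :
    u ⬝ᵥ (Matrix.diagonal d *ᵥ u) = ∑ v, d v * u v ^ 2 := by
  simp only [dotProduct, Matrix.mulVec_diagonal, pow_two]
  exact Finset.sum_congr rfl fun i _ => by ring

/-- Existence of a strictly positive unit first eigenvector on each block. -/
lemma exists_pos_eigvec (G : SimpleGraph V) [DecidableRel G.Adj] (w : V → V → ℝ)
    (hwsymm : ∀ i j, w i j = w j i) (hwpos : ∀ i j, G.Adj i j → 0 < w i j)
    {ν : ℕ} (P : V → Fin ν) (O : Finset (V × V))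
    (hO : ∀ p ∈ O, G.Adj p.1 p.2 ∧ P p.1 ≠ P p.2) (α : V × V → ℝ) (k : Fin ν)
    [Nonempty {v : V // P v = k}]
    (hconn : (G.induce {v : V | P v = k}).Connected) :
    ∃ u : {v : V // P v = k} → ℝ, u ⬝ᵥ u = 1 ∧ (∀ v, 0 < u v) ∧
      (blockMatrix (paramMatrix G w P O α) P k) *ᵥ u
        = lam1Block (paramMatrix G w P O α) P k • u := by
  set A := blockMatrix (paramMatrix G w P O α) P k with hA
  have hH : A.IsHermitian := blockMatrix_isHermitian (paramMatrix_isHermitian G w hwsymm P O α) P k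
  have hoff : ∀ a b : {v : V // P v = k}, a ≠ b → A a b ≤ 0 := by
    intro a b hab
    rw [hA, block_offdiag G w P O hO α k a b hab]
    by_cases h : G.Adj ↑a ↑b
    · rw [if_pos h]; linarith [hwpos _ _ h]
    · rw [if_neg h]
  set lam := lam1Block (paramMatrix G w P O α) P k with hlam
  have hlam' : lam = nthEigenvalue A 1 := rfl
  obtain ⟨u, hu1, hu2⟩ := exists_unit_eigenvector A hH
  set vb : {v : V // P v = k} → ℝ := fun x => |u x| with hvb
  have hvb1 : vb ⬝ᵥ vb = 1 := by
    rw [← hu1]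
    simp only [dotProduct, hvb, abs_mul_abs_self]
  have hAuu : u ⬝ᵥ (A *ᵥ u) = nthEigenvalue A 1 := by
    rw [hu2, dotProduct_smul, smul_eq_mul, hu1, mul_one]
  have hle : vb ⬝ᵥ (A *ᵥ vb) ≤ u ⬝ᵥ (A *ᵥ u) := by
    simp only [dotProduct, Matrix.mulVec, Finset.mul_sum]
    refine Finset.sum_le_sum fun x _ => Finset.sum_le_sum fun y _ => ?_
    by_cases hxy : x = y
    · subst hxy
      have : vb x * (A x x * vb x) = A x x * (vb x * vb x) := by ring
      rw [this, hvb, abs_mul_abs_self]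
      have : u x * (A x x * u x) = A x x * (u x * u x) := by ring
      rw [this]
    · have h1 : A x y ≤ 0 := hoff x y hxy
      have h2 : u x * u y ≤ vb x * vb y := by
        rw [hvb]; calc u x * u y ≤ |u x * u y| := le_abs_self _
          _ = |u x| * |u y| := abs_mul _ _
      have : vb x * (A x y * vb y) = A x y * (vb x * vb y) := by ring
      rw [this]
      have : u x * (A x y * u y) = A x y * (u x * u y) := by ring
      rw [this]
      exact mul_le_mul_of_nonpos_left h2 h1
  have hge : nthEigenvalue A 1 ≤ vb ⬝ᵥ (A *ᵥ vb) := lam1_le_rayleigh A hH vb hvb1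
  have heq : vb ⬝ᵥ (A *ᵥ vb) = nthEigenvalue A 1 * (vb ⬝ᵥ vb) := by
    rw [hvb1, mul_one]
    linarith [hle, hge, hAuu]
  have hev : A *ᵥ vb = nthEigenvalue A 1 • vb :=
    rayleigh_min_eigenvector A hH _ (nthEigenvalue_one_le A hH).1 vb heq
  have hnonneg : ∀ x, 0 ≤ vb x := fun x => abs_nonneg _
  -- positivity via connectivity
  have hclosed : ∀ a b : {v : V // P v = k}, G.Adj ↑a ↑b → vb a = 0 → vb b = 0 := by
    intro a b hadj ha0
    have h0 : (A *ᵥ vb) a = 0 := by rw [hev]; simp [ha0]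
    have hsum : ∑ y, A a y * vb y = 0 := h0
    have hsplit : ∑ y ∈ (Finset.univ.erase a), A a y * vb y = 0 := by
      rw [← Finset.add_sum_erase _ _ (Finset.mem_univ a)] at hsum
      rw [ha0, mul_zero, zero_add] at hsum
      exact hsum
    have hterm := (Finset.sum_eq_zero_iff_of_nonpos (fun y hy => by
      have hya : y ≠ a := Finset.ne_of_mem_erase hy
      exact mul_nonpos_of_nonpos_of_nonneg (hoff a y (Ne.symm hya)) (hnonneg y))).mp hsplit
    have hb := hterm b (Finset.mem_erase.mpr ⟨fun h => (G.ne_of_adj hadj) (by rw [h]), Finset.mem_univ b⟩)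
    have hAab : A a b < 0 := by
      rw [hA, block_offdiag G w P O hO α k a b (fun h => (G.ne_of_adj hadj) (by rw [h])), if_pos hadj]
      linarith [hwpos _ _ hadj]
    rcases mul_eq_zero.mp hb with h | h
    · exact absurd h (ne_of_lt hAab)
    · exact h
  have hpos : ∀ x, 0 < vb x := by
    by_contra hc
    push_neg at hc
    obtain ⟨x0, hx0⟩ := hc
    have hx00 : vb x0 = 0 := le_antisymm hx0 (hnonneg x0)
    have hall : ∀ x, vb x = 0 := by
      intro x
      have hreach : (G.induce {v : V | P v = k}).Reachable x0 x := hconn.preconnected x0 x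
      refine reachable_closed {y : {v : V // P v = k} | vb y = 0} ?_ hreach hx00
      intro a b hadj ha
      exact hclosed a b hadj ha
    have : vb ⬝ᵥ vb = 0 := by
      simp only [dotProduct]
      exact Finset.sum_eq_zero fun x _ => by rw [hall x, mul_zero]
    rw [hvb1] at this
    exact one_ne_zero this
  exact ⟨vb, hvb1, hpos, by rw [← hlam'] at hev; exact hev⟩

/-- The quotient "part graph" on `Fin ν`. -/
def partGraph {ν : ℕ} (P : V → Fin ν) (O : Finset (V × V)) : SimpleGraph (Fin ν) where
  Adj k l := k ≠ l ∧ ∃ p ∈ O, (P p.1 = k ∧ P p.2 = l) ∨ (P p.1 = l ∧ P p.2 = k)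
  symm := by
    constructor
    rintro k l ⟨h1, p, hp, h2⟩
    exact ⟨h1.symm, p, hp, by tauto⟩
  loopless := ⟨fun k h => h.1 rfl⟩

lemma partGraph_connected (G : SimpleGraph V) [DecidableRel G.Adj] (hGconn : G.Connected)
    {ν : ℕ} (P : V → Fin ν) (hPsurj : Function.Surjective P) (O : Finset (V × V))
    (hOorient : ∀ i j, G.Adj i j → P i ≠ P j → ((i, j) ∈ O ↔ (j, i) ∉ O)) :
    (partGraph P O).Connected := by
  have hproj : ∀ i j : V, G.Reachable i j → (partGraph P O).Reachable (P i) (P j) := by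
    intro i j h
    obtain ⟨p⟩ := h
    induction p with
    | nil => exact SimpleGraph.Reachable.refl _
    | @cons a b c hadj q ih =>
      refine SimpleGraph.Reachable.trans ?_ ih
      by_cases hP : P a = P b
      · rw [hP]
      · refine SimpleGraph.Adj.reachable (show P a ≠ P b ∧ ∃ p ∈ O, (P p.1 = P a ∧ P p.2 = P b) ∨ (P p.1 = P b ∧ P p.2 = P a) from ⟨hP, ?_⟩)
        by_cases hmem : (a, b) ∈ O
        · exact ⟨(a, b), hmem, Or.inl ⟨rfl, rfl⟩⟩
        · have : (b, a) ∈ O := by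
            by_contra hba
            exact hmem ((hOorient a b hadj hP).mpr hba)
          exact ⟨(b, a), this, Or.inr ⟨rfl, rfl⟩⟩
  have : Nonempty V := hGconn.nonempty
  rw [SimpleGraph.connected_iff]
  refine ⟨fun k l => ?_, ⟨P (Classical.arbitrary V)⟩⟩
  obtain ⟨i, rfl⟩ := hPsurj k
  obtain ⟨j, rfl⟩ := hPsurj l
  exact hproj i j (hGconn i j)

lemma sum_ite_coe {ν : ℕ} (P : V → Fin ν) (k : Fin ν) (x : V) (f : {v : V // P v = k} → ℝ) :
    ∑ v : {v : V // P v = k}, (if (v : V) = x then f v else 0)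
      = if hx : P x = k then f ⟨x, hx⟩ else 0 := by
  by_cases hx : P x = k
  · rw [dif_pos hx, Finset.sum_eq_single (⟨x, hx⟩ : {v : V // P v = k})]
    · simp
    · intro b _ hb
      rw [if_neg (fun hh => hb (Subtype.ext hh))]
    · simp
  · rw [dif_neg hx]
    refine Finset.sum_eq_zero fun v _ => ?_
    rw [if_neg (fun hh => hx (by rw [← hh]; exact v.2))]

/-- Rayleigh perturbation bound for blocks. -/
lemma lam1_perturb (G : SimpleGraph V) [DecidableRel G.Adj] (w : V → V → ℝ)
    (hwsymm : ∀ i j, w i j = w j i) {ν : ℕ} (P : V → Fin ν) (O : Finset (V × V))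
    (hO : ∀ p ∈ O, G.Adj p.1 p.2 ∧ P p.1 ≠ P p.2) (αs β : V × V → ℝ) (k : Fin ν)
    [Nonempty {v : V // P v = k}] (u : {v : V // P v = k} → ℝ) (hu1 : u ⬝ᵥ u = 1)
    (huev : (blockMatrix (paramMatrix G w P O αs) P k) *ᵥ u
      = lam1Block (paramMatrix G w P O αs) P k • u) :
    lam1Block (paramMatrix G w P O β) P k ≤ lam1Block (paramMatrix G w P O αs) P k
      + ∑ p ∈ O, w p.1 p.2 * ((if h : P p.1 = k then (β p - αs p) * u ⟨p.1, h⟩ ^ 2 else 0)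
          + (if h : P p.2 = k then ((β p)⁻¹ - (αs p)⁻¹) * u ⟨p.2, h⟩ ^ 2 else 0)) := by
  have hHβ : (blockMatrix (paramMatrix G w P O β) P k).IsHermitian :=
    blockMatrix_isHermitian (paramMatrix_isHermitian G w hwsymm P O β) P k
  have h1 : lam1Block (paramMatrix G w P O β) P k
      ≤ u ⬝ᵥ ((blockMatrix (paramMatrix G w P O β) P k) *ᵥ u) :=
    lam1_le_rayleigh _ hHβ u hu1
  refine h1.trans (le_of_eq ?_)
  rw [block_diff G w P O hO β αs k, Matrix.add_mulVec, dotProduct_add]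
  congr 1
  · rw [huev, dotProduct_smul, smul_eq_mul, hu1, mul_one]
  · rw [dot_diagonal_mulVec]
    have hswap : ∀ v : {v : V // P v = k},
        (∑ p ∈ O, w p.1 p.2 * ((if (v : V) = p.1 then β p - αs p else 0)
          + (if (v : V) = p.2 then (β p)⁻¹ - (αs p)⁻¹ else 0))) * u v ^ 2
        = ∑ p ∈ O, w p.1 p.2 * ((if (v : V) = p.1 then (β p - αs p) * u v ^ 2 else 0)
          + (if (v : V) = p.2 then ((β p)⁻¹ - (αs p)⁻¹) * u v ^ 2 else 0)) := by
      intro v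
      rw [Finset.sum_mul]
      refine Finset.sum_congr rfl fun p _ => ?_
      by_cases h1 : (v : V) = p.1 <;> by_cases h2 : (v : V) = p.2
      · have h12 : p.1 = p.2 := h1.symm.trans h2
        simp [h1, h2, h12]; try ring
      · have h12 : ¬ p.1 = p.2 := fun hh => h2 (h1.trans hh)
        have h21 : ¬ p.2 = p.1 := fun hh => h12 hh.symm
        simp [h1, h2, h12, h21]; try ring
      · have h12 : ¬ p.1 = p.2 := fun hh => h1 (h2.trans hh.symm)
        have h21 : ¬ p.2 = p.1 := fun hh => h12 hh.symm
        simp [h1, h2, h12, h21]; try ring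
      · simp [h1, h2]
    rw [Finset.sum_congr rfl fun v _ => hswap v, Finset.sum_comm]
    refine Finset.sum_congr rfl fun p _ => ?_
    rw [← Finset.mul_sum]
    congr 1
    rw [Finset.sum_add_distrib]
    congr 1
    · exact sum_ite_coe P k p.1 (fun v => (β p - αs p) * u v ^ 2)
    · exact sum_ite_coe P k p.2 (fun v => ((β p)⁻¹ - (αs p)⁻¹) * u v ^ 2)

lemma inv_diff_abs_bound {a b s m : ℝ} (hm : 0 < m) (ha : m ≤ a) (hb : m ≤ b)
    (hs : |a - b| ≤ s) : |a⁻¹ - b⁻¹| ≤ s / (m * m) := by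
  have ha0 : a ≠ 0 := ne_of_gt (lt_of_lt_of_le hm ha)
  have hb0 : b ≠ 0 := ne_of_gt (lt_of_lt_of_le hm hb)
  rw [inv_sub_inv ha0 hb0, abs_div, abs_mul]
  have h1 : |b - a| ≤ s := by rw [abs_sub_comm]; exact hs
  have h2 : m * m ≤ |a| * |b| := by
    rw [abs_of_pos (lt_of_lt_of_le hm ha), abs_of_pos (lt_of_lt_of_le hm hb)]
    exact mul_le_mul ha hb hm.le (by linarith)
  exact div_le_div₀ ((abs_nonneg _).trans h1) h1 (by positivity) h2

lemma inv_succ_ub {a s M : ℝ} (ha : 0 < a) (haM : a ≤ M) (hs : 0 < s) (hs1 : s ≤ 1) :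
    (a + s)⁻¹ - a⁻¹ ≤ -(s / (M * (M + 1))) := by
  have hM : 0 < M := lt_of_lt_of_le ha haM
  have has : 0 < a + s := by linarith
  have key : (a + s)⁻¹ - a⁻¹ = -(s / (a * (a + s))) := by
    rw [inv_sub_inv (ne_of_gt has) (ne_of_gt ha), show a - (a + s) = -s by ring, neg_div,
      mul_comm]
  rw [key, neg_le_neg_iff]
  apply div_le_div_of_nonneg_left hs.le (by positivity)
  · calc a * (a + s) ≤ M * (M + 1) := by nlinarith

end SecC

end Stmt9Aux


set_option maxHeartbeats 1600000

open Stmt9Aux in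
/-- A local minimum (over parameter vectors with positive entries on the
oriented boundary edges) of the partition energy `Λ(P, ·)` is an equipartition. -/
theorem stmt9 [Fintype V] [DecidableEq V] (G : SimpleGraph V) [DecidableRel G.Adj]
    (hGconn : G.Connected) (w : V → V → ℝ)
    (hwsymm : ∀ i j, w i j = w j i) (hwpos : ∀ i j, G.Adj i j → 0 < w i j)
    (hw0 : ∀ i j, ¬ G.Adj i j → w i j = 0)
    {ν : ℕ} (hν : 2 ≤ ν) (P : V → Fin ν) (hPsurj : Function.Surjective P)
    (hPconn : ∀ k : Fin ν, (G.induce {v | P v = k}).Connected)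
    (O : Finset (V × V))
    (hO : ∀ p ∈ O, G.Adj p.1 p.2 ∧ P p.1 ≠ P p.2)
    (hOorient : ∀ i j, G.Adj i j → P i ≠ P j → ((i, j) ∈ O ↔ (j, i) ∉ O))
    (αs : V × V → ℝ) (hpos : ∀ p ∈ O, 0 < αs p)
    (hmin : IsLocalMinOn (fun α => PartitionEnergy G w P O α)
      {α : V × V → ℝ | ∀ p ∈ O, 0 < α p} αs) :
    IsEquipartition G w P O αs := by
  classical
  by_contra hnEq
  unfold IsEquipartition at hnEq
  push_neg at hnEq
  obtain ⟨k1, l1, hkl⟩ := hnEq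
  have hνpos : 0 < ν := by omega
  haveI : Nonempty (Fin ν) := ⟨⟨0, hνpos⟩⟩
  haveI hNEV : Nonempty V := hGconn.nonempty
  have hNE : ∀ k : Fin ν, Nonempty {v : V // P v = k} := fun k =>
    ⟨⟨(hPsurj k).choose, (hPsurj k).choose_spec⟩⟩
  set lam : Fin ν → ℝ := fun k => lam1Block (paramMatrix G w P O αs) P k with hlamdef
  have hbdd : BddAbove (Set.range lam) := Set.Finite.bddAbove (Set.finite_range lam)
  set Lam : ℝ := ⨆ k, lam k with hLamdef
  have hle : ∀ k, lam k ≤ Lam := fun k => le_ciSup hbdd k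
  obtain ⟨k0, hk0⟩ := Finite.exists_max lam
  have hk0Lam : lam k0 = Lam := le_antisymm (hle k0) (ciSup_le hk0)
  set T : Finset (Fin ν) := Finset.univ.filter (fun k => lam k < Lam) with hTdef
  have hmemT : ∀ k, k ∈ T ↔ lam k < Lam := fun k => by simp [hTdef]
  have hnotT : ∀ k, k ∉ T → lam k = Lam := fun k hk =>
    le_antisymm (hle k) (not_lt.mp (fun h => hk ((hmemT k).mpr h)))
  have hk0T : k0 ∉ T := fun h => absurd hk0Lam (ne_of_lt ((hmemT k0).mp h))
  have hTne : T.Nonempty := by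
    rcases lt_or_ge (lam k1) Lam with h | h
    · exact ⟨k1, (hmemT k1).mpr h⟩
    · have h1 : lam k1 = Lam := le_antisymm (hle k1) h
      exact ⟨l1, (hmemT l1).mpr (lt_of_le_of_ne (hle l1) (fun h2 => hkl (h1.trans h2.symm)))⟩
  -- the part graph and the distance-to-T function
  set Q : SimpleGraph (Fin ν) := partGraph P O with hQdef
  have hQconn : Q.Connected := partGraph_connected G hGconn P hPsurj O hOorient
  set d : Fin ν → ℕ := fun k => (T.image (fun t => Q.dist k t)).min' (hTne.image _) with hddef
  have hdle : ∀ k, ∀ t ∈ T, d k ≤ Q.dist k t := fun k t ht =>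
    Finset.min'_le _ _ (Finset.mem_image_of_mem _ ht)
  have hdex : ∀ k, ∃ t ∈ T, d k = Q.dist k t := by
    intro k
    obtain ⟨x, hx, hxe⟩ := Finset.mem_image.mp (Finset.min'_mem (T.image (fun t => Q.dist k t)) (hTne.image _))
    exact ⟨x, hx, hxe.symm⟩
  have hd0 : ∀ k, k ∉ T → d k ≠ 0 := by
    intro k hk h0
    obtain ⟨t, ht, hte⟩ := hdex k
    rw [h0] at hte
    exact hk ((hQconn.dist_eq_zero_iff.mp hte.symm) ▸ ht)
  have hstep : ∀ k, k ∉ T → ∃ l, Q.Adj k l ∧ d l < d k := by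
    intro k hk
    obtain ⟨t, ht, hte⟩ := hdex k
    have hpos : 0 < d k := Nat.pos_of_ne_zero (hd0 k hk)
    obtain ⟨p, hp⟩ := hQconn.exists_walk_length_eq_dist k t
    cases p with
    | nil =>
      rw [SimpleGraph.Walk.length_nil] at hp
      rw [hte, ← hp] at hpos
      exact absurd rfl (ne_of_gt hpos)
    | @cons _ l _ hadj q =>
      refine ⟨l, hadj, ?_⟩
      have h1 : d l ≤ Q.dist l t := hdle l t ht
      have h2 : Q.dist l t ≤ q.length := SimpleGraph.dist_le q
      rw [SimpleGraph.Walk.length_cons] at hp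
      omega
  -- choose for each max part a boundary edge towards T
  have hchoice : ∀ k : Fin ν, ∃ (l : Fin ν) (p : V × V), k ∉ T →
      p ∈ O ∧ d l < d k ∧ ((P p.1 = k ∧ P p.2 = l) ∨ (P p.1 = l ∧ P p.2 = k)) := by
    intro k
    by_cases hk : k ∈ T
    · exact ⟨k, (Classical.arbitrary V, Classical.arbitrary V), fun h => absurd hk h⟩
    · obtain ⟨l, hadj, hdl⟩ := hstep k hk
      have hadj' : k ≠ l ∧ ∃ p ∈ O, (P p.1 = k ∧ P p.2 = l) ∨ (P p.1 = l ∧ P p.2 = k) := hadj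
      obtain ⟨_, p, hp, hor⟩ := hadj'
      exact ⟨l, p, fun _ => ⟨hp, hdl, hor⟩⟩
  choose nk pe hpe using hchoice
  set Sfin : Finset (Fin ν) := Finset.univ.filter (fun k => k ∉ T) with hSdef
  have hSmem : ∀ k, k ∈ Sfin ↔ k ∉ T := fun k => by simp [hSdef]
  have hpeInj : ∀ k ∈ Sfin, ∀ k' ∈ Sfin, pe k = pe k' → k = k' := by
    intro k hk k' hk' heq
    by_contra hne
    obtain ⟨hpO, hdk, hork⟩ := hpe k ((hSmem k).mp hk)
    obtain ⟨hpO', hdk', hork'⟩ := hpe k' ((hSmem k').mp hk')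
    rw [heq] at hork
    rcases hork with ⟨h1, h2⟩ | ⟨h1, h2⟩ <;> rcases hork' with ⟨h1', h2'⟩ | ⟨h1', h2'⟩
    · exact hne (h1.symm.trans h1')
    · have e1 : k = nk k' := h1.symm.trans h1'
      have e2 : nk k = k' := h2.symm.trans h2'
      rw [← e1] at hdk'; rw [e2] at hdk; omega
    · have e1 : nk k = k' := h1.symm.trans h1'
      have e2 : k = nk k' := h2.symm.trans h2'
      rw [e1] at hdk; rw [← e2] at hdk'; omega
    · exact hne (h2.symm.trans h2')
  have hOne : O.Nonempty := ⟨pe k0, (hpe k0 hk0T).1⟩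
  -- constants
  set amin : ℝ := O.inf' hOne αs with hamindef
  have haminpos : 0 < amin := (Finset.lt_inf'_iff _).mpr (fun p hp => hpos p hp)
  have haminle : ∀ p ∈ O, amin ≤ αs p := fun p hp => Finset.inf'_le _ hp
  set amax : ℝ := O.sup' hOne αs with hamaxdef
  have hamaxle : ∀ p ∈ O, αs p ≤ amax := fun p hp => Finset.le_sup' _ hp
  have hamaxpos : 0 < amax := lt_of_lt_of_le haminpos
    ((haminle _ hOne.choose_spec).trans (hamaxle _ hOne.choose_spec))
  set wmax : ℝ := O.sup' hOne (fun p => w p.1 p.2) with hwmaxdef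
  have hwmaxle : ∀ p ∈ O, w p.1 p.2 ≤ wmax := fun p hp => Finset.le_sup' (fun p => w p.1 p.2) hp
  have hwmaxpos : 0 < wmax := lt_of_lt_of_le (hwpos _ _ (hO _ hOne.choose_spec).1)
    (hwmaxle _ hOne.choose_spec)
  set CB : ℝ := wmax * (1 + 4 / (amin * amin)) with hCBdef
  have hCBpos : 0 < CB := by positivity
  set CC : ℝ := O.card * CB + 1 with hCCdef
  have hCCpos : 0 < CC := by positivity
  -- the perturbed parameter family (kept abstract via its two defining properties)
  obtain ⟨αt, hof, hpe2⟩ : ∃ αt : ℝ → (V × V → ℝ),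
      (∀ (t : ℝ) q, q ∉ Sfin.image pe → αt t q = αs q) ∧
      (∀ (t : ℝ) k, k ∉ T → αt t (pe k) = αs (pe k) +
        (if P (pe k).1 = k then -(t ^ d k) else t ^ d k)) := by
    refine ⟨fun t q => αs q +
      ∑ k ∈ Sfin, (if pe k = q then (if P q.1 = k then -(t ^ d k) else t ^ d k) else 0),
      fun t q hq => ?_, fun t k hk => ?_⟩
    · dsimp only
      have : ∑ k ∈ Sfin, (if pe k = q then (if P q.1 = k then -(t ^ d k) else t ^ d k) else 0)
          = 0 :=
        Finset.sum_eq_zero fun k hk => if_neg (fun hh => hq (Finset.mem_image.mpr ⟨k, hk, hh⟩))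
      rw [this, add_zero]
    · dsimp only
      congr 1
      rw [Finset.sum_eq_single_of_mem k ((hSmem k).mpr hk)]
      · rw [if_pos rfl]
      · intro b hb hbk
        exact if_neg (fun hh => hbk (hpeInj b hb k ((hSmem k).mpr hk) hh))
  have hd1 : ∀ k, k ∉ T → 1 ≤ d k := fun k hk => Nat.one_le_iff_ne_zero.mpr (hd0 k hk)
  -- uniform bounds on the perturbation
  have habs : ∀ t : ℝ, 0 ≤ t → t ≤ 1 → ∀ q, |αt t q - αs q| ≤ t := by
    intro t ht0 ht1 q
    by_cases hq : q ∈ Sfin.image pe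
    · obtain ⟨k, hk, rfl⟩ := Finset.mem_image.mp hq
      rw [hpe2 t k ((hSmem k).mp hk)]
      have h1 : |(if P (pe k).1 = k then -(t ^ d k) else t ^ d k)| = t ^ d k := by
        by_cases h : P (pe k).1 = k
        · rw [if_pos h, abs_neg, abs_of_nonneg (pow_nonneg ht0 _)]
        · rw [if_neg h, abs_of_nonneg (pow_nonneg ht0 _)]
      rw [add_sub_cancel_left, h1]
      calc t ^ d k ≤ t ^ 1 := pow_le_pow_of_le_one ht0 ht1 (hd1 k ((hSmem k).mp hk))
        _ = t := pow_one t
    · rw [hof t q hq, sub_self, abs_zero]; exact ht0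
  have habs2 : ∀ t : ℝ, 0 ≤ t → t ≤ 1 → t ≤ amin / 2 → ∀ q ∈ O, amin / 2 ≤ αt t q := by
    intro t ht0 ht1 htm q hq
    have h1 := habs t ht0 ht1 q
    have h2 := haminle q hq
    have h3 := abs_le.mp h1
    linarith [h3.1]
  have hexp : ∀ t : ℝ, 0 ≤ t → t ≤ 1 → t ≤ amin / 2 → ∀ k, k ∉ T →
      |αt t (pe k) - αs (pe k)| ≤ t ^ d k ∧
      |(αt t (pe k))⁻¹ - (αs (pe k))⁻¹| ≤ 4 / (amin * amin) * t ^ d k := by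
    intro t ht0 ht1 htm k hk
    have hqO : pe k ∈ O := (hpe k hk).1
    have h1 : |αt t (pe k) - αs (pe k)| ≤ t ^ d k := by
      rw [hpe2 t k hk, add_sub_cancel_left]
      by_cases h : P (pe k).1 = k
      · rw [if_pos h, abs_neg, abs_of_nonneg (pow_nonneg ht0 _)]
      · rw [if_neg h, abs_of_nonneg (pow_nonneg ht0 _)]
    refine ⟨h1, ?_⟩
    have hm : (0:ℝ) < amin / 2 := by linarith
    have ha : amin / 2 ≤ αt t (pe k) := habs2 t ht0 ht1 htm _ hqO
    have hb : amin / 2 ≤ αs (pe k) := by linarith [haminle _ hqO]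
    have := inv_diff_abs_bound hm ha hb h1
    calc |(αt t (pe k))⁻¹ - (αs (pe k))⁻¹| ≤ t ^ d k / (amin / 2 * (amin / 2)) := this
      _ = 4 / (amin * amin) * t ^ d k := by field_simp; ring
  have hinvglob : ∀ t : ℝ, 0 ≤ t → t ≤ 1 → t ≤ amin / 2 → ∀ q ∈ O,
      |(αt t q)⁻¹ - (αs q)⁻¹| ≤ 4 / (amin * amin) * t := by
    intro t ht0 ht1 htm q hq
    by_cases hqi : q ∈ Sfin.image pe
    · obtain ⟨k', hk', rfl⟩ := Finset.mem_image.mp hqi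
      have h := (hexp t ht0 ht1 htm k' ((hSmem k').mp hk')).2
      refine h.trans ?_
      have hpow : t ^ d k' ≤ t := by
        calc t ^ d k' ≤ t ^ 1 := pow_le_pow_of_le_one ht0 ht1 (hd1 k' ((hSmem k').mp hk'))
          _ = t := pow_one t
      exact mul_le_mul_of_nonneg_left hpow (by positivity)
    · rw [hof t q hqi, sub_self, abs_zero]; positivity
  have key : ∀ k : Fin ν, ∃ t0 : ℝ, 0 < t0 ∧ ∀ t : ℝ, 0 < t → t < t0 →
      lam1Block (paramMatrix G w P O (αt t)) P k < Lam := by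
    intro k
    haveI := hNE k
    obtain ⟨u, hu1, hupos, huev⟩ := exists_pos_eigvec G w hwsymm hwpos P O hO αs k (hPconn k)
    have husq : ∀ v : {v : V // P v = k}, u v ^ 2 ≤ 1 := by
      intro v
      have h1 : u v * u v ≤ ∑ x, u x * u x :=
        Finset.single_le_sum (f := fun x => u x * u x)
          (fun x _ => mul_self_nonneg (u x)) (Finset.mem_univ v)
      have h2 : (∑ x, u x * u x) = 1 := hu1
      nlinarith [h1, h2]
    set F : ℝ → (V × V) → ℝ := fun t p => w p.1 p.2 *
      ((if h : P p.1 = k then (αt t p - αs p) * u ⟨p.1, h⟩ ^ 2 else 0) +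
       (if h : P p.2 = k then ((αt t p)⁻¹ - (αs p)⁻¹) * u ⟨p.2, h⟩ ^ 2 else 0)) with hFdef
    have hRay : ∀ t : ℝ, lam1Block (paramMatrix G w P O (αt t)) P k ≤ lam k +
        ∑ p ∈ O, F t p :=
      fun t => lam1_perturb G w hwsymm P O hO αs (αt t) k u hu1 huev
    have hFabs : ∀ (t : ℝ) (s : ℝ), 0 ≤ s → ∀ p ∈ O, |αt t p - αs p| ≤ s →
        |(αt t p)⁻¹ - (αs p)⁻¹| ≤ 4 / (amin * amin) * s → F t p ≤ CB * s := by
      intro t s hs p hp h1 h2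
      have hw1 : 0 < w p.1 p.2 := hwpos _ _ (hO p hp).1
      have hA : (if h : P p.1 = k then (αt t p - αs p) * u ⟨p.1, h⟩ ^ 2 else 0) ≤ s := by
        by_cases h : P p.1 = k
        · rw [dif_pos h]
          calc (αt t p - αs p) * u ⟨p.1, h⟩ ^ 2 ≤ |αt t p - αs p| * u ⟨p.1, h⟩ ^ 2 :=
              mul_le_mul_of_nonneg_right (le_abs_self _) (sq_nonneg _)
            _ ≤ s * 1 := mul_le_mul h1 (husq _) (sq_nonneg _) hs
            _ = s := mul_one s
        · rw [dif_neg h]; exact hs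
      have h4s : (0:ℝ) ≤ 4 / (amin * amin) * s := by positivity
      have hB : (if h : P p.2 = k then ((αt t p)⁻¹ - (αs p)⁻¹) * u ⟨p.2, h⟩ ^ 2 else 0)
          ≤ 4 / (amin * amin) * s := by
        by_cases h : P p.2 = k
        · rw [dif_pos h]
          calc ((αt t p)⁻¹ - (αs p)⁻¹) * u ⟨p.2, h⟩ ^ 2
              ≤ |(αt t p)⁻¹ - (αs p)⁻¹| * u ⟨p.2, h⟩ ^ 2 :=
              mul_le_mul_of_nonneg_right (le_abs_self _) (sq_nonneg _)
            _ ≤ (4 / (amin * amin) * s) * 1 := mul_le_mul h2 (husq _) (sq_nonneg _) h4s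
            _ = 4 / (amin * amin) * s := mul_one _
        · rw [dif_neg h]; exact h4s
      rw [hFdef]
      dsimp only
      refine le_trans (mul_le_mul_of_nonneg_left (add_le_add hA hB) hw1.le) ?_
      calc w p.1 p.2 * (s + 4 / (amin * amin) * s)
          ≤ wmax * (s + 4 / (amin * amin) * s) :=
            mul_le_mul_of_nonneg_right (hwmaxle p hp) (by positivity)
        _ = CB * s := by rw [hCBdef]; ring
    by_cases hkT : k ∈ T
    · -- a non-maximal part: crude bound suffices
      have hg : 0 < Lam - lam k := sub_pos.mpr ((hmemT k).mp hkT)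
      refine ⟨min (min 1 (amin / 2)) ((Lam - lam k) / CC), ?_, ?_⟩
      · simp only [lt_min_iff]
        exact ⟨⟨one_pos, by linarith⟩, by positivity⟩
      · intro t ht0 htlt
        have ht1 : t ≤ 1 :=
          le_of_lt (lt_of_lt_of_le htlt (le_trans (min_le_left _ _) (min_le_left _ _)))
        have htm : t ≤ amin / 2 :=
          le_of_lt (lt_of_lt_of_le htlt (le_trans (min_le_left _ _) (min_le_right _ _)))
        have htC : t < (Lam - lam k) / CC := lt_of_lt_of_le htlt (min_le_right _ _)
        have hsum : ∑ p ∈ O, F t p ≤ O.card * (CB * t) := by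
          refine le_trans (Finset.sum_le_sum fun p hp =>
            hFabs t t ht0.le p hp (habs t ht0.le ht1 p) (hinvglob t ht0.le ht1 htm p hp)) ?_
          rw [Finset.sum_const, nsmul_eq_mul]
        have h5 : (O.card : ℝ) * (CB * t) < Lam - lam k := by
          have h6 : t * CC < Lam - lam k := (lt_div_iff₀ hCCpos).mp htC
          rw [hCCdef] at h6
          nlinarith [ht0]
        calc lam1Block (paramMatrix G w P O (αt t)) P k ≤ lam k + ∑ p ∈ O, F t p := hRay t
          _ ≤ lam k + O.card * (CB * t) := by linarith [hsum]
          _ < Lam := by linarith [h5]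
    · -- a maximal part: the chosen boundary edge forces a strict decrease
      have hlamk : lam k = Lam := hnotT k hkT
      obtain ⟨hpO, hdnk, hor⟩ := hpe k hkT
      have hnkne : nk k ≠ k := fun h => by rw [h] at hdnk; omega
      have hwpk : 0 < w (pe k).1 (pe k).2 := hwpos _ _ (hO _ hpO).1
      have hown : ∃ c : ℝ, 0 < c ∧ ∀ t : ℝ, 0 < t → t ≤ 1 → t ≤ amin / 2 →
          F t (pe k) ≤ -(c * t ^ d k) := by
        rcases hor with ⟨h1, h2⟩ | ⟨h1, h2⟩
        · refine ⟨w (pe k).1 (pe k).2 * u ⟨(pe k).1, h1⟩ ^ 2,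
            mul_pos hwpk (pow_pos (hupos _) 2), fun t ht0 ht1 htm => ?_⟩
          have hc2 : ¬ P (pe k).2 = k := fun hh => hnkne (h2.symm.trans hh)
          have hα : αt t (pe k) - αs (pe k) = -(t ^ d k) := by
            rw [hpe2 t k hkT, if_pos h1, add_sub_cancel_left]
          rw [hFdef]
          dsimp only
          rw [dif_pos h1, dif_neg hc2, add_zero, hα]
          apply le_of_eq
          ring
        · refine ⟨w (pe k).1 (pe k).2 * u ⟨(pe k).2, h2⟩ ^ 2 / (amax * (amax + 1)),
            div_pos (mul_pos hwpk (pow_pos (hupos _) 2))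
              (mul_pos hamaxpos (by linarith)), fun t ht0 ht1 htm => ?_⟩
          have hc1 : ¬ P (pe k).1 = k := fun hh => hnkne (h1.symm.trans hh)
          have hα : αt t (pe k) = αs (pe k) + t ^ d k := by
            rw [hpe2 t k hkT, if_neg hc1]
          have hub := inv_succ_ub (hpos _ hpO) (hamaxle _ hpO) (pow_pos ht0 (d k))
            (pow_le_one₀ ht0.le ht1)
          rw [hFdef]
          dsimp only
          rw [dif_neg hc1, dif_pos h2, zero_add, hα]
          have hmul : ((αs (pe k) + t ^ d k)⁻¹ - (αs (pe k))⁻¹) * u ⟨(pe k).2, h2⟩ ^ 2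
              ≤ -(t ^ d k / (amax * (amax + 1))) * u ⟨(pe k).2, h2⟩ ^ 2 :=
            mul_le_mul_of_nonneg_right hub (sq_nonneg _)
          refine le_trans (mul_le_mul_of_nonneg_left hmul hwpk.le) (le_of_eq ?_)
          field_simp
      obtain ⟨c, hc, hcb⟩ := hown
      refine ⟨min (min 1 (amin / 2)) (c / CC), ?_, ?_⟩
      · simp only [lt_min_iff]
        exact ⟨⟨one_pos, by linarith⟩, by positivity⟩
      · intro t ht0 htlt
        have ht1 : t ≤ 1 :=
          le_of_lt (lt_of_lt_of_le htlt (le_trans (min_le_left _ _) (min_le_left _ _)))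
        have htm : t ≤ amin / 2 :=
          le_of_lt (lt_of_lt_of_le htlt (le_trans (min_le_left _ _) (min_le_right _ _)))
        have htc : t < c / CC := lt_of_lt_of_le htlt (min_le_right _ _)
        have hoth : ∀ p ∈ O.erase (pe k), F t p ≤ CB * t ^ (d k + 1) := by
          intro p hp'
          have hp : p ∈ O := Finset.mem_of_mem_erase hp'
          have hpne : p ≠ pe k := Finset.ne_of_mem_erase hp'
          by_cases hcnd : P p.1 = k ∨ P p.2 = k
          · by_cases hqi : p ∈ Sfin.image pe
            · obtain ⟨k', hk', rfl⟩ := Finset.mem_image.mp hqi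
              have hk'T : k' ∉ T := (hSmem k').mp hk'
              have hkk' : k' ≠ k := fun h => hpne (by rw [h])
              obtain ⟨hpO', hdnk', hor'⟩ := hpe k' hk'T
              have hknk : k = nk k' := by
                rcases hor' with ⟨h1', h2'⟩ | ⟨h1', h2'⟩ <;> rcases hcnd with hc1 | hc2
                · exact absurd (hc1.symm.trans h1').symm hkk'
                · exact hc2.symm.trans h2'
                · exact hc1.symm.trans h1'
                · exact absurd (hc2.symm.trans h2').symm hkk'
              have hdk' : d k + 1 ≤ d k' := by
                rw [hknk]; omega
              have hpow : t ^ d k' ≤ t ^ (d k + 1) :=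
                pow_le_pow_of_le_one ht0.le ht1 hdk'
              obtain ⟨he1, he2⟩ := hexp t ht0.le ht1 htm k' hk'T
              refine hFabs t (t ^ (d k + 1)) (by positivity) _ hp (he1.trans hpow) ?_
              exact he2.trans (mul_le_mul_of_nonneg_left hpow (by positivity))
            · refine hFabs t (t ^ (d k + 1)) (by positivity) p hp ?_ ?_
              · rw [hof t p hqi, sub_self, abs_zero]; positivity
              · rw [hof t p hqi, sub_self, abs_zero]; positivity
          · push_neg at hcnd
            rw [hFdef]
            dsimp only
            rw [dif_neg hcnd.1, dif_neg hcnd.2, add_zero, mul_zero]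
            positivity
        have hsplit : F t (pe k) + ∑ p ∈ O.erase (pe k), F t p = ∑ p ∈ O, F t p :=
          Finset.add_sum_erase O (F t) hpO
        have h2 : ∑ p ∈ O.erase (pe k), F t p ≤ O.card * (CB * t ^ (d k + 1)) := by
          refine le_trans (Finset.sum_le_sum hoth) ?_
          rw [Finset.sum_const, nsmul_eq_mul]
          have hcard : ((O.erase (pe k)).card : ℝ) ≤ O.card :=
            Nat.cast_le.mpr (Finset.card_le_card (Finset.erase_subset _ _))
          exact mul_le_mul_of_nonneg_right hcard (by positivity)
        have h3 : F t (pe k) ≤ -(c * t ^ d k) := hcb t ht0 ht1 htm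
        have hXpos : (0:ℝ) < t ^ d k := pow_pos ht0 _
        have h5 : (O.card : ℝ) * CB * t < c := by
          have h6 : t * CC < c := (lt_div_iff₀ hCCpos).mp htc
          rw [hCCdef] at h6
          nlinarith [ht0]
        have h7 : (O.card : ℝ) * (CB * t ^ (d k + 1)) < c * t ^ d k := by
          rw [pow_succ]
          nlinarith [mul_lt_mul_of_pos_right h5 hXpos]
        calc lam1Block (paramMatrix G w P O (αt t)) P k ≤ lam k + ∑ p ∈ O, F t p := hRay t
          _ = Lam + (F t (pe k) + ∑ p ∈ O.erase (pe k), F t p) := by rw [hlamk, hsplit]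
          _ < Lam := by linarith [h2, h3, h7]
  -- choose a single small t and contradict local minimality
  choose t0 ht0pos ht0 using key
  obtain ⟨ε, hε, hball⟩ := Metric.mem_nhdsWithin_iff.mp hmin
  set tmin : ℝ := Finset.univ.inf' Finset.univ_nonempty t0 with htmindef
  have htminpos : 0 < tmin := (Finset.lt_inf'_iff _).mpr (fun k _ => ht0pos k)
  set ts : ℝ := min (min tmin ε) (min 1 (amin / 2)) / 2 with htsdef
  have htspos : 0 < ts := by
    rw [htsdef]
    have : 0 < min (min tmin ε) (min 1 (amin / 2)) := by
      simp only [lt_min_iff]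
      exact ⟨⟨htminpos, hε⟩, ⟨one_pos, by linarith⟩⟩
    linarith
  have hts1 : ts ≤ 1 := by
    rw [htsdef]
    have h1 : min (min tmin ε) (min 1 (amin / 2)) ≤ 1 :=
      le_trans (min_le_right _ _) (min_le_left _ _)
    linarith
  have htsm : ts ≤ amin / 2 := by
    rw [htsdef]
    have h1 : min (min tmin ε) (min 1 (amin / 2)) ≤ amin / 2 :=
      le_trans (min_le_right _ _) (min_le_right _ _)
    linarith
  have htslt : ∀ k, ts < t0 k := by
    intro k
    have h1 : tmin ≤ t0 k := Finset.inf'_le _ (Finset.mem_univ k)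
    have h2 : min (min tmin ε) (min 1 (amin / 2)) ≤ tmin :=
      le_trans (min_le_left _ _) (min_le_left _ _)
    rw [htsdef]; linarith
  have htsε : ts < ε := by
    have h2 : min (min tmin ε) (min 1 (amin / 2)) ≤ ε :=
      le_trans (min_le_left _ _) (min_le_right _ _)
    rw [htsdef]; linarith
  -- αt ts is in the constraint set and in the ball
  have hmem1 : αt ts ∈ {α : V × V → ℝ | ∀ p ∈ O, 0 < α p} := by
    intro p hp
    have := habs2 ts htspos.le hts1 htsm p hp
    linarith
  have hmem2 : αt ts ∈ Metric.ball αs ε := by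
    rw [Metric.mem_ball]
    rw [dist_pi_lt_iff hε]
    intro q
    rw [Real.dist_eq]
    calc |αt ts q - αs q| ≤ ts := habs ts htspos.le hts1 q
      _ < ε := htsε
  have hcontra := hball ⟨hmem2, hmem1⟩
  have hPEαs : PartitionEnergy G w P O αs = Lam := rfl
  have hPEαt : PartitionEnergy G w P O (αt ts) < Lam := by
    obtain ⟨km, hkm⟩ := Finite.exists_max
      (fun k => lam1Block (paramMatrix G w P O (αt ts)) P k)
    have h1 : PartitionEnergy G w P O (αt ts)
        ≤ lam1Block (paramMatrix G w P O (αt ts)) P km := ciSup_le hkm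
    exact lt_of_le_of_lt h1 (ht0 km ts htspos (htslt km))
  simp only [Set.mem_setOf_eq] at hcontra
  rw [hPEαs] at hcontra
  linarith

end
end

section
/- Let K be a finite nonempty set and B a finite set equipped with maps s, t : B → K with s(b) ≠ t(b) for all b ∈ B, such that the multigraph on vertex set K with an edge from s(b) to t(b) for each b ∈ B is connected. Let a, c : B → ℝ be strictly positive, and define the linear map N : ℝ^B → ℝ^K by (Nx)_k = Σ_{b : s(b)=k} a_b x_b − Σ_{b : t(b)=k} c_b x_b. Then: (1) the space of vectors u ∈ ℝ^K satisfying a_b u_{s(b)} = c_b u_{t(b)} for all b ∈ B is at most one-dimensional, and every nonzero such u has all entries of the same strict sign; (2) consequently ℝ^K = span{(1,1,…,1)} + range(N). -/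
open Finset

/-- linear-algebra core of the transversality lemma. Let `K` be a finite
nonempty set, `B` a finite set of "boundary edges" with endpoint maps `s t : B → K`,
`s b ≠ t b`, such that the associated multigraph on `K` is connected. Let `a c : B → ℝ` be
strictly positive and define `N : ℝ^B → ℝ^K` by
`(Nx)_k = Σ_{s b = k} a_b x_b − Σ_{t b = k} c_b x_b`. Then (1) the space of `u ∈ ℝ^K` with
`a_b u_{s b} = c_b u_{t b}` for all `b` is at most one-dimensional and every nonzero such
`u` has all entries of the same strict sign, and (2) `ℝ^K = span{(1,…,1)} + range N`. -/
theorem stmt10 {K B : Type*} [Fintype K] [DecidableEq K] [Nonempty K] [Fintype B]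
    (s t : B → K) (hst : ∀ b, s b ≠ t b)
    (hconn : (SimpleGraph.fromRel fun k l => ∃ b, s b = k ∧ t b = l).Connected)
    (a c : B → ℝ) (ha : ∀ b, 0 < a b) (hc : ∀ b, 0 < c b) :
    (∀ u v : K → ℝ,
        (∀ b, a b * u (s b) = c b * u (t b)) →
        (∀ b, a b * v (s b) = c b * v (t b)) →
        ∃ x y : ℝ, (x ≠ 0 ∨ y ≠ 0) ∧ x • u + y • v = 0) ∧
    (∀ u : K → ℝ, (∀ b, a b * u (s b) = c b * u (t b)) → u ≠ 0 →
        (∀ k, 0 < u k) ∨ (∀ k, u k < 0)) ∧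
    (∀ y : K → ℝ, ∃ (r : ℝ) (x : B → ℝ),
        y = (fun _ => r) + fun k =>
          (∑ b, if s b = k then a b * x b else 0) - ∑ b, if t b = k then c b * x b else 0) := by
  set G := SimpleGraph.fromRel fun k l => ∃ b, s b = k ∧ t b = l with hG
  -- edge fact
  have edge : ∀ (u : K → ℝ), (∀ b, a b * u (s b) = c b * u (t b)) → ∀ b,
      (0 < u (s b) ↔ 0 < u (t b)) ∧ (u (s b) < 0 ↔ u (t b) < 0) := by
    intro u hu b
    have h := hu b
    have hab := ha b
    have hcb := hc b
    constructor
    · constructor <;> intro h' <;> nlinarith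
    · constructor <;> intro h' <;> nlinarith
  -- same-sign along reachability
  have same : ∀ (u : K → ℝ), (∀ b, a b * u (s b) = c b * u (t b)) → ∀ k l : K,
      (0 < u k ↔ 0 < u l) ∧ (u k < 0 ↔ u l < 0) := by
    intro u hu k l
    have hr : G.Reachable k l := hconn.preconnected k l
    obtain ⟨w⟩ := hr
    induction w with
    | nil => exact ⟨Iff.rfl, Iff.rfl⟩
    | cons hadj p ih =>
      rename_i k' m l'
      have hst' : (0 < u k' ↔ 0 < u m) ∧ (u k' < 0 ↔ u m < 0) := by
        rw [hG, SimpleGraph.fromRel_adj] at hadj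
        rcases hadj.2 with ⟨b, hb1, hb2⟩ | ⟨b, hb1, hb2⟩
        · have := edge u hu b; rw [hb1, hb2] at this; exact this
        · have := edge u hu b; rw [hb1, hb2] at this
          exact ⟨this.1.symm, this.2.symm⟩
      exact ⟨hst'.1.trans ih.1, hst'.2.trans ih.2⟩
  -- vanishing somewhere implies zero
  have vanish0 : ∀ (u : K → ℝ), (∀ b, a b * u (s b) = c b * u (t b)) →
      ∀ k0, u k0 = 0 → u = 0 := by
    intro u hu k0 h0
    funext k
    rcases lt_trichotomy (u k) 0 with h | h | h
    · exact absurd (((same u hu k k0).2).mp h) (by simp [h0])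
    · exact h
    · exact absurd (((same u hu k k0).1).mp h) (by simp [h0])
  have part2 : ∀ u : K → ℝ, (∀ b, a b * u (s b) = c b * u (t b)) → u ≠ 0 →
      (∀ k, 0 < u k) ∨ (∀ k, u k < 0) := by
    intro u hu hne
    have : ∃ k0, u k0 ≠ 0 := by
      by_contra h
      push_neg at h
      exact hne (funext fun k => h k)
    obtain ⟨k0, hk0⟩ := this
    rcases hk0.lt_or_gt with h | h
    · exact Or.inr fun k => ((same u hu k k0).2).mpr h
    · exact Or.inl fun k => ((same u hu k k0).1).mpr h
  refine ⟨?_, part2, ?_⟩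
  · -- part 1
    intro u v hu hv
    by_cases hu0 : u = 0
    · exact ⟨1, 0, Or.inl one_ne_zero, by simp [hu0]⟩
    · have : ∃ k0, u k0 ≠ 0 := by
        by_contra h
        push_neg at h
        exact hu0 (funext fun k => h k)
      obtain ⟨k0, hk0⟩ := this
      refine ⟨-(v k0), u k0, Or.inr hk0, ?_⟩
      have hw : ∀ b, a b * ((u k0 • v - v k0 • u) (s b)) = c b * ((u k0 • v - v k0 • u) (t b)) := by
        intro b
        simp only [Pi.sub_apply, Pi.smul_apply, smul_eq_mul]
        linear_combination (u k0) * hv b - (v k0) * hu b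
      have hw0 : (u k0 • v - v k0 • u) k0 = 0 := by
        simp [mul_comm]
      have := vanish0 _ hw k0 hw0
      have h2 : u k0 • v - v k0 • u = 0 := this
      funext k
      have := congrFun h2 k
      simp only [Pi.sub_apply, Pi.smul_apply, smul_eq_mul, Pi.add_apply, Pi.zero_apply] at this ⊢
      linarith
  · -- part 3
    intro y
    classical
    set M : Matrix K B ℝ := fun k b => (if s b = k then a b else 0) - (if t b = k then c b else 0)
      with hM
    set N : (B → ℝ) →ₗ[ℝ] (K → ℝ) := M.mulVecLin with hN
    have hNapp : ∀ (x : B → ℝ) (k : K), N x k =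
        (∑ b, if s b = k then a b * x b else 0) - ∑ b, if t b = k then c b * x b else 0 := by
      intro x k
      simp only [hN, Matrix.mulVecLin_apply, Matrix.mulVec, dotProduct, hM]
      rw [← Finset.sum_sub_distrib]
      refine Finset.sum_congr rfl fun b _ => ?_
      by_cases h1 : s b = k <;> by_cases h2 : t b = k <;> simp [h1, h2] <;> ring
    set e : EuclideanSpace ℝ K ≃ₗ[ℝ] (K → ℝ) := WithLp.linearEquiv 2 ℝ (K → ℝ) with he
    set W : Submodule ℝ (EuclideanSpace ℝ K) :=
      (Submodule.span ℝ {(fun _ => (1:ℝ) : K → ℝ)} ⊔ LinearMap.range N).comap e.toLinearMap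
      with hW
    have hWtop : W = ⊤ := by
      rw [← Submodule.orthogonal_eq_bot_iff]
      rw [Submodule.eq_bot_iff]
      intro u hu
      rw [Submodule.mem_orthogonal] at hu
      -- u pairs to zero against 1 and against all N x
      have h1 : ∑ k, e u k = 0 := by
        have := hu ((e.symm) (fun _ => 1)) (by
          simp only [hW, Submodule.mem_comap]
          exact Submodule.mem_sup_left (Submodule.subset_span (by simp)))
        simpa [PiLp.inner_apply, RCLike.inner_apply, he] using this
      have h2 : ∀ b, a b * (e u) (s b) = c b * (e u) (t b) := by
        intro b
        have := hu ((e.symm) (N (Pi.single b 1))) (by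
          simp only [hW, Submodule.mem_comap]
          exact Submodule.mem_sup_right ⟨Pi.single b 1, by simp⟩)
        simp only [PiLp.inner_apply, RCLike.inner_apply, map_one, RingHom.id_apply,
          starRingEnd_apply, star_trivial, he] at this
        have heq : ∀ k, (e ((e.symm) (N (Pi.single b 1)))) k = N (Pi.single b 1) k := by
          intro k; rw [LinearEquiv.apply_symm_apply]
        have hsum : ∑ k, N (Pi.single b 1) k * (e u) k = 0 := by
          rw [← this]
          congr 1
          funext k
          exact mul_comm _ _
        have hval : ∀ k, N (Pi.single b 1) k =
            (if s b = k then a b else 0) - (if t b = k then c b else 0) := by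
          intro k
          rw [hNapp]
          congr 1 <;>
          · rw [Finset.sum_eq_single b (fun b' _ hb' => by simp [Pi.single_apply, hb'])
              (by simp)]
            simp [Pi.single_apply]
        rw [Finset.sum_congr rfl (fun k _ => by rw [hval k])] at hsum
        simp only [sub_mul, ite_mul, zero_mul] at hsum
        rw [Finset.sum_sub_distrib, Finset.sum_ite_eq, Finset.sum_ite_eq] at hsum
        simp at hsum
        linarith
      by_contra hne
      have hune : e u ≠ 0 := by
        intro h
        exact hne (by simpa using congrArg e.symm h)
      rcases part2 (e u) h2 hune with h | h
      · have : 0 < ∑ k, e u k := Finset.sum_pos (fun k _ => h k) Finset.univ_nonempty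
        linarith
      · have : ∑ k, e u k < 0 := Finset.sum_neg (fun k _ => h k) Finset.univ_nonempty
        linarith
    have hy : y ∈ Submodule.span ℝ {(fun _ => (1:ℝ) : K → ℝ)} ⊔ LinearMap.range N := by
      have : e.symm y ∈ W := hWtop ▸ Submodule.mem_top
      simpa [hW, Submodule.mem_comap] using this
    rw [Submodule.mem_sup] at hy
    obtain ⟨p, hp, q, hq, hpq⟩ := hy
    rw [Submodule.mem_span_singleton] at hp
    obtain ⟨r, hr⟩ := hp
    obtain ⟨x, hx⟩ := hq
    refine ⟨r, x, ?_⟩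
    funext k
    have := congrFun hpq k
    rw [← hr, ← hx] at this
    simp only [Pi.add_apply, Pi.smul_apply, smul_eq_mul, mul_one] at this
    rw [← this, hNapp]
    rfl
end

section
/- Let (P, α) be an equipartition of G with all entries of α positive, and for each k = 1,…,ν let f^{(k)} be a normalized eigenvector of the block L^{∂P}(G_k, α) for its smallest eigenvalue λ_1(G_k,α) with all entries strictly positive on V_k. Then the following are equivalent: (i) there exist c_1,…,c_ν > 0 such that c_{s(i)} (f^{(s(i))}_i)² = c_{s(j)} (f^{(s(j))}_j)² / α_ij² for every oriented boundary edge (i,j) ∈ ∂P, where s(i) denotes the index of the part containing i; (ii) there is an eigenvector ψ of L^{∂P} with strictly positive entries and eigenvalue Λ(P,α) such that α_ij = ψ_j/ψ_i for every oriented boundary edge (i,j) ∈ ∂P. -/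
open Matrix Finset

noncomputable section

variable {V : Type*}

section Helpers

lemma sum_part {V : Type*} [Fintype V] {ν : ℕ} (P : V → Fin ν) (k : Fin ν)
    (F : V → ℝ) (h0 : ∀ j, P j ≠ k → F j = 0) :
    ∑ j : {v : V // P v = k}, F j.val = ∑ j, F j := by
  classical
  rw [← Finset.sum_subtype (Finset.univ.filter fun v => P v = k) (by simp) F]
  exact Finset.sum_filter_of_ne (by intro x _ hx; by_contra h; exact hx (h0 x h))

lemma prop_lemma {S : Type*} [Fintype S] [Nonempty S] (A : Matrix S S ℝ)
    (hoffdiag : ∀ x y, x ≠ y → A x y ≤ 0)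
    (hirr : ∀ (g : S → ℝ), (∀ x y, x ≠ y → A x y ≠ 0 → g x = 0 → g y = 0) →
       ∀ x, g x = 0 → ∀ y, g y = 0)
    (Λ : ℝ) (u v : S → ℝ) (hu : ∀ x, 0 < u x) (hv : ∀ x, 0 < v x)
    (heu : A.mulVec u = Λ • u) (hev : A.mulVec v = Λ • v) :
    ∃ t : ℝ, 0 < t ∧ ∀ x, u x = t * v x := by
  classical
  obtain ⟨x0, -, hx0⟩ := Finset.exists_min_image Finset.univ (fun x => u x / v x)
    ⟨Classical.arbitrary S, Finset.mem_univ _⟩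
  set t : ℝ := u x0 / v x0 with ht
  have htpos : 0 < t := div_pos (hu x0) (hv x0)
  set g : S → ℝ := fun x => u x - t * v x with hg
  have hgnonneg : ∀ x, 0 ≤ g x := by
    intro x
    have h1 : t ≤ u x / v x := hx0 x (Finset.mem_univ x)
    have := (le_div_iff₀ (hv x)).mp h1
    simp only [hg]; linarith
  have hgx0 : g x0 = 0 := by
    simp only [hg, ht]
    rw [div_mul_cancel₀ _ (hv x0).ne']
    ring
  have hAg : ∀ x, ∑ j, A x j * g j = Λ * g x := by
    intro x
    have h1 := congrFun heu x
    have h2 := congrFun hev x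
    simp only [Matrix.mulVec, dotProduct, Pi.smul_apply, smul_eq_mul] at h1 h2
    simp only [hg, mul_sub, Finset.sum_sub_distrib]
    rw [h1]
    have : ∑ j, A x j * (t * v j) = t * ∑ j, A x j * v j := by
      rw [Finset.mul_sum]; congr 1; ext j; ring
    rw [this, h2]; ring
  have hprop : ∀ x y, x ≠ y → A x y ≠ 0 → g x = 0 → g y = 0 := by
    intro x y hxy hA hgx
    have hsum : ∑ j, A x j * g j = 0 := by rw [hAg x, hgx, mul_zero]
    have herase : ∑ j ∈ Finset.univ.erase x, A x j * g j = 0 := by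
      have h := Finset.add_sum_erase Finset.univ (fun j => A x j * g j) (Finset.mem_univ x)
      simp only [hgx, mul_zero, zero_add] at h
      rw [h, hsum]
    have hall := (Finset.sum_eq_zero_iff_of_nonpos ?_).mp herase
    · have hy := hall y (Finset.mem_erase.mpr ⟨fun h => hxy h.symm, Finset.mem_univ y⟩)
      rcases mul_eq_zero.mp hy with h | h
      · exact absurd h hA
      · exact h
    · intro j hj
      have hjx : j ≠ x := (Finset.mem_erase.mp hj).1
      exact mul_nonpos_iff.mpr (Or.inr ⟨hoffdiag x j (fun h => hjx h.symm), hgnonneg j⟩)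
  have hzero := hirr g hprop x0 hgx0
  refine ⟨t, htpos, fun x => ?_⟩
  have := hzero x
  simp only [hg] at this
  linarith

end Helpers

/-- criticality criterion. For an equipartition `(P, α)` with positive
parameters and positive normalized ground states `f^{(k)}` of the blocks, the following are
equivalent: (i) there are `c_k > 0` with
`c_{s(i)} (f^{(s(i))}_i)² = c_{s(j)} (f^{(s(j))}_j)² / α_ij²` across every oriented boundary
edge `(i,j)`; (ii) there is an everywhere-positive eigenvector `ψ` of `L^{∂P}` with
eigenvalue `Λ(P, α)` such that `α_ij = ψ_j/ψ_i` on every oriented boundary edge. -/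
theorem stmt12 [Fintype V] [DecidableEq V] (G : SimpleGraph V) [DecidableRel G.Adj]
    (hGconn : G.Connected) (w : V → V → ℝ)
    (hwsymm : ∀ i j, w i j = w j i) (hwpos : ∀ i j, G.Adj i j → 0 < w i j)
    (hw0 : ∀ i j, ¬ G.Adj i j → w i j = 0)
    {ν : ℕ} (P : V → Fin ν) (hPsurj : Function.Surjective P)
    (hPconn : ∀ k : Fin ν, (G.induce {v | P v = k}).Connected)
    (O : Finset (V × V))
    (hO : ∀ p ∈ O, G.Adj p.1 p.2 ∧ P p.1 ≠ P p.2)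
    (hOorient : ∀ i j, G.Adj i j → P i ≠ P j → ((i, j) ∈ O ↔ (j, i) ∉ O))
    (α : V × V → ℝ) (hαpos : ∀ p ∈ O, 0 < α p)
    (hequi : IsEquipartition G w P O α)
    (f : (k : Fin ν) → {v : V // P v = k} → ℝ)
    (hfeig : ∀ k, (blockMatrix (paramMatrix G w P O α) P k).mulVec (f k)
      = lam1Block (paramMatrix G w P O α) P k • f k)
    (hfnorm : ∀ k, ∑ v, f k v ^ 2 = 1)
    (hfpos : ∀ k v, 0 < f k v) :
    (∃ c : Fin ν → ℝ, (∀ k, 0 < c k) ∧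
        ∀ p ∈ O, c (P p.1) * f (P p.1) ⟨p.1, rfl⟩ ^ 2
          = c (P p.2) * f (P p.2) ⟨p.2, rfl⟩ ^ 2 / α p ^ 2) ↔
    (∃ ψ : V → ℝ, (∀ v, 0 < ψ v) ∧
        (signedLaplacian G w (partSgn P)).mulVec ψ = PartitionEnergy G w P O α • ψ ∧
        ∀ p ∈ O, α p = ψ p.2 / ψ p.1) := by
  classical
  set M := paramMatrix G w P O α with hMdef
  set S := ∑ p ∈ O, w p.1 p.2 • Bmat p.1 p.2 (α p) with hSdef
  have hVne : Nonempty V := hGconn.nonempty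
  have hνne : Nonempty (Fin ν) := ⟨P (Classical.arbitrary V)⟩
  set Λ := PartitionEnergy G w P O α with hΛdef
  have hΛ : ∀ k, lam1Block M P k = Λ := by
    intro k
    have h1 : Λ = ⨆ _l : Fin ν, lam1Block M P k := by
      rw [hΛdef, PartitionEnergy]
      exact iSup_congr fun l => hequi l k
    rw [h1, ciSup_const]
  have hMadd : M = signedLaplacian G w (partSgn P) + S := by
    rw [hMdef, paramMatrix, hSdef]
  -- cross-part entries of M vanish
  have hMcross : ∀ i j, P i ≠ P j → M i j = 0 := by
    intro i j hPij
    have hij : i ≠ j := fun h => hPij (h ▸ rfl)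
    have hL : signedLaplacian G w (partSgn P) i j = if G.Adj i j then w i j else 0 := by
      rw [signedLaplacian, Matrix.of_apply, if_neg hij]
      split_ifs with h
      · rw [partSgn, if_neg hPij]; ring
      · rfl
    have hSentry : S i j = ∑ p ∈ O, w p.1 p.2 * Bmat p.1 p.2 (α p) i j := by
      rw [hSdef, Matrix.sum_apply]
      exact Finset.sum_congr rfl fun p _ => rfl
    have hterm : ∀ p ∈ O, p ≠ (i, j) → p ≠ (j, i) →
        w p.1 p.2 * Bmat p.1 p.2 (α p) i j = 0 := by
      intro p hp h1 h2
      have hB0 : Bmat p.1 p.2 (α p) i j = 0 := by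
        rw [Bmat, Matrix.of_apply]
        have c1 : ¬(i = p.1 ∧ j = p.1) := fun h => hij (h.1.trans h.2.symm)
        have c2 : ¬(i = p.2 ∧ j = p.2) := fun h => hij (h.1.trans h.2.symm)
        have c3 : ¬((i = p.1 ∧ j = p.2) ∨ (i = p.2 ∧ j = p.1)) := by
          rintro (⟨ha, hb⟩ | ⟨ha, hb⟩)
          · exact h1 (Prod.ext_iff.mpr ⟨ha.symm, hb.symm⟩)
          · exact h2 (Prod.ext_iff.mpr ⟨hb.symm, ha.symm⟩)
        rw [if_neg c1, if_neg c2, if_neg c3]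
      rw [hB0, mul_zero]
    have hMentry : M i j = (if G.Adj i j then w i j else 0)
        + ∑ p ∈ O, w p.1 p.2 * Bmat p.1 p.2 (α p) i j := by
      rw [hMadd, Matrix.add_apply, hL, hSentry]
    by_cases hadj : G.Adj i j
    · by_cases hijO : (i, j) ∈ O
      · have hji : (j, i) ∉ O := (hOorient i j hadj hPij).mp hijO
        have hsum : ∑ p ∈ O, w p.1 p.2 * Bmat p.1 p.2 (α p) i j
            = w i j * Bmat i j (α (i, j)) i j := by
          refine Finset.sum_eq_single_of_mem (i, j) hijO ?_
          intro p hp hpne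
          exact hterm p hp hpne (fun h => hji (h ▸ hp))
        have hB : Bmat i j (α (i, j)) i j = -1 := by
          rw [Bmat, Matrix.of_apply]
          have c1 : ¬(i = i ∧ j = i) := fun h => hij h.2.symm
          have c2 : ¬(i = j ∧ j = j) := fun h => hij h.1
          rw [if_neg c1, if_neg c2, if_pos (Or.inl ⟨rfl, rfl⟩)]
        rw [hMentry, hsum, hB, if_pos hadj]; ring
      · have hji : (j, i) ∈ O := by
          by_contra hc
          exact hijO ((hOorient i j hadj hPij).mpr hc)
        have hsum : ∑ p ∈ O, w p.1 p.2 * Bmat p.1 p.2 (α p) i j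
            = w j i * Bmat j i (α (j, i)) i j := by
          refine Finset.sum_eq_single_of_mem (j, i) hji ?_
          intro p hp hpne
          exact hterm p hp (fun h => hijO (h ▸ hp)) hpne
        have hB : Bmat j i (α (j, i)) i j = -1 := by
          rw [Bmat, Matrix.of_apply]
          have c1 : ¬(i = j ∧ j = j) := fun h => hij h.1
          have c2 : ¬(i = i ∧ j = i) := fun h => hij h.2.symm
          rw [if_neg c1, if_neg c2, if_pos (Or.inr ⟨rfl, rfl⟩)]
        rw [hMentry, hsum, hB, if_pos hadj, hwsymm j i]; ring
    · have hsum : ∑ p ∈ O, w p.1 p.2 * Bmat p.1 p.2 (α p) i j = 0 := by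
        refine Finset.sum_eq_zero fun p hp => ?_
        refine hterm p hp ?_ ?_
        · rintro rfl; exact hadj (hO _ hp).1
        · rintro rfl; exact hadj (hO _ hp).1.symm
      rw [hMentry, hsum, if_neg hadj, add_zero]
  -- within-part off-diagonal entries
  have hMin : ∀ i j, i ≠ j → P i = P j → M i j = if G.Adj i j then -(w i j) else 0 := by
    intro i j hij hPij
    have hL : signedLaplacian G w (partSgn P) i j = if G.Adj i j then -(w i j) else 0 := by
      rw [signedLaplacian, Matrix.of_apply, if_neg hij]
      split_ifs with h
      · rw [partSgn, if_pos hPij]; ring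
      · rfl
    have hsum : ∑ p ∈ O, w p.1 p.2 * Bmat p.1 p.2 (α p) i j = 0 := by
      refine Finset.sum_eq_zero fun p hp => ?_
      have hpP := (hO p hp).2
      have hB0 : Bmat p.1 p.2 (α p) i j = 0 := by
        rw [Bmat, Matrix.of_apply]
        have c1 : ¬(i = p.1 ∧ j = p.1) := fun h => hij (h.1.trans h.2.symm)
        have c2 : ¬(i = p.2 ∧ j = p.2) := fun h => hij (h.1.trans h.2.symm)
        have c3 : ¬((i = p.1 ∧ j = p.2) ∨ (i = p.2 ∧ j = p.1)) := by
          rintro (⟨ha, hb⟩ | ⟨ha, hb⟩)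
          · exact hpP (ha ▸ hb ▸ hPij)
          · exact hpP (hb ▸ ha ▸ hPij.symm)
        rw [if_neg c1, if_neg c2, if_neg c3]
      rw [hB0, mul_zero]
    rw [hMadd, Matrix.add_apply, hL, hSdef, Matrix.sum_apply]
    have : ∑ p ∈ O, (w p.1 p.2 • Bmat p.1 p.2 (α p)) i j
        = ∑ p ∈ O, w p.1 p.2 * Bmat p.1 p.2 (α p) i j :=
      Finset.sum_congr rfl fun p _ => rfl
    rw [this, hsum, add_zero]
  -- S kills vectors compatible with α
  have hS0 : ∀ ψ : V → ℝ, (∀ v, ψ v ≠ 0) → (∀ p ∈ O, α p = ψ p.2 / ψ p.1) →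
      S.mulVec ψ = 0 := by
    intro ψ hψne hψα
    rw [hSdef]
    funext x
    simp only [Pi.zero_apply]
    have hswap : ((∑ p ∈ O, w p.1 p.2 • Bmat p.1 p.2 (α p)) *ᵥ ψ) x
        = ∑ p ∈ O, ((w p.1 p.2 • Bmat p.1 p.2 (α p)) *ᵥ ψ) x := by
      simp only [Matrix.mulVec, dotProduct, Matrix.sum_apply, Finset.sum_mul]
      rw [Finset.sum_comm]
    rw [hswap]
    refine Finset.sum_eq_zero fun p hp => ?_
    have hne12 : p.1 ≠ p.2 := (hO p hp).1.ne
    have hα := hψα p hp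
    rw [Matrix.smul_mulVec, Pi.smul_apply, smul_eq_mul]
    have hBv : (Bmat p.1 p.2 (α p)).mulVec ψ x = 0 := by
      have hrow : ∀ y, y ∉ ({p.1, p.2} : Finset V) → Bmat p.1 p.2 (α p) x y * ψ y = 0 := by
        intro y hy
        simp only [Finset.mem_insert, Finset.mem_singleton, not_or] at hy
        have hB0 : Bmat p.1 p.2 (α p) x y = 0 := by
          rw [Bmat, Matrix.of_apply]
          have c1 : ¬(x = p.1 ∧ y = p.1) := fun h => hy.1 h.2
          have c2 : ¬(x = p.2 ∧ y = p.2) := fun h => hy.2 h.2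
          have c3 : ¬((x = p.1 ∧ y = p.2) ∨ (x = p.2 ∧ y = p.1)) := by
            rintro (⟨-, hb⟩ | ⟨-, hb⟩)
            · exact hy.2 hb
            · exact hy.1 hb
          rw [if_neg c1, if_neg c2, if_neg c3]
        rw [hB0, zero_mul]
      have hsplit : (Bmat p.1 p.2 (α p)).mulVec ψ x
          = ∑ y ∈ ({p.1, p.2} : Finset V), Bmat p.1 p.2 (α p) x y * ψ y := by
        rw [Matrix.mulVec]
        exact (Finset.sum_subset (Finset.subset_univ _) fun y _ hy => hrow y hy).symm
      rw [hsplit, Finset.sum_pair hne12]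
      by_cases hx1 : x = p.1
      · have e1 : Bmat p.1 p.2 (α p) x p.1 = α p := by
          rw [Bmat, Matrix.of_apply, if_pos ⟨hx1, rfl⟩]
        have e2 : Bmat p.1 p.2 (α p) x p.2 = -1 := by
          rw [Bmat, Matrix.of_apply]
          have c1 : ¬(x = p.1 ∧ p.2 = p.1) := fun h => hne12 h.2.symm
          have c2 : ¬(x = p.2 ∧ p.2 = p.2) := fun h => hne12 (hx1.symm.trans h.1)
          rw [if_neg c1, if_neg c2, if_pos (Or.inl ⟨hx1, rfl⟩)]
        rw [e1, e2, hα, div_mul_cancel₀ _ (hψne p.1)]; ring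
      · by_cases hx2 : x = p.2
        · have e1 : Bmat p.1 p.2 (α p) x p.1 = -1 := by
            rw [Bmat, Matrix.of_apply]
            have c1 : ¬(x = p.1 ∧ p.1 = p.1) := fun h => hx1 h.1
            have c2 : ¬(x = p.2 ∧ p.1 = p.2) := fun h => hne12 h.2
            rw [if_neg c1, if_neg c2, if_pos (Or.inr ⟨hx2, rfl⟩)]
          have e2 : Bmat p.1 p.2 (α p) x p.2 = (α p)⁻¹ := by
            rw [Bmat, Matrix.of_apply]
            have c1 : ¬(x = p.1 ∧ p.2 = p.1) := fun h => hx1 h.1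
            rw [if_neg c1, if_pos ⟨hx2, rfl⟩]
          rw [e1, e2, hα, inv_div, div_mul_cancel₀ _ (hψne p.2)]; ring
        · have e1 : Bmat p.1 p.2 (α p) x p.1 = 0 := by
            rw [Bmat, Matrix.of_apply]
            have c1 : ¬(x = p.1 ∧ p.1 = p.1) := fun h => hx1 h.1
            have c2 : ¬(x = p.2 ∧ p.1 = p.2) := fun h => hx2 h.1
            have c3 : ¬((x = p.1 ∧ p.1 = p.2) ∨ (x = p.2 ∧ p.1 = p.1)) := by
              rintro (⟨ha, -⟩ | ⟨ha, -⟩)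
              · exact hx1 ha
              · exact hx2 ha
            rw [if_neg c1, if_neg c2, if_neg c3]
          have e2 : Bmat p.1 p.2 (α p) x p.2 = 0 := by
            rw [Bmat, Matrix.of_apply]
            have c1 : ¬(x = p.1 ∧ p.2 = p.1) := fun h => hx1 h.1
            have c2 : ¬(x = p.2 ∧ p.2 = p.2) := fun h => hx2 h.1
            have c3 : ¬((x = p.1 ∧ p.2 = p.2) ∨ (x = p.2 ∧ p.2 = p.1)) := by
              rintro (⟨ha, -⟩ | ⟨ha, -⟩)
              · exact hx1 ha
              · exact hx2 ha
            rw [if_neg c1, if_neg c2, if_neg c3]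
          rw [e1, e2]; ring
    rw [hBv, mul_zero]
  -- block mulVec identity
  have hblockVec : ∀ (ψ : V → ℝ) (k : Fin ν) (x : {v : V // P v = k}),
      (blockMatrix M P k).mulVec (fun y => ψ y.val) x = M.mulVec ψ x.val := by
    intro ψ k x
    have h0 : ∀ j, P j ≠ k → M x.val j * ψ j = 0 := by
      intro j hj
      have : P x.val ≠ P j := fun h => hj (h ▸ x.2)
      rw [hMcross x.val j this, zero_mul]
    calc (blockMatrix M P k).mulVec (fun y => ψ y.val) x
        = ∑ j : {v : V // P v = k}, M x.val j.val * ψ j.val := rfl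
      _ = ∑ j, M x.val j * ψ j := sum_part P k _ h0
      _ = M.mulVec ψ x.val := rfl
  -- irreducibility of blocks
  have hIrr : ∀ (k : Fin ν) (g : {v : V // P v = k} → ℝ),
      (∀ x y, x ≠ y → (blockMatrix M P k) x y ≠ 0 → g x = 0 → g y = 0) →
      ∀ x, g x = 0 → ∀ y, g y = 0 := by
    intro k g hg x hx y
    have hA : ∀ (a b : {v : V // P v = k}), G.Adj a.val b.val → g a = 0 → g b = 0 := by
      intro a b hab ha
      have hne : a ≠ b := fun h => hab.ne (congrArg Subtype.val h)
      have hval : (blockMatrix M P k) a b = -(w a.val b.val) := by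
        have h1 : (blockMatrix M P k) a b = M a.val b.val := rfl
        rw [h1, hMin a.val b.val hab.ne (a.2.trans b.2.symm), if_pos hab]
      refine hg a b hne ?_ ha
      rw [hval]
      exact neg_ne_zero.mpr (hwpos _ _ hab).ne'
    obtain ⟨p⟩ := (hPconn k).preconnected ⟨x.val, x.2⟩ ⟨y.val, y.2⟩
    have key : ∀ (a b : ↥{v : V | P v = k}) (q : (G.induce {v : V | P v = k}).Walk a b),
        g ⟨a.val, a.2⟩ = 0 → g ⟨b.val, b.2⟩ = 0 := by
      intro a b q
      induction q with
      | nil => exact id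
      | cons h q ih => exact fun ha => ih (hA _ _ h ha)
    exact key _ _ p hx
  -- f cast helper
  have fcast : ∀ (v : V) (k : Fin ν) (h : P v = k), f (P v) ⟨v, rfl⟩ = f k ⟨v, h⟩ := by
    intro v k h; subst h; rfl
  constructor
  · rintro ⟨c, hcpos, hcond⟩
    set ψ : V → ℝ := fun v => Real.sqrt (c (P v)) * f (P v) ⟨v, rfl⟩ with hψdef
    have hψpos : ∀ v, 0 < ψ v := fun v =>
      mul_pos (Real.sqrt_pos.mpr (hcpos _)) (hfpos _ _)
    have hψsq : ∀ v, ψ v ^ 2 = c (P v) * f (P v) ⟨v, rfl⟩ ^ 2 := by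
      intro v
      simp only [hψdef]
      rw [mul_pow, Real.sq_sqrt (hcpos _).le]
    have hψα : ∀ p ∈ O, α p = ψ p.2 / ψ p.1 := by
      intro p hp
      have h := hcond p hp
      have hα := hαpos p hp
      have hsq : (α p) ^ 2 = (ψ p.2 / ψ p.1) ^ 2 := by
        rw [div_pow, hψsq p.1, hψsq p.2]
        have h1 : (0:ℝ) < c (P p.1) * f (P p.1) ⟨p.1, rfl⟩ ^ 2 :=
          mul_pos (hcpos _) (pow_pos (hfpos _ _) 2)
        have hne2 : c (P p.2) * f (P p.2) ⟨p.2, rfl⟩ ^ 2 ≠ 0 :=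
          (mul_pos (hcpos _) (pow_pos (hfpos _ _) 2)).ne'
        rw [h, div_div_eq_mul_div, mul_comm, mul_div_assoc, div_self hne2, mul_one]
      have := congrArg Real.sqrt hsq
      rwa [Real.sqrt_sq hα.le,
        Real.sqrt_sq (div_nonneg (hψpos _).le (hψpos _).le)] at this
    have hψM : M.mulVec ψ = Λ • ψ := by
      funext v
      have hb := hblockVec ψ (P v) ⟨v, rfl⟩
      have hrestrict : (fun y : {x : V // P x = P v} => ψ y.val)
          = Real.sqrt (c (P v)) • f (P v) := by
        funext y
        simp only [hψdef, Pi.smul_apply, smul_eq_mul]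
        have h1 : Real.sqrt (c (P y.val)) = Real.sqrt (c (P v)) := by rw [y.2]
        rw [fcast y.val (P v) y.2, h1]
      rw [hrestrict, Matrix.mulVec_smul, hfeig (P v), hΛ (P v)] at hb
      rw [← hb]
      simp only [hψdef, Pi.smul_apply, smul_eq_mul]
      ring
    have hSψ : S.mulVec ψ = 0 := hS0 ψ (fun v => (hψpos v).ne') hψα
    refine ⟨ψ, hψpos, ?_, hψα⟩
    have hL : signedLaplacian G w (partSgn P) = M - S := by
      rw [hMadd]; exact (add_sub_cancel_right _ _).symm
    rw [hL, Matrix.sub_mulVec, hψM, hSψ, sub_zero]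
  · rintro ⟨ψ, hψpos, hψeig, hψα⟩
    have hSψ : S.mulVec ψ = 0 := hS0 ψ (fun v => (hψpos v).ne') hψα
    have hψM : M.mulVec ψ = Λ • ψ := by
      rw [hMadd, Matrix.add_mulVec, hψeig, hSψ, add_zero]
    have hpart : ∀ k : Fin ν, ∃ t : ℝ, 0 < t ∧ ∀ x : {v : V // P v = k},
        ψ x.val = t * f k x := by
      intro k
      obtain ⟨v0, hv0⟩ := hPsurj k
      haveI : Nonempty {v : V // P v = k} := ⟨⟨v0, hv0⟩⟩
      refine prop_lemma (blockMatrix M P k) ?_ (hIrr k) Λ (fun x => ψ x.val) (f k)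
        (fun x => hψpos x.val) (hfpos k) ?_ ?_
      · intro x y hxy
        have hvxy : x.val ≠ y.val := fun h => hxy (Subtype.ext h)
        have h1 : (blockMatrix M P k) x y = M x.val y.val := rfl
        rw [h1, hMin x.val y.val hvxy (x.2.trans y.2.symm)]
        split_ifs with h
        · exact neg_nonpos.mpr (hwpos _ _ h).le
        · exact le_refl 0
      · funext x
        rw [hblockVec ψ k x, hψM]
        rfl
      · rw [hfeig k, hΛ k]
    choose t htpos hteq using hpart
    refine ⟨fun k => t k ^ 2, fun k => pow_pos (htpos k) 2, ?_⟩
    intro p hp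
    have h1 : ψ p.1 = t (P p.1) * f (P p.1) ⟨p.1, rfl⟩ := hteq (P p.1) ⟨p.1, rfl⟩
    have h2 : ψ p.2 = t (P p.2) * f (P p.2) ⟨p.2, rfl⟩ := hteq (P p.2) ⟨p.2, rfl⟩
    have hα := hψα p hp
    have e1 : t (P p.1) ^ 2 * f (P p.1) ⟨p.1, rfl⟩ ^ 2 = ψ p.1 ^ 2 := by rw [h1]; ring
    have e2 : t (P p.2) ^ 2 * f (P p.2) ⟨p.2, rfl⟩ ^ 2 = ψ p.2 ^ 2 := by rw [h2]; ring
    rw [e1, e2, hα, div_pow]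
    have hne1 : ψ p.1 ≠ 0 := (hψpos p.1).ne'
    have hne2 : ψ p.2 ≠ 0 := (hψpos p.2).ne'
    field_simp


end
end

section
/- Let Γ ⊆ E and let ψ be an eigenvector of L^Γ with ψ_i ≠ 0 for all i ∈ V, and let N = {(i,j) ∈ E : ψ_i σ^Γ_ij ψ_j < 0} be its nodal set with respect to σ^Γ. Then N Δ Γ = {(i,j) ∈ E : ψ_i ψ_j < 0}, this set is a cut of G, and consequently σ^N is switching equivalent to σ^Γ. -/
open Matrix Finset

noncomputable section

variable {V : Type*}

open Classical in
/-- The signature `σ^Γ` associated to a set of edges `Γ`: `-1` on `Γ`, `+1` elsewhere. -/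
def sgnOfEdgeSet (Γ : Set (Sym2 V)) (i j : V) : ℝ :=
  if s(i, j) ∈ Γ then -1 else 1

/-- `C` is a cut of `G`: the set of edges with exactly one endpoint in some `S ⊆ V`. -/
def IsCut (G : SimpleGraph V) (C : Set (Sym2 V)) : Prop :=
  ∃ S : Set V, C = {e | ∃ i j, e = s(i, j) ∧ G.Adj i j ∧ i ∈ S ∧ j ∉ S}

/-- Two signatures on `G` are switching equivalent. -/
def SwitchingEquiv (G : SimpleGraph V) (σ σ' : V → V → ℝ) : Prop :=
  ∃ τ : V → ℝ, (∀ v, τ v = 1 ∨ τ v = -1) ∧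
    ∀ i j, G.Adj i j → σ' i j = τ i * σ i j * τ j


lemma sgn_symm' (Γ : Set (Sym2 V)) (i j : V) : sgnOfEdgeSet Γ i j = sgnOfEdgeSet Γ j i := by
  unfold sgnOfEdgeSet
  rw [Sym2.eq_swap]

lemma mem_nodal' (G : SimpleGraph V) (Γ : Set (Sym2 V)) (ψ : V → ℝ) (i j : V) :
    s(i,j) ∈ nodalEdges G (sgnOfEdgeSet Γ) ψ ↔
      (G.Adj i j ∧ ψ i * sgnOfEdgeSet Γ i j * ψ j < 0) := by
  constructor
  · rintro ⟨a, b, heq, hadj, hlt⟩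
    rw [Sym2.eq_iff] at heq
    rcases heq with ⟨rfl, rfl⟩ | ⟨rfl, rfl⟩
    · exact ⟨hadj, hlt⟩
    · refine ⟨hadj.symm, ?_⟩
      have hs : sgnOfEdgeSet Γ i j = sgnOfEdgeSet Γ j i := sgn_symm' Γ i j
      have hc : ψ i * sgnOfEdgeSet Γ j i * ψ j = ψ j * sgnOfEdgeSet Γ j i * ψ i := by ring
      rw [hs, hc]; exact hlt
  · rintro ⟨hadj, hlt⟩
    exact ⟨i, j, rfl, hadj, hlt⟩

/-- If `ψ` is a nowhere-zero eigenvector of `L^Γ` with nodal set `N`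
(w.r.t. `σ^Γ`), then `N Δ Γ` is the set of edges across which `ψ` changes sign, this set is
a cut of `G`, and consequently `σ^N` is switching equivalent to `σ^Γ`. -/
theorem stmt14 [Fintype V] [DecidableEq V] (G : SimpleGraph V) [DecidableRel G.Adj]
    (hGconn : G.Connected) (w : V → V → ℝ)
    (hwsymm : ∀ i j, w i j = w j i) (hwpos : ∀ i j, G.Adj i j → 0 < w i j)
    (hw0 : ∀ i j, ¬ G.Adj i j → w i j = 0)
    (Γ : Set (Sym2 V)) (hΓ : Γ ⊆ G.edgeSet)
    (ψ : V → ℝ) (lam : ℝ)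
    (heig : (signedLaplacian G w (sgnOfEdgeSet Γ)).mulVec ψ = lam • ψ)
    (hψne : ψ ≠ 0) (hψnz : ∀ v, ψ v ≠ 0) :
    symmDiff (nodalEdges G (sgnOfEdgeSet Γ) ψ) Γ
        = {e | ∃ i j, e = s(i, j) ∧ G.Adj i j ∧ ψ i * ψ j < 0} ∧
    IsCut G (symmDiff (nodalEdges G (sgnOfEdgeSet Γ) ψ) Γ) ∧
    SwitchingEquiv G (sgnOfEdgeSet Γ) (sgnOfEdgeSet (nodalEdges G (sgnOfEdgeSet Γ) ψ)) := by
  classical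
  have hmemN := mem_nodal' G Γ ψ
  have hψlt : ∀ v : V, ¬ 0 < ψ v → ψ v < 0 := fun v h => (hψnz v).lt_or_gt.resolve_right h
  have hmemS : ∀ i j : V,
      (s(i,j) ∈ ({e | ∃ i j, e = s(i, j) ∧ G.Adj i j ∧ ψ i * ψ j < 0} : Set (Sym2 V))) ↔
        (G.Adj i j ∧ ψ i * ψ j < 0) := by
    intro i j
    constructor
    · rintro ⟨a, b, heq, hadj, hlt⟩
      rw [Sym2.eq_iff] at heq
      rcases heq with ⟨rfl, rfl⟩ | ⟨rfl, rfl⟩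
      · exact ⟨hadj, hlt⟩
      · exact ⟨hadj.symm, by nlinarith⟩
    · rintro ⟨hadj, hlt⟩
      exact ⟨i, j, rfl, hadj, hlt⟩
  have key : symmDiff (nodalEdges G (sgnOfEdgeSet Γ) ψ) Γ
      = {e | ∃ i j, e = s(i, j) ∧ G.Adj i j ∧ ψ i * ψ j < 0} := by
    ext e
    induction e using Sym2.ind with
    | _ i j =>
      rw [Set.mem_symmDiff, hmemN, hmemS]
      by_cases hg : s(i,j) ∈ Γ
      · have hadj : G.Adj i j := G.mem_edgeSet.mp (hΓ hg)
        have hσv : sgnOfEdgeSet Γ i j = -1 := by simp [sgnOfEdgeSet, hg]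
        rw [hσv]
        have hp : ψ i * ψ j ≠ 0 := mul_ne_zero (hψnz i) (hψnz j)
        constructor
        · rintro (⟨_, hng⟩ | ⟨_, hn⟩)
          · exact absurd hg hng
          · refine ⟨hadj, ?_⟩
            have h1 : ¬ ψ i * -1 * ψ j < 0 := fun h => hn ⟨hadj, h⟩
            rcases hp.lt_or_gt with h | h
            · exact h
            · exact absurd (by nlinarith) h1
        · rintro ⟨_, hlt⟩
          exact Or.inr ⟨hg, fun h => by nlinarith [h.2]⟩
      · have hσv : sgnOfEdgeSet Γ i j = 1 := by simp [sgnOfEdgeSet, hg]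
        rw [hσv]
        constructor
        · rintro (⟨⟨hadj, hlt⟩, _⟩ | ⟨h, _⟩)
          · exact ⟨hadj, by nlinarith⟩
          · exact absurd h hg
        · rintro ⟨hadj, hlt⟩
          exact Or.inl ⟨⟨hadj, by nlinarith⟩, hg⟩
  refine ⟨key, ?_, ?_⟩
  · refine ⟨{v | 0 < ψ v}, ?_⟩
    rw [key]
    ext e
    induction e using Sym2.ind with
    | _ i j =>
      simp only [Set.mem_setOf_eq]
      constructor
      · rintro ⟨a, b, heq, hadj, hlt⟩
        by_cases ha : 0 < ψ a
        · exact ⟨a, b, heq, hadj, ha, fun hb => by nlinarith⟩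
        · have ha' := hψlt a ha
          have hb : 0 < ψ b := by nlinarith
          exact ⟨b, a, by rw [heq, Sym2.eq_swap], hadj.symm, hb, fun h => by nlinarith⟩
      · rintro ⟨a, b, heq, hadj, ha, hb⟩
        exact ⟨a, b, heq, hadj, by nlinarith [hψlt b hb]⟩
  · refine ⟨fun v => if 0 < ψ v then 1 else -1, fun v => by by_cases h : 0 < ψ v <;> simp [h], ?_⟩
    intro i j hadj
    have hNiff : s(i,j) ∈ nodalEdges G (sgnOfEdgeSet Γ) ψ ↔ ψ i * sgnOfEdgeSet Γ i j * ψ j < 0 := by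
      rw [hmemN]; exact and_iff_right hadj
    rcases (hψnz i).lt_or_gt with hi | hi <;> rcases (hψnz j).lt_or_gt with hj | hj <;>
      by_cases hg : s(i,j) ∈ Γ <;>
      first
        | (have hN : s(i,j) ∈ nodalEdges G (sgnOfEdgeSet Γ) ψ := by
             rw [hNiff]; simp only [sgnOfEdgeSet, hg, if_true, if_false]; nlinarith
           simp [sgnOfEdgeSet, hN, hg, hi, hj, hi.not_gt, hj.not_gt])
        | (have hN : s(i,j) ∉ nodalEdges G (sgnOfEdgeSet Γ) ψ := by
             rw [hNiff]; simp only [sgnOfEdgeSet, hg, if_true, if_false]; push_neg; nlinarith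
           simp [sgnOfEdgeSet, hN, hg, hi, hj, hi.not_gt, hj.not_gt])

end
end
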